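/- arXiv:2010.14424 — 7 statements merged into one kernel-verified Lean document; each statement's English description precedes it below -/
import Mathlib

section
/- Let L > 0, ε > 0, α, β ∈ (0,1), and let k : [0,L] → ℝ be continuous with k(x) ≥ k₀ for all x, for some constant k₀ > 0. If (ρ₁, J₁) and (ρ₂, J₂) are two classical solutions of the area-averaged pedestrian boundary value problem, then ρ₁(x) = ρ₂(x) for all x ∈ [0,L] and J₁ = J₂. -/
open Set Filter Topology

/-- A classical solution `(ρ, J)` (with derivative `ρ'`) of the area-averaged pedestrian
boundary value problem on `[0, L]` with diffusion `ε`, inflow rate `α`, outflow rate `β`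
and width function `k`. -/
def IsClassicalSolution (L ε α β : ℝ) (k ρ ρ' : ℝ → ℝ) (J : ℝ) : Prop :=
  (∀ x ∈ Icc (0:ℝ) L, HasDerivWithinAt ρ (ρ' x) (Icc 0 L) x) ∧
  ContinuousOn ρ' (Icc 0 L) ∧
  (∀ x ∈ Icc (0:ℝ) L, k x * (-ε * ρ' x + ρ x * (1 - ρ x)) = J) ∧
  -ε * ρ' 0 + ρ 0 * (1 - ρ 0) = α * (1 - ρ 0) ∧
  -ε * ρ' L + ρ L * (1 - ρ L) = β * ρ L

lemma flux_deriv {L ε : ℝ} {k ρ ρ' : ℝ → ℝ} {J : ℝ} (hε : 0 < ε)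
    (hkpos : ∀ x ∈ Icc (0:ℝ) L, 0 < k x)
    (hf : ∀ x ∈ Icc (0:ℝ) L, k x * (-ε * ρ' x + ρ x * (1 - ρ x)) = J)
    {x : ℝ} (hx : x ∈ Icc (0:ℝ) L) :
    ρ' x = ε⁻¹ * (ρ x * (1 - ρ x) - J / k x) := by
  have hk := hkpos x hx
  have h := hf x hx
  field_simp
  nlinarith [h]

lemma no_lt (L ε α β : ℝ) (k : ℝ → ℝ)
    (hL : 0 < L) (hε : 0 < ε) (hα : α ∈ Ioo (0:ℝ) 1) (hβ : β ∈ Ioo (0:ℝ) 1)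
    (hkpos : ∀ x ∈ Icc (0:ℝ) L, 0 < k x)
    (ρ₁ ρ₁' ρ₂ ρ₂' : ℝ → ℝ) (J₁ J₂ : ℝ)
    (h₁ : IsClassicalSolution L ε α β k ρ₁ ρ₁' J₁)
    (h₂ : IsClassicalSolution L ε α β k ρ₂ ρ₂' J₂)
    (hJ : J₂ < J₁) : False := by
  obtain ⟨hd₁, _, hf₁, hb₁0, hb₁L⟩ := h₁
  obtain ⟨hd₂, _, hf₂, hb₂0, hb₂L⟩ := h₂
  have h0 : (0:ℝ) ∈ Icc (0:ℝ) L := ⟨le_refl 0, hL.le⟩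
  have hLm : L ∈ Icc (0:ℝ) L := ⟨hL.le, le_refl L⟩
  have hk0 := hkpos 0 h0
  have hkL := hkpos L hLm
  have e10 : k 0 * (α * (1 - ρ₁ 0)) = J₁ := by rw [← hf₁ 0 h0, hb₁0]
  have e20 : k 0 * (α * (1 - ρ₂ 0)) = J₂ := by rw [← hf₂ 0 h0, hb₂0]
  have e1L : k L * (β * ρ₁ L) = J₁ := by rw [← hf₁ L hLm, hb₁L]
  have e2L : k L * (β * ρ₂ L) = J₂ := by rw [← hf₂ L hLm, hb₂L]
  have h00 : ρ₁ 0 < ρ₂ 0 := by nlinarith [mul_pos hk0 hα.1]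
  have hLL : ρ₂ L < ρ₁ L := by nlinarith [mul_pos hkL hβ.1]
  have hcρ₁ : ContinuousOn ρ₁ (Icc 0 L) := fun x hx => (hd₁ x hx).continuousWithinAt
  have hcρ₂ : ContinuousOn ρ₂ (Icc 0 L) := fun x hx => (hd₂ x hx).continuousWithinAt
  have hw : ContinuousOn (fun x => ρ₁ x - ρ₂ x) (Icc 0 L) := hcρ₁.sub hcρ₂
  set S : Set ℝ := Icc 0 L ∩ {x | ρ₁ x - ρ₂ x ≤ 0} with hSdef
  have hSclosed : IsClosed S :=
    hw.preimage_isClosed_of_isClosed isClosed_Icc isClosed_Iic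
  have hS0 : (0:ℝ) ∈ S := ⟨h0, by simp only [mem_setOf_eq]; linarith⟩
  have hbdd : BddAbove S := ⟨L, fun x hx => hx.1.2⟩
  set c := sSup S with hcdef
  have hcS : c ∈ S := hSclosed.csSup_mem ⟨0, hS0⟩ hbdd
  have hcIcc : c ∈ Icc (0:ℝ) L := hcS.1
  have hcle : ρ₁ c - ρ₂ c ≤ 0 := hcS.2
  have hcL : c < L := by
    rcases lt_or_eq_of_le hcIcc.2 with h | h
    · exact h
    · exfalso; rw [h] at hcle; linarith
  have hsub : Ioc c L ⊆ Icc 0 L := fun x hx => ⟨le_trans hcIcc.1 hx.1.le, hx.2⟩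
  have hright : ∀ x ∈ Ioc c L, ρ₂ x < ρ₁ x := by
    intro x hx
    by_contra h
    push_neg at h
    have hxS : x ∈ S := ⟨hsub hx, by simp only [mem_setOf_eq]; linarith⟩
    have := le_csSup hbdd hxS
    have := hx.1
    linarith
  have hceq : ρ₁ c = ρ₂ c := by
    have hne : NeBot (𝓝[Ioc c L] c) := left_nhdsWithin_Ioc_neBot hcL
    have htend : Tendsto (fun x => ρ₁ x - ρ₂ x) (𝓝[Ioc c L] c) (𝓝 (ρ₁ c - ρ₂ c)) :=
      (hw c hcIcc).mono hsub
    have hge : 0 ≤ ρ₁ c - ρ₂ c := by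
      refine ge_of_tendsto htend ?_
      filter_upwards [self_mem_nhdsWithin] with x hx
      have := hright x hx
      linarith
    linarith
  have hd1c := flux_deriv hε hkpos hf₁ hcIcc
  have hd2c := flux_deriv hε hkpos hf₂ hcIcc
  have hkc := hkpos c hcIcc
  have hdiv : J₂ / k c < J₁ / k c := by
    exact div_lt_div_of_pos_right hJ hkc
  have hdneg : ρ₁' c - ρ₂' c < 0 := by
    rw [hd1c, hd2c, hceq]
    have hεinv : 0 < ε⁻¹ := inv_pos.mpr hε
    nlinarith [mul_pos hεinv (sub_pos.mpr hdiv)]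
  have hw' : HasDerivWithinAt (fun x => ρ₁ x - ρ₂ x) (ρ₁' c - ρ₂' c) (Icc 0 L) c :=
    (hd₁ c hcIcc).sub (hd₂ c hcIcc)
  have hslope := hasDerivWithinAt_iff_tendsto_slope.mp hw'
  have hsub2 : Ioc c L ⊆ Icc 0 L \ {c} := fun x hx => ⟨hsub hx, fun hm => hx.1.ne' hm⟩
  have hne : NeBot (𝓝[Ioc c L] c) := left_nhdsWithin_Ioc_neBot hcL
  have htend2 : Tendsto (slope (fun x => ρ₁ x - ρ₂ x) c) (𝓝[Ioc c L] c)
      (𝓝 (ρ₁' c - ρ₂' c)) :=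
    hslope.mono_left (nhdsWithin_mono c hsub2)
  have hge : 0 ≤ ρ₁' c - ρ₂' c := by
    refine ge_of_tendsto htend2 ?_
    filter_upwards [self_mem_nhdsWithin] with x hx
    rw [slope_def_field]
    apply div_nonneg
    · have := hright x hx; linarith
    · linarith [hx.1]
  linarith

/-- Uniqueness of classical solutions. -/
theorem uniqueness_classical_solution
    (L ε α β k₀ : ℝ) (k : ℝ → ℝ)
    (hL : 0 < L) (hε : 0 < ε) (hα : α ∈ Ioo (0:ℝ) 1) (hβ : β ∈ Ioo (0:ℝ) 1)
    (hk₀ : 0 < k₀) (hk : ∀ x ∈ Icc (0:ℝ) L, k₀ ≤ k x)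
    (hkc : ContinuousOn k (Icc 0 L))
    (ρ₁ ρ₁' ρ₂ ρ₂' : ℝ → ℝ) (J₁ J₂ : ℝ)
    (h₁ : IsClassicalSolution L ε α β k ρ₁ ρ₁' J₁)
    (h₂ : IsClassicalSolution L ε α β k ρ₂ ρ₂' J₂) :
    (∀ x ∈ Icc (0:ℝ) L, ρ₁ x = ρ₂ x) ∧ J₁ = J₂ := by
  have hkpos : ∀ x ∈ Icc (0:ℝ) L, 0 < k x := fun x hx => lt_of_lt_of_le hk₀ (hk x hx)
  have hJ : J₁ = J₂ := by
    rcases lt_trichotomy J₁ J₂ with h | h | h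
    · exact absurd h (fun h => no_lt L ε α β k hL hε hα hβ hkpos ρ₂ ρ₂' ρ₁ ρ₁' J₂ J₁ h₂ h₁ h)
    · exact h
    · exact absurd h (fun h => no_lt L ε α β k hL hε hα hβ hkpos ρ₁ ρ₁' ρ₂ ρ₂' J₁ J₂ h₁ h₂ h)
  obtain ⟨hd₁, _, hf₁, hb₁0, _⟩ := h₁
  obtain ⟨hd₂, _, hf₂, hb₂0, _⟩ := h₂
  have h0 : (0:ℝ) ∈ Icc (0:ℝ) L := ⟨le_refl 0, hL.le⟩
  have hk0 := hkpos 0 h0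
  have e10 : k 0 * (α * (1 - ρ₁ 0)) = J₁ := by rw [← hf₁ 0 h0, hb₁0]
  have e20 : k 0 * (α * (1 - ρ₂ 0)) = J₂ := by rw [← hf₂ 0 h0, hb₂0]
  have hρ0 : ρ₁ 0 = ρ₂ 0 := by
    have h1 : k 0 * (α * (1 - ρ₁ 0)) = k 0 * (α * (1 - ρ₂ 0)) := by rw [e10, e20, hJ]
    have h2 : α * (1 - ρ₁ 0) = α * (1 - ρ₂ 0) := mul_left_cancel₀ hk0.ne' h1
    have h3 : 1 - ρ₁ 0 = 1 - ρ₂ 0 := mul_left_cancel₀ hα.1.ne' h2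
    linarith
  have hcρ₁ : ContinuousOn ρ₁ (Icc 0 L) := fun x hx => (hd₁ x hx).continuousWithinAt
  have hcρ₂ : ContinuousOn ρ₂ (Icc 0 L) := fun x hx => (hd₂ x hx).continuousWithinAt
  obtain ⟨C₁, hC₁⟩ := isCompact_Icc.exists_bound_of_continuousOn hcρ₁
  obtain ⟨C₂, hC₂⟩ := isCompact_Icc.exists_bound_of_continuousOn hcρ₂
  set R : ℝ := max C₁ C₂ with hRdef
  have hR0 : 0 ≤ R := le_trans (norm_nonneg (ρ₁ 0)) (le_trans (hC₁ 0 h0) (le_max_left _ _))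
  have hmem₁ : ∀ t ∈ Icc (0:ℝ) L, ρ₁ t ∈ Icc (-R) R := fun t ht => by
    have := hC₁ t ht
    rw [Real.norm_eq_abs] at this
    exact abs_le.mp (le_trans this (le_max_left _ _))
  have hmem₂ : ∀ t ∈ Icc (0:ℝ) L, ρ₂ t ∈ Icc (-R) R := fun t ht => by
    have := hC₂ t ht
    rw [Real.norm_eq_abs] at this
    exact abs_le.mp (le_trans this (le_max_right _ _))
  set v : ℝ → ℝ → ℝ := fun t y => ε⁻¹ * (y * (1 - y) - J₁ / k t) with hvdef
  set K : NNReal := Real.toNNReal (ε⁻¹ * (1 + 2 * R)) with hKdef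
  have hKcoe : (K : ℝ) = ε⁻¹ * (1 + 2 * R) := by
    rw [hKdef, Real.coe_toNNReal]
    positivity
  have hv : ∀ t, LipschitzOnWith K (v t) (Icc (-R) R) := by
    intro t
    rw [lipschitzOnWith_iff_dist_le_mul]
    intro y hy z hz
    rw [Real.dist_eq, Real.dist_eq, hKcoe]
    have hy' := abs_le.mpr ⟨hy.1, hy.2⟩
    have hz' := abs_le.mpr ⟨hz.1, hz.2⟩
    have heq : v t y - v t z = ε⁻¹ * ((y - z) * (1 - y - z)) := by
      rw [hvdef]; ring
    rw [heq, abs_mul, abs_mul, abs_of_pos (inv_pos.mpr hε)]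
    have h1 : |1 - y - z| ≤ 1 + 2 * R := by
      have := abs_add_le (1 - y) (-z)
      have h2 := abs_add_le (1:ℝ) (-y)
      have h3 : |1 - y - z| ≤ |1 - y| + |z| := by
        calc |1 - y - z| = |(1 - y) + -z| := by ring_nf
          _ ≤ |1 - y| + |-z| := abs_add_le _ _
          _ = |1 - y| + |z| := by rw [abs_neg]
      have h4 : |1 - y| ≤ 1 + |y| := by
        calc |1 - y| = |1 + -y| := by ring_nf
          _ ≤ |(1:ℝ)| + |-y| := abs_add_le _ _
          _ = 1 + |y| := by rw [abs_one, abs_neg]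
      have hyR : |y| ≤ R := hy'
      have hzR : |z| ≤ R := hz'
      linarith
    have hεinv : (0:ℝ) ≤ ε⁻¹ := (inv_pos.mpr hε).le
    calc ε⁻¹ * (|y - z| * |1 - y - z|) ≤ ε⁻¹ * (|y - z| * (1 + 2 * R)) := by
          apply mul_le_mul_of_nonneg_left _ hεinv
          exact mul_le_mul_of_nonneg_left h1 (abs_nonneg _)
      _ = ε⁻¹ * (1 + 2 * R) * |y - z| := by ring
  have hIcoLsub : ∀ t ∈ Ico (0:ℝ) L, t ∈ Icc (0:ℝ) L := fun t ht => ⟨ht.1, ht.2.le⟩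
  have hderiv : ∀ (ρ ρ' : ℝ → ℝ) (J : ℝ),
      (∀ x ∈ Icc (0:ℝ) L, HasDerivWithinAt ρ (ρ' x) (Icc 0 L) x) →
      (∀ x ∈ Icc (0:ℝ) L, k x * (-ε * ρ' x + ρ x * (1 - ρ x)) = J) →
      J = J₁ →
      ∀ t ∈ Ico (0:ℝ) L, HasDerivWithinAt ρ (v t (ρ t)) (Ici t) t := by
    intro ρ ρ' J hd hf hJJ t ht
    have htIcc : t ∈ Icc (0:ℝ) L := hIcoLsub t ht
    have hval : ρ' t = v t (ρ t) := by
      rw [flux_deriv hε hkpos hf htIcc, hvdef, hJJ]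
    have h := hd t htIcc
    rw [hval] at h
    have hmono : HasDerivWithinAt ρ (v t (ρ t)) (Icc t L) t :=
      h.mono (Icc_subset_Icc ht.1 le_rfl)
    apply hmono.mono_of_mem_nhdsWithin
    rw [← Ici_inter_Iic]
    exact inter_mem self_mem_nhdsWithin (mem_nhdsWithin_of_mem_nhds (Iic_mem_nhds ht.2))
  have huniq : EqOn ρ₁ ρ₂ (Icc 0 L) :=
    ODE_solution_unique_of_mem_Icc_right (s := fun _ => Icc (-R) R) (fun t _ => hv t)
      hcρ₁ (hderiv ρ₁ ρ₁' J₁ hd₁ hf₁ rfl) (fun t ht => hmem₁ t (hIcoLsub t ht))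
      hcρ₂ (hderiv ρ₂ ρ₂' J₂ hd₂ hf₂ hJ.symm) (fun t ht => hmem₂ t (hIcoLsub t ht))
      hρ0
  exact ⟨fun x hx => huniq hx, hJ⟩
end

section
/- Let L > 0, ε > 0, α, β ∈ (0,1) and k : [0,L] → ℝ. If (ρ, J) is a classical solution of the area-averaged pedestrian boundary value problem with data (k, α, β), then the pair (ρ̃, J) with ρ̃(x) := 1 − ρ(L − x) is a classical solution of the area-averaged pedestrian boundary value problem with data (k̃, α̃, β̃), where k̃(x) := k(L − x), α̃ := β and β̃ := α. -/
open Set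

/-- Symmetry: if `(ρ, J)` solves the problem with data `(k, α, β)`, then
`ρ̃(x) = 1 - ρ(L - x)` solves it with data `(k̃, β, α)` where `k̃(x) = k(L - x)`. -/
theorem symmetry_classical_solution
    (L ε α β : ℝ) (k ρ ρ' : ℝ → ℝ) (J : ℝ)
    (hL : 0 < L) (hε : 0 < ε) (hα : α ∈ Ioo (0:ℝ) 1) (hβ : β ∈ Ioo (0:ℝ) 1)
    (hsol : IsClassicalSolution L ε α β k ρ ρ' J) :
    IsClassicalSolution L ε β α (fun x => k (L - x))
      (fun x => 1 - ρ (L - x)) (fun x => ρ' (L - x)) J := by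
  obtain ⟨hderiv, hcont, hode, hbc0, hbcL⟩ := hsol
  have hmap : MapsTo (fun x : ℝ => L - x) (Icc 0 L) (Icc 0 L) := by
    intro x hx
    simp only [mem_Icc] at hx ⊢
    constructor <;> linarith [hx.1, hx.2]
  refine ⟨?_, ?_, ?_, ?_, ?_⟩
  · intro x hx
    have h1 : HasDerivWithinAt (fun y : ℝ => L - y) (-1) (Icc 0 L) x :=
      ((hasDerivWithinAt_const x _ L).sub (hasDerivWithinAt_id x _)).congr_deriv (by ring)
    have h2 := (hderiv (L - x) (hmap hx)).comp x h1 hmap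
    have h3 : HasDerivWithinAt (fun y => ρ (L - y)) (-ρ' (L - x)) (Icc 0 L) x := by
      exact h2.congr_deriv (by ring)
    have := (hasDerivWithinAt_const x (Icc 0 L) (1:ℝ)).sub h3
    exact this.congr_deriv (by ring)
  · exact ((hcont.comp (continuous_const.sub continuous_id).continuousOn hmap))
  · intro x hx
    have h := hode (L - x) (hmap hx)
    calc k (L - x) * (-ε * ρ' (L - x) + (1 - ρ (L - x)) * (1 - (1 - ρ (L - x))))
        = k (L - x) * (-ε * ρ' (L - x) + ρ (L - x) * (1 - ρ (L - x))) := by ring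
      _ = J := h
  · simp only [sub_zero]
    calc -ε * ρ' L + (1 - ρ L) * (1 - (1 - ρ L))
        = -ε * ρ' L + ρ L * (1 - ρ L) := by ring
      _ = β * ρ L := hbcL
      _ = β * (1 - (1 - ρ L)) := by ring
  · simp only [sub_self]
    calc -ε * ρ' 0 + (1 - ρ 0) * (1 - (1 - ρ 0))
        = -ε * ρ' 0 + ρ 0 * (1 - ρ 0) := by ring
      _ = α * (1 - ρ 0) := hbc0
end

section
/- Let L > 0, ε > 0, let k : [0,L] → ℝ be continuously differentiable with k(x) > 0 for all x, let J ∈ ℝ, and let ρ : [0,L] → ℝ be twice continuously differentiable with 0 < ρ(x) < 1 for all x and k(x)·(−ε·ρ'(x) + ρ(x)·(1−ρ(x))) = J for every x ∈ [0,L]. If ρ attains a local minimum at a point x_m ∈ (0,L), then k'(x_m) ≥ 0; if ρ attains a local maximum at a point x_M ∈ (0,L), then k'(x_M) ≤ 0. -/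
open Set

private lemma aux_min {f g : ℝ → ℝ} {x c : ℝ}
    (hf : ∀ᶠ y in nhds x, HasDerivAt f (g y) y)
    (hg : HasDerivAt g c x) (hg0 : g x = 0) (hc : c < 0) :
    ¬ IsLocalMin f x := by
  intro hmin
  have hslope := hasDerivAt_iff_tendsto_slope.mp hg
  have hs : ∀ᶠ y in nhdsWithin x (Iio x), 0 < g y := by
    have h1 : ∀ᶠ y in nhdsWithin x ({x}ᶜ), slope g x y < 0 :=
      hslope.eventually_lt_const hc
    have h2 : ∀ᶠ y in nhdsWithin x (Iio x), slope g x y < 0 :=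
      h1.filter_mono (nhdsWithin_mono x (fun y hy => ne_of_lt hy))
    filter_upwards [h2, self_mem_nhdsWithin] with y hy hyx
    simp only [mem_Iio] at hyx
    rw [slope_def_field, hg0] at hy
    rcases div_neg_iff.mp hy with ⟨h1, _⟩ | ⟨_, h2⟩
    · linarith
    · linarith
  rcases Metric.eventually_nhds_iff.mp (hf.and hmin) with ⟨ε1, hε1, hA⟩
  rcases mem_nhdsLT_iff_exists_Ioo_subset.mp hs with ⟨a, ha, hB⟩
  simp only [mem_Iio] at ha
  set b : ℝ := max a (x - ε1 / 2) with hb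
  have hbx : b < x := by
    apply max_lt ha; linarith
  have hmemA : ∀ y ∈ Icc b x, HasDerivAt f (g y) y ∧ f x ≤ f y := by
    intro y hy
    apply hA
    rw [Real.dist_eq, abs_lt]
    have h1 : x - ε1 / 2 ≤ b := le_max_right _ _
    constructor <;> [skip; linarith [hy.2]]
    have := hy.1
    linarith
  have hcont : ContinuousOn f (Icc b x) := fun y hy =>
    ((hmemA y hy).1.continuousAt).continuousWithinAt
  have hmono : StrictMonoOn f (Icc b x) := by
    apply strictMonoOn_of_deriv_pos (convex_Icc b x) hcont
    intro y hy
    rw [interior_Icc] at hy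
    rw [(hmemA y (Ioo_subset_Icc_self hy)).1.deriv]
    exact hB ⟨lt_of_le_of_lt (le_max_left a _) hy.1, hy.2⟩
  have h1 : f b < f x := hmono ⟨le_refl b, le_of_lt hbx⟩ ⟨le_of_lt hbx, le_refl x⟩ hbx
  have h2 : f x ≤ f b := (hmemA b ⟨le_refl b, le_of_lt hbx⟩).2
  linarith

private lemma aux_max {f g : ℝ → ℝ} {x c : ℝ}
    (hf : ∀ᶠ y in nhds x, HasDerivAt f (g y) y)
    (hg : HasDerivAt g c x) (hg0 : g x = 0) (hc : 0 < c) :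
    ¬ IsLocalMax f x := by
  intro hmax
  exact aux_min (f := fun z => -f z) (g := fun z => -g z)
    (hf.mono fun y hy => hy.neg) hg.neg (by simp [hg0]) (by linarith) hmax.neg

/-- Maximum principle: for a `C²` solution of the constant-flux equation
`k(x)·(−ε·ρ'(x) + ρ(x)·(1−ρ(x))) = J` with `0 < ρ < 1` and `k ∈ C¹`, `k > 0`,
if `ρ` attains a local minimum at an interior point `x` then `k'(x) ≥ 0`, and
if `ρ` attains a local maximum at an interior point `x` then `k'(x) ≤ 0`. -/
theorem maximum_principle
    (L ε J : ℝ) (k k' ρ ρ' ρ'' : ℝ → ℝ)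
    (hL : 0 < L) (hε : 0 < ε)
    (hk : ∀ x ∈ Icc (0:ℝ) L, HasDerivWithinAt k (k' x) (Icc 0 L) x)
    (hk'c : ContinuousOn k' (Icc 0 L))
    (hkpos : ∀ x ∈ Icc (0:ℝ) L, 0 < k x)
    (hρ : ∀ x ∈ Icc (0:ℝ) L, HasDerivWithinAt ρ (ρ' x) (Icc 0 L) x)
    (hρ' : ∀ x ∈ Icc (0:ℝ) L, HasDerivWithinAt ρ' (ρ'' x) (Icc 0 L) x)
    (hρ''c : ContinuousOn ρ'' (Icc 0 L))
    (hbound : ∀ x ∈ Icc (0:ℝ) L, 0 < ρ x ∧ ρ x < 1)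
    (heq : ∀ x ∈ Icc (0:ℝ) L, k x * (-ε * ρ' x + ρ x * (1 - ρ x)) = J) :
    (∀ xm ∈ Ioo (0:ℝ) L, IsLocalMin ρ xm → 0 ≤ k' xm) ∧
    (∀ xM ∈ Ioo (0:ℝ) L, IsLocalMax ρ xM → k' xM ≤ 0) := by
  -- common facts at an interior point
  have main : ∀ x ∈ Ioo (0:ℝ) L,
      (∀ᶠ y in nhds x, HasDerivAt ρ (ρ' y) y) ∧
      HasDerivAt ρ (ρ' x) x ∧ HasDerivAt ρ' (ρ'' x) x ∧
      k' x * (-ε * ρ' x + ρ x * (1 - ρ x))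
        + k x * (-ε * ρ'' x + ρ' x * (1 - 2 * ρ x)) = 0 := by
    intro x hx
    have hx' : x ∈ Icc (0:ℝ) L := Ioo_subset_Icc_self hx
    have hmem : Icc (0:ℝ) L ∈ nhds x := Icc_mem_nhds hx.1 hx.2
    have h2 : HasDerivAt ρ (ρ' x) x := (hρ x hx').hasDerivAt hmem
    have h3 : HasDerivAt ρ' (ρ'' x) x := (hρ' x hx').hasDerivAt hmem
    have h1 : HasDerivAt k (k' x) x := (hk x hx').hasDerivAt hmem
    have hev : ∀ᶠ y in nhds x, HasDerivAt ρ (ρ' y) y := by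
      filter_upwards [Ioo_mem_nhds hx.1 hx.2] with y hy
      exact (hρ y (Ioo_subset_Icc_self hy)).hasDerivAt (Icc_mem_nhds hy.1 hy.2)
    refine ⟨hev, h2, h3, ?_⟩
    have hinner : HasDerivAt (fun y => -ε * ρ' y + ρ y * (1 - ρ y))
        (-ε * ρ'' x + (ρ' x * (1 - ρ x) + ρ x * (0 - ρ' x))) x :=
      (h3.const_mul (-ε)).add (h2.mul ((hasDerivAt_const x 1).sub h2))
    have hF : HasDerivAt (fun y => k y * (-ε * ρ' y + ρ y * (1 - ρ y)))
        (k' x * (-ε * ρ' x + ρ x * (1 - ρ x))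
          + k x * (-ε * ρ'' x + ρ' x * (1 - 2 * ρ x))) x := by
      have : HasDerivAt (fun y => k y * (-ε * ρ' y + ρ y * (1 - ρ y)))
          (k' x * (-ε * ρ' x + ρ x * (1 - ρ x))
            + k x * (-ε * ρ'' x + (ρ' x * (1 - ρ x) + ρ x * (0 - ρ' x)))) x :=
        h1.mul hinner
      convert this using 1
      ring
    have hEq : (fun y => k y * (-ε * ρ' y + ρ y * (1 - ρ y)))
        =ᶠ[nhds x] fun _ => J := by
      filter_upwards [hmem] with y hy
      exact heq y hy
    have hC : HasDerivAt (fun _ : ℝ => J)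
        (k' x * (-ε * ρ' x + ρ x * (1 - ρ x))
          + k x * (-ε * ρ'' x + ρ' x * (1 - 2 * ρ x))) x :=
      hF.congr_of_eventuallyEq hEq.symm
    exact hC.unique (hasDerivAt_const x J)
  constructor
  · intro xm hxm hmin
    obtain ⟨hev, h2, h3, hD⟩ := main xm hxm
    by_contra h
    push_neg at h
    have hρ'0 : ρ' xm = 0 := hmin.hasDerivAt_eq_zero h2
    obtain ⟨hρpos, hρlt⟩ := hbound xm (Ioo_subset_Icc_self hxm)
    have hkx := hkpos xm (Ioo_subset_Icc_self hxm)
    have hρ''neg : ρ'' xm < 0 := by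
      by_contra hcon
      push_neg at hcon
      rw [hρ'0] at hD
      have g1 := mul_neg_of_neg_of_pos h (mul_pos hρpos (by linarith : (0:ℝ) < 1 - ρ xm))
      have g2 := mul_nonneg (mul_pos hε hkx).le hcon
      nlinarith [hD]
    exact aux_min hev h3 hρ'0 hρ''neg hmin
  · intro xM hxM hmax
    obtain ⟨hev, h2, h3, hD⟩ := main xM hxM
    by_contra h
    push_neg at h
    have hρ'0 : ρ' xM = 0 := hmax.hasDerivAt_eq_zero h2
    obtain ⟨hρpos, hρlt⟩ := hbound xM (Ioo_subset_Icc_self hxM)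
    have hkx := hkpos xM (Ioo_subset_Icc_self hxM)
    have hρ''pos : 0 < ρ'' xM := by
      by_contra hcon
      push_neg at hcon
      rw [hρ'0] at hD
      have g1 := mul_pos h (mul_pos hρpos (by linarith : (0:ℝ) < 1 - ρ xM))
      have g2 := mul_nonneg (mul_pos hε hkx).le (neg_nonneg.mpr hcon)
      nlinarith [hD]
    exact aux_max hev h3 hρ'0 hρ''pos hmax
end

section
/- Let L > 0, ε > 0, α, β ∈ (0,1), let k : [0,L] → ℝ be continuously differentiable with k(x) > 0 and k'(x) < 0 for all x ∈ [0,L], and let (ρ, J) be a classical solution of the area-averaged pedestrian boundary value problem such that ρ is twice continuously differentiable and 0 < ρ(x) < 1 for all x. Then ρ has no local minimum on the open interval (0,L), and ρ(x) ≥ min(α, 1−β) for every x ∈ [0,L]. Symmetrically, if instead k'(x) > 0 for all x, then ρ has no local maximum on (0,L) and ρ(x) ≤ max(α, 1−β) for every x ∈ [0,L]. -/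
open Set

/-- At a left endpoint minimum, the one-sided derivative is nonnegative. -/
lemma aux_deriv_nonneg_left {a b d : ℝ} {f : ℝ → ℝ} (hab : a < b)
    (hd : HasDerivWithinAt f d (Icc a b) a)
    (hmin : ∀ z ∈ Icc a b, f a ≤ f z) : 0 ≤ d := by
  rw [hasDerivWithinAt_iff_tendsto_slope, Icc_diff_left] at hd
  haveI : (nhdsWithin a (Ioc a b)).NeBot := by
    rw [nhdsWithin_Ioc_eq_nhdsGT hab]
    infer_instance
  refine ge_of_tendsto hd ?_
  filter_upwards [self_mem_nhdsWithin] with z hz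
  have h1 : f a ≤ f z := hmin z ⟨le_of_lt hz.1, hz.2⟩
  have h2 : 0 < z - a := sub_pos.mpr hz.1
  rw [slope_def_field]
  exact div_nonneg (by linarith) (le_of_lt h2)

/-- At a right endpoint minimum, the one-sided derivative is nonpositive. -/
lemma aux_deriv_nonpos_right {a b d : ℝ} {f : ℝ → ℝ} (hab : a < b)
    (hd : HasDerivWithinAt f d (Icc a b) b)
    (hmin : ∀ z ∈ Icc a b, f b ≤ f z) : d ≤ 0 := by
  rw [hasDerivWithinAt_iff_tendsto_slope, Icc_sdiff_right] at hd
  haveI : (nhdsWithin b (Ico a b)).NeBot := by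
    rw [nhdsWithin_Ico_eq_nhdsLT hab]
    infer_instance
  refine le_of_tendsto hd ?_
  filter_upwards [self_mem_nhdsWithin] with z hz
  have h1 : f b ≤ f z := hmin z ⟨hz.1, le_of_lt hz.2⟩
  have h2 : z - b < 0 := sub_neg.mpr hz.2
  rw [slope_def_field]
  exact div_nonpos_of_nonneg_of_nonpos (by linarith) (le_of_lt h2)

/-- Second derivative test: if `ρ'` vanishes at `x₀` and, near `x₀`, `ρ` and `ρ'` are
differentiable with `ρ'' < 0`, then `x₀` is not a local minimum of `ρ`. -/
lemma aux_not_isLocalMin {ρ ρ' ρ'' : ℝ → ℝ} {x₀ : ℝ}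
    (h1 : ∀ᶠ z in nhds x₀, HasDerivAt ρ (ρ' z) z ∧ HasDerivAt ρ' (ρ'' z) z ∧ ρ'' z < 0)
    (h0 : ρ' x₀ = 0) : ¬ IsLocalMin ρ x₀ := by
  intro hmin
  obtain ⟨δ, hδ, hP⟩ := Metric.eventually_nhds_iff.mp (h1.and hmin)
  set y := x₀ + δ / 2 with hy
  have hxy : x₀ < y := by simp [hy]; linarith
  have hmem : ∀ z ∈ Icc x₀ y,
      (HasDerivAt ρ (ρ' z) z ∧ HasDerivAt ρ' (ρ'' z) z ∧ ρ'' z < 0) ∧ ρ x₀ ≤ ρ z := by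
    intro z hz
    apply hP
    rw [Real.dist_eq, abs_lt]
    constructor <;> [skip; skip] <;>
      · have := hz.1; have := hz.2; simp only [hy] at *; linarith
  have hanti' : StrictAntiOn ρ' (Icc x₀ y) := by
    apply strictAntiOn_of_hasDerivWithinAt_neg (f' := ρ'') (convex_Icc _ _)
    · exact fun z hz => ((hmem z hz).1.2.1).continuousAt.continuousWithinAt
    · intro z hz
      exact ((hmem z (interior_subset hz)).1.2.1).hasDerivWithinAt
    · intro z hz
      exact (hmem z (interior_subset hz)).1.2.2
  have hneg : ∀ z ∈ Ioo x₀ y, ρ' z < 0 := by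
    intro z hz
    have := hanti' (left_mem_Icc.mpr (le_of_lt hxy)) (Ioo_subset_Icc_self hz) hz.1
    rwa [h0] at this
  have hanti : StrictAntiOn ρ (Icc x₀ y) := by
    apply strictAntiOn_of_hasDerivWithinAt_neg (f' := ρ') (convex_Icc _ _)
    · exact fun z hz => ((hmem z hz).1.1).continuousAt.continuousWithinAt
    · intro z hz
      rw [interior_Icc] at hz
      exact ((hmem z (Ioo_subset_Icc_self hz)).1.1).hasDerivWithinAt
    · intro z hz
      rw [interior_Icc] at hz
      exact hneg z hz
  have hlt : ρ y < ρ x₀ :=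
    hanti (left_mem_Icc.mpr (le_of_lt hxy)) (right_mem_Icc.mpr (le_of_lt hxy)) hxy
  exact absurd ((hmem y (right_mem_Icc.mpr (le_of_lt hxy))).2) (not_le.mpr hlt)

/-- Second derivative test: if `ρ'` vanishes at `x₀` and, near `x₀`, `ρ` and `ρ'` are
differentiable with `ρ'' > 0`, then `x₀` is not a local maximum of `ρ`. -/
lemma aux_not_isLocalMax {ρ ρ' ρ'' : ℝ → ℝ} {x₀ : ℝ}
    (h1 : ∀ᶠ z in nhds x₀, HasDerivAt ρ (ρ' z) z ∧ HasDerivAt ρ' (ρ'' z) z ∧ 0 < ρ'' z)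
    (h0 : ρ' x₀ = 0) : ¬ IsLocalMax ρ x₀ := by
  intro hmax
  have := aux_not_isLocalMin (ρ := fun z => -ρ z) (ρ' := fun z => -ρ' z)
    (ρ'' := fun z => -ρ'' z) (x₀ := x₀) ?_ (by simp [h0])
  · exact this (IsLocalMax.neg hmax)
  · filter_upwards [h1] with z hz
    exact ⟨hz.1.neg, hz.2.1.neg, by linarith [hz.2.2]⟩

/-- For a monotone width function `k` (closing: `k' < 0`, resp. opening: `k' > 0`),
a `C²` classical solution with `0 < ρ < 1` has no interior local minimum (resp. maximum)
and satisfies `ρ ≥ min(α, 1−β)` (resp. `ρ ≤ max(α, 1−β)`). -/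
theorem no_interior_extrema_monotone_width
    (L ε α β J : ℝ) (k k' ρ ρ' ρ'' : ℝ → ℝ)
    (hL : 0 < L) (hε : 0 < ε) (hα : α ∈ Ioo (0:ℝ) 1) (hβ : β ∈ Ioo (0:ℝ) 1)
    (hk : ∀ x ∈ Icc (0:ℝ) L, HasDerivWithinAt k (k' x) (Icc 0 L) x)
    (hk'c : ContinuousOn k' (Icc 0 L))
    (hkpos : ∀ x ∈ Icc (0:ℝ) L, 0 < k x)
    (hsol : IsClassicalSolution L ε α β k ρ ρ' J)
    (hρ'' : ∀ x ∈ Icc (0:ℝ) L, HasDerivWithinAt ρ' (ρ'' x) (Icc 0 L) x)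
    (hρ''c : ContinuousOn ρ'' (Icc 0 L))
    (hbound : ∀ x ∈ Icc (0:ℝ) L, 0 < ρ x ∧ ρ x < 1) :
    ((∀ x ∈ Icc (0:ℝ) L, k' x < 0) →
      (∀ x ∈ Ioo (0:ℝ) L, ¬ IsLocalMin ρ x) ∧
      (∀ x ∈ Icc (0:ℝ) L, min α (1 - β) ≤ ρ x)) ∧
    ((∀ x ∈ Icc (0:ℝ) L, 0 < k' x) →
      (∀ x ∈ Ioo (0:ℝ) L, ¬ IsLocalMax ρ x) ∧
      (∀ x ∈ Icc (0:ℝ) L, ρ x ≤ max α (1 - β))) := by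
  obtain ⟨hρd, hρ'c, heq, hbc0, hbcL⟩ := hsol
  -- derivatives as genuine derivatives at interior points
  have hnhds : ∀ x ∈ Ioo (0:ℝ) L, Icc (0:ℝ) L ∈ nhds x := fun x hx =>
    Icc_mem_nhds hx.1 hx.2
  have hρda : ∀ x ∈ Ioo (0:ℝ) L, HasDerivAt ρ (ρ' x) x := fun x hx =>
    (hρd x (Ioo_subset_Icc_self hx)).hasDerivAt (hnhds x hx)
  have hρ'da : ∀ x ∈ Ioo (0:ℝ) L, HasDerivAt ρ' (ρ'' x) x := fun x hx =>
    (hρ'' x (Ioo_subset_Icc_self hx)).hasDerivAt (hnhds x hx)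
  have hkda : ∀ x ∈ Ioo (0:ℝ) L, HasDerivAt k (k' x) x := fun x hx =>
    (hk x (Ioo_subset_Icc_self hx)).hasDerivAt (hnhds x hx)
  -- the key identity at interior critical points
  have key : ∀ x₀ ∈ Ioo (0:ℝ) L, ρ' x₀ = 0 →
      k' x₀ * (ρ x₀ * (1 - ρ x₀)) + k x₀ * (-ε * ρ'' x₀) = 0 := by
    intro x₀ hx₀ hz
    have hg : HasDerivAt (fun x => -ε * ρ' x + ρ x * (1 - ρ x))
        (-ε * ρ'' x₀ + (ρ' x₀ * (1 - ρ x₀) + ρ x₀ * (0 - ρ' x₀))) x₀ := by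
      exact ((hρ'da x₀ hx₀).const_mul (-ε)).add
        ((hρda x₀ hx₀).mul ((hasDerivAt_const x₀ (1:ℝ)).sub (hρda x₀ hx₀)))
    have hh : HasDerivAt (fun x => k x * (-ε * ρ' x + ρ x * (1 - ρ x)))
        (k' x₀ * (-ε * ρ' x₀ + ρ x₀ * (1 - ρ x₀)) +
          k x₀ * (-ε * ρ'' x₀ + (ρ' x₀ * (1 - ρ x₀) + ρ x₀ * (0 - ρ' x₀)))) x₀ :=
      (hkda x₀ hx₀).mul hg
    have hconst : HasDerivAt (fun x => k x * (-ε * ρ' x + ρ x * (1 - ρ x))) 0 x₀ := by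
      refine (hasDerivAt_const x₀ J).congr_of_eventuallyEq ?_
      filter_upwards [hnhds x₀ hx₀] with z hz2
      exact heq z hz2
    have h5 := hh.unique hconst
    rw [hz] at h5
    linear_combination h5
  -- continuity of ρ
  have hρc : ContinuousOn ρ (Icc 0 L) := fun x hx =>
    (hρd x hx).continuousWithinAt
  -- no interior local min when k' < 0
  have noMin : (∀ x ∈ Icc (0:ℝ) L, k' x < 0) → ∀ x ∈ Ioo (0:ℝ) L, ¬ IsLocalMin ρ x := by
    intro hk'neg x₀ hx₀ hmin
    have hz : ρ' x₀ = 0 := hmin.hasDerivAt_eq_zero (hρda x₀ hx₀)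
    have hkey := key x₀ hx₀ hz
    have hρx := hbound x₀ (Ioo_subset_Icc_self hx₀)
    have hk'x := hk'neg x₀ (Ioo_subset_Icc_self hx₀)
    have hkx := hkpos x₀ (Ioo_subset_Icc_self hx₀)
    have h2 : ρ'' x₀ < 0 := by
      by_contra h
      push_neg at h
      have h6 : k' x₀ * (ρ x₀ * (1 - ρ x₀)) < 0 :=
        mul_neg_of_neg_of_pos hk'x (mul_pos hρx.1 (by linarith))
      have h7 : 0 ≤ k x₀ * (ε * ρ'' x₀) := mul_nonneg hkx.le (mul_nonneg hε.le h)
      nlinarith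
    have hcont : ContinuousAt ρ'' x₀ :=
      (hρ''c x₀ (Ioo_subset_Icc_self hx₀)).continuousAt (hnhds x₀ hx₀)
    have hev : ∀ᶠ z in nhds x₀,
        HasDerivAt ρ (ρ' z) z ∧ HasDerivAt ρ' (ρ'' z) z ∧ ρ'' z < 0 := by
      have h3 : ∀ᶠ z in nhds x₀, ρ'' z < 0 := hcont.eventually_lt continuous_const.continuousAt h2
      have h4 : ∀ᶠ z in nhds x₀, z ∈ Ioo (0:ℝ) L := Ioo_mem_nhds hx₀.1 hx₀.2
      filter_upwards [h3, h4] with z hz3 hz4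
      exact ⟨hρda z hz4, hρ'da z hz4, hz3⟩
    exact aux_not_isLocalMin hev hz hmin
  -- no interior local max when k' > 0
  have noMax : (∀ x ∈ Icc (0:ℝ) L, 0 < k' x) → ∀ x ∈ Ioo (0:ℝ) L, ¬ IsLocalMax ρ x := by
    intro hk'pos x₀ hx₀ hmax
    have hz : ρ' x₀ = 0 := hmax.hasDerivAt_eq_zero (hρda x₀ hx₀)
    have hkey := key x₀ hx₀ hz
    have hρx := hbound x₀ (Ioo_subset_Icc_self hx₀)
    have hk'x := hk'pos x₀ (Ioo_subset_Icc_self hx₀)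
    have hkx := hkpos x₀ (Ioo_subset_Icc_self hx₀)
    have h2 : 0 < ρ'' x₀ := by
      by_contra h
      push_neg at h
      have h6 : 0 < k' x₀ * (ρ x₀ * (1 - ρ x₀)) :=
        mul_pos hk'x (mul_pos hρx.1 (by linarith))
      have h7 : k x₀ * (ε * ρ'' x₀) ≤ 0 :=
        mul_nonpos_of_nonneg_of_nonpos hkx.le (mul_nonpos_of_nonneg_of_nonpos hε.le h)
      nlinarith
    have hcont : ContinuousAt ρ'' x₀ :=
      (hρ''c x₀ (Ioo_subset_Icc_self hx₀)).continuousAt (hnhds x₀ hx₀)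
    have hev : ∀ᶠ z in nhds x₀,
        HasDerivAt ρ (ρ' z) z ∧ HasDerivAt ρ' (ρ'' z) z ∧ 0 < ρ'' z := by
      have h3 : ∀ᶠ z in nhds x₀, 0 < ρ'' z := continuous_const.continuousAt.eventually_lt hcont h2
      have h4 : ∀ᶠ z in nhds x₀, z ∈ Ioo (0:ℝ) L := Ioo_mem_nhds hx₀.1 hx₀.2
      filter_upwards [h3, h4] with z hz3 hz4
      exact ⟨hρda z hz4, hρ'da z hz4, hz3⟩
    exact aux_not_isLocalMax hev hz hmax
  have h0mem : (0:ℝ) ∈ Icc (0:ℝ) L := left_mem_Icc.mpr (le_of_lt hL)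
  have hLmem : L ∈ Icc (0:ℝ) L := right_mem_Icc.mpr (le_of_lt hL)
  constructor
  · intro hk'neg
    refine ⟨noMin hk'neg, ?_⟩
    obtain ⟨x₀, hx₀mem, hx₀min⟩ := isCompact_Icc.exists_isMinOn ⟨0, h0mem⟩ hρc
    have hx₀min' : ∀ z ∈ Icc (0:ℝ) L, ρ x₀ ≤ ρ z := fun z hz => hx₀min hz
    rcases eq_or_lt_of_le hx₀mem.1 with h0 | h0
    · -- minimum at 0
      have hd : 0 ≤ ρ' 0 := by
        apply aux_deriv_nonneg_left hL (hρd 0 h0mem)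
        intro z hz; rw [h0]; exact hx₀min' z hz
      have hρ0 := hbound 0 h0mem
      have : α ≤ ρ 0 := by nlinarith [hα.1, hα.2]
      intro x hx
      calc min α (1 - β) ≤ α := min_le_left _ _
        _ ≤ ρ 0 := this
        _ ≤ ρ x := by have := hx₀min' x hx; rwa [← h0] at this
    · rcases eq_or_lt_of_le hx₀mem.2 with hL' | hL'
      · -- minimum at L
        have hd : ρ' L ≤ 0 := by
          apply aux_deriv_nonpos_right hL (hρd L hLmem)
          intro z hz; rw [← hL']; exact hx₀min' z hz
        have hρL := hbound L hLmem
        have : 1 - β ≤ ρ L := by nlinarith [hβ.1, hβ.2]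
        intro x hx
        calc min α (1 - β) ≤ 1 - β := min_le_right _ _
          _ ≤ ρ L := this
          _ ≤ ρ x := by have := hx₀min' x hx; rwa [hL'] at this
      · exact absurd (hx₀min.isLocalMin (hnhds x₀ ⟨h0, hL'⟩))
          (noMin hk'neg x₀ ⟨h0, hL'⟩)
  · intro hk'pos
    refine ⟨noMax hk'pos, ?_⟩
    obtain ⟨x₀, hx₀mem, hx₀max⟩ := isCompact_Icc.exists_isMaxOn ⟨0, h0mem⟩ hρc
    have hx₀max' : ∀ z ∈ Icc (0:ℝ) L, ρ z ≤ ρ x₀ := fun z hz => hx₀max hz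
    rcases eq_or_lt_of_le hx₀mem.1 with h0 | h0
    · -- maximum at 0
      have hd : ρ' 0 ≤ 0 := by
        have := aux_deriv_nonneg_left (f := fun z => -ρ z) hL
          ((hρd 0 h0mem).neg) ?_
        · linarith
        · intro z hz; simp only [neg_le_neg_iff]; rw [h0]; exact hx₀max' z hz
      have hρ0 := hbound 0 h0mem
      have : ρ 0 ≤ α := by nlinarith [hα.1, hα.2]
      intro x hx
      calc ρ x ≤ ρ 0 := by have := hx₀max' x hx; rwa [← h0] at this
        _ ≤ α := this
        _ ≤ max α (1 - β) := le_max_left _ _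
    · rcases eq_or_lt_of_le hx₀mem.2 with hL' | hL'
      · -- maximum at L
        have hd : 0 ≤ ρ' L := by
          have := aux_deriv_nonpos_right (f := fun z => -ρ z) hL
            ((hρd L hLmem).neg) ?_
          · linarith
          · intro z hz; simp only [neg_le_neg_iff]; rw [← hL']; exact hx₀max' z hz
        have hρL := hbound L hLmem
        have : ρ L ≤ 1 - β := by nlinarith [hβ.1, hβ.2]
        intro x hx
        calc ρ x ≤ ρ L := by have := hx₀max' x hx; rwa [hL'] at this
          _ ≤ 1 - β := this
          _ ≤ max α (1 - β) := le_max_right _ _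
      · exact absurd (hx₀max.isLocalMax (hnhds x₀ ⟨h0, hL'⟩))
          (noMax hk'pos x₀ ⟨h0, hL'⟩)
end

section
/- Assume 0 < α < ρ_f, ρ*(α) < β < 1 and β ≠ 1 − ρ*(α). Suppose that for every ε > 0, (ρ_ε, J_ε) is a classical solution of the area-averaged pedestrian boundary value problem on [0,1] with diffusion ε. Then, as ε → 0⁺, J_ε → α·(1−α)·k(0), ρ_ε(0) → α, and ρ_ε(1) → α·(1−α)·k(0)/(β·k(1)). -/
open Set Filter

/-- `ρ_f = (1/2)·(1 − √(1 − k(1)/k(0)))`. -/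
noncomputable def rhoF (k : ℝ → ℝ) : ℝ := (1/2) * (1 - Real.sqrt (1 - k 1 / k 0))

/-- `ρ*(α) = (1/2)·(1 − √(1 − 4α(1−α)·k(0)/k(1)))`. -/
noncomputable def rhoStar (α : ℝ) (k : ℝ → ℝ) : ℝ :=
  (1/2) * (1 - Real.sqrt (1 - 4*α*(1-α) * k 0 / k 1))

/-- `ρ_*(β) = (1/2)·(1 + √(1 − 4β(1−β)·k(1)/k(0)))`. -/
noncomputable def rhoStarLow (β : ℝ) (k : ℝ → ℝ) : ℝ :=
  (1/2) * (1 + Real.sqrt (1 - 4*β*(1-β) * k 1 / k 0))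

/-- If `u < u x̄` on `Ioo l x̄`, then the (within-`Icc 0 1`) derivative at `x̄` is nonneg. -/
lemma deriv_left_nonneg {u : ℝ → ℝ} {d l xb : ℝ}
    (hd : HasDerivWithinAt u d (Icc 0 1) xb) (hl : 0 ≤ l) (hx : xb ≤ 1) (hlx : l < xb)
    (hlt : ∀ x ∈ Ioo l xb, u x < u xb) : 0 ≤ d := by
  have hsub : Ioo l xb ⊆ Icc (0:ℝ) 1 := fun y hy =>
    ⟨hl.trans hy.1.le, hy.2.le.trans hx⟩
  have hd' : HasDerivWithinAt u d (Ioo l xb) xb := hd.mono hsub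
  have hten : Tendsto (slope u xb) (nhdsWithin xb (Ioo l xb)) (nhds d) :=
    (hasDerivWithinAt_iff_tendsto_slope' (by simp)).1 hd'
  have : NeBot (nhdsWithin xb (Ioo l xb)) := right_nhdsWithin_Ioo_neBot hlx
  refine ge_of_tendsto hten ?_
  filter_upwards [self_mem_nhdsWithin] with x hxm
  rw [slope_def_field]
  have h1 : u x - u xb < 0 := sub_neg.2 (hlt x hxm)
  have h2 : x - xb < 0 := sub_neg.2 hxm.2
  exact div_nonneg_of_nonpos h1.le h2.le

/-- Barrier lemma: if `u l < c` and at every touching point of level `c` in `[l,r]` the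
derivative is negative, then `u < c` throughout `[l,r]`. -/
lemma barrier_lt {u u' : ℝ → ℝ}
    (hu : ∀ x ∈ Icc (0:ℝ) 1, HasDerivWithinAt u (u' x) (Icc 0 1) x)
    {l r c : ℝ} (hl : 0 ≤ l) (hr : r ≤ 1) (hlr : l ≤ r) (h0 : u l < c)
    (hder : ∀ x ∈ Icc l r, u x = c → u' x < 0) : ∀ x ∈ Icc l r, u x < c := by
  by_contra hcon
  push_neg at hcon
  obtain ⟨x', hx', hcx'⟩ := hcon
  have hsub : Icc l r ⊆ Icc (0:ℝ) 1 := Icc_subset_Icc hl hr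
  have hcont : ContinuousOn u (Icc l r) :=
    fun x hx => ((hu x (hsub hx)).continuousWithinAt).mono hsub
  set T : Set ℝ := Icc l r ∩ u ⁻¹' (Ici c) with hT
  have hTne : T.Nonempty := ⟨x', hx', hcx'⟩
  have hTclosed : IsClosed T := hcont.preimage_isClosed_of_isClosed isClosed_Icc isClosed_Ici
  have hTbdd : BddBelow T := ⟨l, fun y hy => hy.1.1⟩
  set xb := sInf T with hxb
  have hxbT : xb ∈ T := hTclosed.csInf_mem hTne hTbdd
  have hxbI : xb ∈ Icc l r := hxbT.1
  have hlxb : l < xb := by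
    rcases eq_or_lt_of_le hxbI.1 with h | h
    · exact absurd (h ▸ hxbT.2 : c ≤ u l) (not_le.2 h0)
    · exact h
  have hlt : ∀ x ∈ Ioo l xb, u x < c := by
    intro x hx
    by_contra hge
    push_neg at hge
    have : x ∈ T := ⟨⟨hx.1.le, hx.2.le.trans hxbI.2⟩, hge⟩
    exact absurd (csInf_le hTbdd this) (not_le.2 hx.2)
  -- u xb = c by continuity from the left
  have huc : u xb = c := by
    refine le_antisymm ?_ hxbT.2
    have : NeBot (nhdsWithin xb (Ioo l xb)) := right_nhdsWithin_Ioo_neBot hlxb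
    have hc : Tendsto u (nhdsWithin xb (Ioo l xb)) (nhds (u xb)) := by
      have := (hcont xb hxbI).mono (Ioo_subset_Icc_self.trans
        (Icc_subset_Icc le_rfl hxbI.2) : Ioo l xb ⊆ Icc l r)
      exact this.tendsto.mono_left (nhdsWithin_mono _ (by exact fun y hy => hy))
    refine le_of_tendsto hc ?_
    filter_upwards [self_mem_nhdsWithin] with x hx
    exact (hlt x hx).le
  have hnn : 0 ≤ u' xb :=
    deriv_left_nonneg (hu xb (hsub hxbI)) hl (hxbI.2.trans hr) hlxb
      (fun x hx => (hlt x hx).trans_le (huc.symm.le))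
  exact absurd (hder xb hxbI huc) (not_lt.2 hnn)

/-- Barrier lemma (other direction): `u l > c` and upward push at level `c` keeps `u > c`. -/
lemma barrier_gt {u u' : ℝ → ℝ}
    (hu : ∀ x ∈ Icc (0:ℝ) 1, HasDerivWithinAt u (u' x) (Icc 0 1) x)
    {l r c : ℝ} (hl : 0 ≤ l) (hr : r ≤ 1) (hlr : l ≤ r) (h0 : c < u l)
    (hder : ∀ x ∈ Icc l r, u x = c → 0 < u' x) : ∀ x ∈ Icc l r, c < u x := by
  have hneg : ∀ x ∈ Icc (0:ℝ) 1, HasDerivWithinAt (fun y => -u y) (-u' x) (Icc 0 1) x :=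
    fun x hx => (hu x hx).neg
  have := barrier_lt hneg hl hr hlr (c := -c) (by simpa using h0)
    (fun x hx hx' => by
      have : u x = c := by linarith [neg_eq_iff_eq_neg.2 hx'.symm]
      simpa using hder x hx this)
  intro x hx
  have := this x hx
  simpa using this

/-- If `u' ≥ K` on `[l,r] ⊆ [0,1]`, then `u r ≥ u l + K (r - l)`. -/
lemma gain_lower {u u' : ℝ → ℝ}
    (hu : ∀ x ∈ Icc (0:ℝ) 1, HasDerivWithinAt u (u' x) (Icc 0 1) x)
    {l r K : ℝ} (hl : 0 ≤ l) (hr : r ≤ 1) (hlr : l ≤ r)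
    (hK : ∀ x ∈ Icc l r, K ≤ u' x) : u l + K * (r - l) ≤ u r := by
  rcases eq_or_lt_of_le hlr with h | h
  · subst h; simp
  have hsub : Icc l r ⊆ Icc (0:ℝ) 1 := Icc_subset_Icc hl hr
  have hcu : ContinuousOn u (Icc l r) :=
    fun x hx => ((hu x (hsub hx)).continuousWithinAt).mono hsub
  have hcont : ContinuousOn (fun x => u x - K * x) (Icc l r) :=
    hcu.sub ((continuous_const.mul continuous_id).continuousOn)
  have hderiv : ∀ x ∈ interior (Icc l r), HasDerivAt (fun x => u x - K * x) (u' x - K) x := by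
    intro x hx
    rw [interior_Icc] at hx
    have hmem : x ∈ Ioo (0:ℝ) 1 := ⟨hl.trans_lt hx.1, hx.2.trans_le hr⟩
    have hx01 : Icc (0:ℝ) 1 ∈ nhds x := Icc_mem_nhds hmem.1 hmem.2
    have h1 : HasDerivAt u (u' x) x :=
      (hu x (Ioo_subset_Icc_self hmem)).hasDerivAt hx01
    have h2 := h1.sub ((hasDerivAt_id' x).const_mul K)
    rw [mul_one] at h2
    exact h2
  have hmono : MonotoneOn (fun x => u x - K * x) (Icc l r) := by
    apply monotoneOn_of_deriv_nonneg (convex_Icc l r) hcont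
    · intro x hx
      exact (hderiv x hx).differentiableAt.differentiableWithinAt
    · intro x hx
      rw [(hderiv x hx).deriv]
      have := hK x (interior_subset hx)
      linarith
  have := hmono (left_mem_Icc.2 hlr) (right_mem_Icc.2 hlr) hlr
  simp only at this
  nlinarith

/-- If `u' ≤ -K` on `[l,r] ⊆ [0,1]`, then `u r ≤ u l - K (r - l)`. -/
lemma gain_upper {u u' : ℝ → ℝ}
    (hu : ∀ x ∈ Icc (0:ℝ) 1, HasDerivWithinAt u (u' x) (Icc 0 1) x)
    {l r K : ℝ} (hl : 0 ≤ l) (hr : r ≤ 1) (hlr : l ≤ r)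
    (hK : ∀ x ∈ Icc l r, u' x ≤ -K) : u r ≤ u l - K * (r - l) := by
  have hneg : ∀ x ∈ Icc (0:ℝ) 1, HasDerivWithinAt (fun y => -u y) (-u' x) (Icc 0 1) x :=
    fun x hx => (hu x hx).neg
  have := gain_lower hneg hl hr hlr (K := K)
    (fun x hx => by have := hK x hx; linarith)
  have h' : -u l + K * (r - l) ≤ -u r := this
  linarith [this]

section PerSolution

variable {k u u' : ℝ → ℝ} {J α β ε : ℝ}

lemma sol_J_eq0 (hs : IsClassicalSolution 1 ε α β k u u' J) :
    J = k 0 * (α * (1 - u 0)) := by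
  obtain ⟨-, -, heq, hb0, -⟩ := hs
  have h := heq 0 ⟨le_refl 0, zero_le_one⟩
  rw [hb0] at h
  exact h.symm

lemma sol_J_eq1 (hs : IsClassicalSolution 1 ε α β k u u' J) :
    J = k 1 * (β * u 1) := by
  obtain ⟨-, -, heq, -, hb1⟩ := hs
  have h := heq 1 ⟨zero_le_one, le_refl 1⟩
  rw [hb1] at h
  exact h.symm

lemma sol_deriv (hkpos : ∀ x ∈ Icc (0:ℝ) 1, 0 < k x)
    (hs : IsClassicalSolution 1 ε α β k u u' J) :
    ∀ x ∈ Icc (0:ℝ) 1, ε * u' x = u x * (1 - u x) - J / k x := by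
  intro x hx
  obtain ⟨-, -, heq, -, -⟩ := hs
  have h := heq x hx
  have hkx : k x ≠ 0 := (hkpos x hx).ne'
  field_simp at h ⊢
  linarith

/-- The flux of any classical solution is positive. -/
lemma sol_J_pos (hε : 0 < ε) (hkpos : ∀ x ∈ Icc (0:ℝ) 1, 0 < k x)
    (hα0 : 0 < α) (hβ0 : 0 < β)
    (hs : IsClassicalSolution 1 ε α β k u u' J) : 0 < J := by
  by_contra hJ
  push_neg at hJ
  have hk0 : 0 < k 0 := hkpos 0 ⟨le_refl 0, zero_le_one⟩
  have hk1 : 0 < k 1 := hkpos 1 ⟨zero_le_one, le_refl 1⟩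
  have hJ0 := sol_J_eq0 hs
  have hJ1 := sol_J_eq1 hs
  have hder := sol_deriv hkpos hs
  obtain ⟨hud, -, -, -, -⟩ := hs
  -- u 0 ≥ 1
  have hu0 : 1 ≤ u 0 := by
    rcases lt_or_ge (u 0) 1 with h | h
    · have hpos : 0 < k 0 * (α * (1 - u 0)) :=
        mul_pos hk0 (mul_pos hα0 (by linarith))
      rw [← hJ0] at hpos
      linarith
    · linarith
  -- barrier at level 1/2
  have hbar := barrier_gt hud (l := 0) (r := 1) (c := 1/2) (le_refl 0) (le_refl 1)
    zero_le_one (by linarith)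
    (by
      intro x hx hval
      have h := hder x hx
      rw [hval] at h
      have hkx : 0 < k x := hkpos x hx
      have hJk : J / k x ≤ 0 := div_nonpos_iff.2 (Or.inr ⟨hJ, hkx.le⟩)
      nlinarith)
  have hu1 : 1/2 < u 1 := hbar 1 ⟨zero_le_one, le_refl 1⟩
  have hpos : 0 < k 1 * (β * u 1) := mul_pos hk1 (mul_pos hβ0 (by linarith))
  rw [← hJ1] at hpos
  linarith

/-- Upper bound for the flux: `J < α (1-α) k 0 + δ` once `ε < δ / (4 k 0)`. -/
lemma sol_flux_upper {δ : ℝ} (hδ : 0 < δ) (hε : 0 < ε) (hεs : ε < δ / (4 * k 0))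
    (hkpos : ∀ x ∈ Icc (0:ℝ) 1, 0 < k x) (hkanti : AntitoneOn k (Icc 0 1))
    (hα0 : 0 < α) (hα2 : α < 1/2) (hβ0 : 0 < β)
    (hs : IsClassicalSolution 1 ε α β k u u' J) :
    J < α * (1 - α) * k 0 + δ := by
  by_contra hJ
  push_neg at hJ
  have hk0 : 0 < k 0 := hkpos 0 ⟨le_refl 0, zero_le_one⟩
  have hk1 : 0 < k 1 := hkpos 1 ⟨zero_le_one, le_refl 1⟩
  have hJ0 := sol_J_eq0 hs
  have hJ1 := sol_J_eq1 hs
  have hder := sol_deriv hkpos hs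
  obtain ⟨hud, -, -, -, -⟩ := hs
  have hJstar : 0 < α * (1 - α) * k 0 := mul_pos (mul_pos hα0 (by linarith)) hk0
  have hJpos : 0 < J := by linarith
  have hu1pos : 0 < u 1 := by
    by_contra h
    push_neg at h
    nlinarith [mul_pos hk1 hβ0]
  set τ : ℝ := min (δ / (2 * k 0)) (1/2 - α) with hτdef
  have hτpos : 0 < τ := lt_min (by positivity) (by linarith)
  have hτ1 : τ ≤ δ / (2 * k 0) := min_le_left _ _
  have hτ2 : τ ≤ 1/2 - α := min_le_right _ _
  set m : ℝ := α - δ / (α * k 0) + τ with hm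
  clear_value τ m
  have hXpos : 0 < δ / (α * k 0) := by positivity
  have hu0 : u 0 < m := by
    have h2 : δ / (α * k 0) ≤ α - u 0 := by
      rw [div_le_iff₀ (by positivity)]
      nlinarith
    linarith
  have hmle : m ≤ α + τ := by linarith
  have hm2 : m ≤ 1/2 := by linarith
  have hhalf : δ / (2 * k 0) + δ / (2 * k 0) = δ / k 0 := by ring
  -- derivative bound whenever u x ≤ m
  have hkey : ∀ x ∈ Icc (0:ℝ) 1, u x ≤ m → ε * u' x ≤ -(δ / (2 * k 0)) := by
    intro x hx hux
    have h := hder x hx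
    have hkx : 0 < k x := hkpos x hx
    have hkxle : k x ≤ k 0 := hkanti ⟨le_refl 0, zero_le_one⟩ hx hx.1
    have hdiv : J / k 0 ≤ J / k x := by gcongr
    have hdiv2 : α * (1 - α) + δ / k 0 ≤ J / k 0 := by
      have h' : (α * (1 - α) * k 0 + δ) / k 0 = α * (1 - α) + δ / k 0 := by
        field_simp
      rw [← h']
      gcongr
    have huu : u x * (1 - u x) ≤ α * (1 - α) + τ := by
      nlinarith [mul_nonneg (sub_nonneg.2 hux) (by linarith : (0:ℝ) ≤ 1 - m - u x),
        mul_nonneg (sub_nonneg.2 hmle) (by linarith : (0:ℝ) ≤ 1 - (α + τ) - m),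
        mul_nonneg hτpos.le (by linarith : (0:ℝ) ≤ 2 * α + τ)]
    linarith
  -- barrier: u < m everywhere
  have hbar := barrier_lt hud (l := 0) (r := 1) (c := m) (le_refl 0) (le_refl 1)
    zero_le_one hu0
    (by
      intro x hx hval
      have h := hkey x hx (le_of_eq hval)
      have hd2 : 0 < δ / (2 * k 0) := by positivity
      nlinarith)
  -- uniform decrease
  have hgain := gain_upper hud (l := 0) (r := 1) (K := δ / (2 * k 0) / ε)
    (le_refl 0) (le_refl 1) zero_le_one
    (by
      intro x hx
      have h := hkey x hx (hbar x hx).le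
      rw [show -(δ / (2 * k 0) / ε) = -(δ / (2 * k 0)) / ε by ring, le_div_iff₀ hε]
      nlinarith)
  have hK2 : 2 * ε < δ / (2 * k 0) := by
    rw [lt_div_iff₀ (by positivity : (0:ℝ) < 2 * k 0)]
    rw [lt_div_iff₀ (by positivity : (0:ℝ) < 4 * k 0)] at hεs
    linarith
  have hK2' : 2 < δ / (2 * k 0) / ε := by
    rw [lt_div_iff₀ hε]
    linarith
  have hu0le : u 0 ≤ 1 := by linarith
  simp only [sub_zero, mul_one] at hgain
  linarith

end PerSolution

lemma pos_of_eps_mul {e a : ℝ} (he : 0 < e) (h : 0 < e * a) : 0 < a := by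
  by_contra h'
  push_neg at h'
  nlinarith

/-- Existence of the lower root of `b (1 - b) = V` in `[0, 1/2]`. -/
lemma exists_low_root {V : ℝ} (h0 : 0 ≤ V) (h4 : V ≤ 1/4) :
    ∃ b : ℝ, b * (1 - b) = V ∧ 0 ≤ b ∧ b ≤ 1/2 := by
  have harg0 : 0 ≤ 1 - 4 * V := by linarith
  have harg1 : 1 - 4 * V ≤ 1 := by linarith
  set σ := Real.sqrt (1 - 4 * V) with hσ
  have hσ2 : σ ^ 2 = 1 - 4 * V := Real.sq_sqrt harg0
  have hσ0 : 0 ≤ σ := Real.sqrt_nonneg _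
  have hσ1 : σ ≤ 1 := Real.sqrt_le_one.2 harg1
  refine ⟨(1/2) * (1 - σ), by nlinarith, by nlinarith, by nlinarith⟩

section Lower

variable {k : ℝ → ℝ} {α β : ℝ}

set_option maxHeartbeats 1600000 in
/-- Lower bound for the flux: there is `ε₀ > 0` so that for all `ε < ε₀`,
`J > α (1-α) k 0 - δ`. -/
lemma sol_flux_lower (hkpos : ∀ x ∈ Icc (0:ℝ) 1, 0 < k x)
    (hkanti : AntitoneOn k (Icc 0 1)) (hkc : ContinuousOn k (Icc 0 1))
    (hα0 : 0 < α) (hα2 : α < 1/2) (hA4 : 4 * (α * (1 - α) * k 0) < k 1)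
    (hρβ : rhoStar α k < β)
    {δ : ℝ} (hδ0 : 0 < δ) (hδJ : δ ≤ α * (1 - α) * k 0) :
    ∃ ε0 > 0, ∀ ε u u' J, 0 < ε → ε < ε0 →
      IsClassicalSolution 1 ε α β k u u' J → α * (1 - α) * k 0 - δ < J := by
  have hk0 : 0 < k 0 := hkpos 0 ⟨le_refl 0, zero_le_one⟩
  have hk1 : 0 < k 1 := hkpos 1 ⟨zero_le_one, le_refl 1⟩
  have hk10 : k 1 ≤ k 0 := hkanti ⟨le_refl 0, zero_le_one⟩ ⟨zero_le_one, le_refl 1⟩ zero_le_one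
  have h1α : 0 < 1 - α := by linarith
  have hααpos : 0 < α * (1 - α) := mul_pos hα0 h1α
  have hJstarpos : 0 < α * (1 - α) * k 0 := mul_pos hααpos hk0
  have hαq : α * (1 - α) ≤ 1/4 := by nlinarith [sq_nonneg (1 - 2*α)]
  -- facts about ρ* = rhoStar α k
  set σ := Real.sqrt (1 - 4*α*(1-α) * k 0 / k 1) with hσdef
  have hρdef : rhoStar α k = (1/2) * (1 - σ) := rfl
  have harg0 : 0 < 1 - 4*α*(1-α) * k 0 / k 1 := by
    rw [sub_pos, div_lt_one hk1]; linarith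
  have harg1 : 1 - 4*α*(1-α) * k 0 / k 1 < 1 := by
    have : 0 < 4*α*(1-α) * k 0 / k 1 := by positivity
    linarith
  have hσ2 : σ ^ 2 = 1 - 4*α*(1-α) * k 0 / k 1 := Real.sq_sqrt harg0.le
  have hσ0 : 0 < σ := Real.sqrt_pos.2 harg0
  have hσ1 : σ < 1 := by nlinarith [Real.sqrt_nonneg (1 - 4*α*(1-α) * k 0 / k 1)]
  set P := rhoStar α k with hPdef
  have hρpos : 0 < P := by rw [hρdef]; linarith
  have hρhalf : P < 1/2 := by rw [hρdef]; linarith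
  have hρA : P * (1 - P) = α * (1 - α) * k 0 / k 1 := by
    rw [hρdef]; linear_combination (-1/4 : ℝ) * hσ2
  clear_value P
  have hβ0 : 0 < β := hρpos.trans hρβ
  have hαρ : α ≤ P := by
    have h1 : α * (1 - α) ≤ P * (1 - P) := by
      rw [hρA, le_div_iff₀ hk1]
      nlinarith only [hk10, hααpos]
    by_contra h
    push_neg at h
    nlinarith only [h1, mul_pos (sub_pos.2 h) (show (0:ℝ) < 1 - α - P by linarith)]
  -- the perturbed root ρ̃
  obtain ⟨Q, hQV, hQ0, hQh⟩ := exists_low_root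
    (V := (α * (1 - α) * k 0 - δ) / k 1)
    (div_nonneg (by linarith) hk1.le)
    (by rw [div_le_iff₀ hk1]; nlinarith)
  have hQP : Q < P := by
    have h1 : Q * (1 - Q) < P * (1 - P) := by
      rw [hQV, hρA]
      gcongr <;> linarith
    by_contra h
    push_neg at h
    nlinarith only [h1, mul_nonneg (sub_nonneg.2 h) (show (0:ℝ) ≤ 1 - Q - P by linarith)]
  -- the constant e₁ and the flat piece [0, x₀]
  set γ := min (2*δ) (k 0 / 2) with hγdef
  have hγ0 : 0 < γ := lt_min (by linarith) (by linarith)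
  have hγ2δ : γ ≤ 2*δ := min_le_left _ _
  have hγk : γ ≤ k 0 / 2 := min_le_right _ _
  clear_value γ
  obtain ⟨θ, hθ0, hθ⟩ := Metric.continuousWithinAt_iff.1 (hkc 0 ⟨le_refl 0, zero_le_one⟩) γ hγ0
  set x₀ := min (θ/2) 1 with hx₀def
  have hx₀0 : 0 < x₀ := lt_min (by linarith) one_pos
  have hx₀1 : x₀ ≤ 1 := min_le_right _ _
  have hx₀θ : x₀ < θ := lt_of_le_of_lt (min_le_left _ _) (by linarith)
  have hkx₀ : ∀ x ∈ Icc 0 x₀, k 0 - γ < k x := by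
    intro x hx
    have hxI : x ∈ Icc (0:ℝ) 1 := ⟨hx.1, hx.2.trans hx₀1⟩
    have hd : dist x 0 < θ := by
      rw [Real.dist_eq, sub_zero, abs_of_nonneg hx.1]
      linarith [hx.2]
    have := hθ hxI hd
    rw [Real.dist_eq, abs_lt] at this
    linarith [this.1]
  clear_value x₀
  have hkγpos : 0 < k 0 - γ := by linarith
  set e₁ := δ / (2 * k 0) with he₁def
  have he₁pos : 0 < e₁ := by positivity
  have hk0e₁ : k 0 * e₁ = δ / 2 := by rw [he₁def]; field_simp
  have he₁α : e₁ ≤ α * (1 - α) / 2 := by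
    rw [he₁def, div_le_div_iff₀ (by positivity) two_pos]
    nlinarith
  clear_value e₁
  -- the root b₀ for the value W = α (1-α) - e₁
  obtain ⟨b₀, hb₀V, hb₀0, hb₀h⟩ := exists_low_root (V := α * (1 - α) - e₁)
    (by linarith) (by linarith)
  have hαb₀ : e₁ ≤ α - b₀ := by
    have hfac : 0 < 1 - α - b₀ := by linarith
    have hfac1 : 1 - α - b₀ ≤ 1 := by linarith
    have hprod : (α - b₀) * (1 - α - b₀) = e₁ := by linear_combination -hb₀V
    nlinarith
  refine ⟨x₀ * (e₁ * (e₁/2)), by positivity, ?_⟩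
  intro ε u u' J hε hεs hsol
  by_contra hJc
  push_neg at hJc
  have hJpos : 0 < J := sol_J_pos hε hkpos hα0 hβ0 hsol
  have hJ0 := sol_J_eq0 hsol
  have hJ1 := sol_J_eq1 hsol
  have hder := sol_deriv hkpos hsol
  obtain ⟨hud, -, -, -, -⟩ := hsol
  -- u 0 > α
  have hu0α : α < u 0 := by
    nlinarith only [hJ0, hJc, hδ0, mul_pos hk0 hα0]
  -- the flux over the flat piece
  have hW : ∀ x ∈ Icc 0 x₀, J / k x ≤ α * (1 - α) - e₁ := by
    intro x hx
    have hkx := hkx₀ x hx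
    have h1 : J ≤ (k 0 - γ) * (α * (1 - α) - e₁) := by
      linarith only [hJc, hk0e₁,
        mul_le_mul hγ2δ hαq hααpos.le (by linarith : (0:ℝ) ≤ 2*δ),
        mul_nonneg hγ0.le he₁pos.le]
    calc J / k x ≤ J / (k 0 - γ) := by gcongr
      _ ≤ α * (1 - α) - e₁ := by rw [div_le_iff₀ hkγpos]; linarith only [h1]
  -- phase 1: u > α on [0, x₀]
  have hbar1 := barrier_gt hud (l := 0) (r := x₀) (c := α) (le_refl 0) hx₀1 hx₀0.le hu0α
    (by
      intro x hx hval
      have h := hder x ⟨hx.1, hx.2.trans hx₀1⟩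
      have h2 := hW x hx
      rw [hval] at h
      exact pos_of_eps_mul hε (by linarith only [h, h2, he₁pos]))
  -- phase 1b: there is a point where u is large
  have hx₁ : ∃ x₁ ∈ Icc 0 x₀, 1 - b₀ - e₁/2 ≤ u x₁ := by
    by_contra hcase
    push_neg at hcase
    have hgain := gain_lower hud (l := 0) (r := x₀) (K := e₁ * (e₁/2) / ε)
      (le_refl 0) hx₀1 hx₀0.le
      (by
        intro x hx
        have hxI : x ∈ Icc (0:ℝ) 1 := ⟨hx.1, hx.2.trans hx₀1⟩
        have h := hder x hxI
        have h2 := hW x hx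
        have h3 : α < u x := hbar1 x hx
        have h4 : u x < 1 - b₀ - e₁/2 := hcase x hx
        have h5 : e₁ * (e₁/2) ≤ (u x - b₀) * (1 - u x - b₀) :=
          mul_le_mul (by linarith) (by linarith) (by linarith) (by linarith)
        have h6 : e₁ * (e₁/2) ≤ ε * u' x := by
          linarith only [h, h2, h5, hb₀V]
        rw [div_le_iff₀ hε]
        linarith only [h6])
    have hKx : 1 < e₁ * (e₁/2) / ε * x₀ := by
      rw [div_mul_eq_mul_div, lt_div_iff₀ hε]
      linarith only [hεs]
    have h7 : u x₀ < 1 - b₀ - e₁/2 := hcase x₀ ⟨hx₀0.le, le_refl x₀⟩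
    have h8 : u 0 + e₁ * (e₁/2) / ε * x₀ ≤ u x₀ := by
      simpa using hgain
    linarith only [h7, h8, hKx, hb₀0, he₁pos, hu0α, hα0]
  obtain ⟨x₁, hx₁I, hx₁M⟩ := hx₁
  -- phase 2: u > 1 - P on [x₁, 1]
  have hbar2 := barrier_gt hud (l := x₁) (r := 1) (c := 1 - P) hx₁I.1 (le_refl 1)
    (hx₁I.2.trans hx₀1)
    (by
      -- u x₁ > 1 - P
      linarith only [hx₁M, hαρ, hαb₀, he₁pos])
    (by
      intro x hx hval
      have hxI : x ∈ Icc (0:ℝ) 1 := ⟨hx₁I.1.trans hx.1, hx.2⟩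
      have h := hder x hxI
      rw [hval] at h
      have hkx1 : k 1 ≤ k x := hkanti hxI ⟨zero_le_one, le_refl 1⟩ hxI.2
      have hJk : J / k x ≤ J / k 1 := by gcongr
      have hJk1 : J / k 1 ≤ (α * (1 - α) * k 0 - δ) / k 1 := by gcongr
      have hQval : (α * (1 - α) * k 0 - δ) / k 1 = Q * (1 - Q) := hQV.symm
      have hgap : 0 < (P - Q) * (1 - P - Q) :=
        mul_pos (by linarith) (by linarith)
      have hc : (1 - P) * (1 - (1 - P)) - Q * (1 - Q) = (P - Q) * (1 - P - Q) := by ring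
      exact pos_of_eps_mul hε (by linarith only [h, hJk, hJk1, hQval, hgap, hc]))
  have hu1c : 1 - P < u 1 := hbar2 1 ⟨hx₁I.2.trans hx₀1, le_refl 1⟩
  have hu1pos : 0 < u 1 := by linarith
  -- conclude β < P, contradiction
  have h2 : β * u 1 = J / k 1 := by rw [hJ1, mul_div_cancel_left₀ _ hk1.ne']
  have h3 : J / k 1 ≤ (α * (1 - α) * k 0 - δ) / k 1 := by gcongr
  have h5 : Q * (1 - Q) < P * (1 - P) := by
    rw [hQV, hρA]
    gcongr <;> linarith
  have h6 : P * (1 - P) < P * u 1 := mul_lt_mul_of_pos_left hu1c hρpos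
  have h7 : P * u 1 < β * u 1 := mul_lt_mul_of_pos_right hρβ hu1pos
  rw [hQV] at h5
  linarith only [h2, h3, h5, h6, h7]

end Lower

set_option maxHeartbeats 1600000 in
/-- Vanishing-viscosity limits of the flux and the boundary values in region G₁ ∪ G₂. -/
theorem vanishing_viscosity_region12_boundary
    (α β : ℝ) (k k' : ℝ → ℝ) (ρ ρ' : ℝ → ℝ → ℝ) (J : ℝ → ℝ)
    (hk : ∀ x ∈ Icc (0:ℝ) 1, HasDerivWithinAt k (k' x) (Icc 0 1) x)
    (hk'c : ContinuousOn k' (Icc 0 1))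
    (hkpos : ∀ x ∈ Icc (0:ℝ) 1, 0 < k x)
    (hk'neg : ∀ x ∈ Icc (0:ℝ) 1, k' x < 0)
    (hα0 : 0 < α) (hαf : α < rhoF k)
    (hβ1 : rhoStar α k < β) (hβ2 : β < 1) (hβne : β ≠ 1 - rhoStar α k)
    (hsol : ∀ ε > 0, IsClassicalSolution 1 ε α β k (ρ ε) (ρ' ε) (J ε)) :
    Tendsto J (nhdsWithin 0 (Ioi 0)) (nhds (α * (1 - α) * k 0)) ∧
    Tendsto (fun ε => ρ ε 0) (nhdsWithin 0 (Ioi 0)) (nhds α) ∧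
    Tendsto (fun ε => ρ ε 1) (nhdsWithin 0 (Ioi 0))
      (nhds (α * (1 - α) * k 0 / (β * k 1))) := by
  have hk0 : 0 < k 0 := hkpos 0 ⟨le_refl 0, zero_le_one⟩
  have hk1 : 0 < k 1 := hkpos 1 ⟨zero_le_one, le_refl 1⟩
  have hkcont : ContinuousOn k (Icc 0 1) := fun x hx => (hk x hx).continuousWithinAt
  -- k is antitone
  have hkanti : AntitoneOn k (Icc (0:ℝ) 1) := by
    apply antitoneOn_of_deriv_nonpos (convex_Icc 0 1) hkcont
    · intro x hx
      rw [interior_Icc] at hx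
      exact ((hk x (Ioo_subset_Icc_self hx)).hasDerivAt
        (Icc_mem_nhds hx.1 hx.2)).differentiableAt.differentiableWithinAt
    · intro x hx
      rw [interior_Icc] at hx
      rw [((hk x (Ioo_subset_Icc_self hx)).hasDerivAt (Icc_mem_nhds hx.1 hx.2)).deriv]
      exact (hk'neg x (Ioo_subset_Icc_self hx)).le
  have hk10 : k 1 ≤ k 0 := hkanti ⟨le_refl 0, zero_le_one⟩ ⟨zero_le_one, le_refl 1⟩ zero_le_one
  -- consequences of α < ρ_f
  have hargf : 0 ≤ 1 - k 1 / k 0 := by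
    rw [sub_nonneg, div_le_one hk0]; exact hk10
  have hsf0 : 0 ≤ Real.sqrt (1 - k 1 / k 0) := Real.sqrt_nonneg _
  have hsf2 : Real.sqrt (1 - k 1 / k 0) ^ 2 = 1 - k 1 / k 0 := Real.sq_sqrt hargf
  have hαf' : α < 1/2 * (1 - Real.sqrt (1 - k 1 / k 0)) := hαf
  have hα2 : α < 1/2 := by linarith
  have h1α : 0 < 1 - α := by linarith
  have hααpos : 0 < α * (1 - α) := mul_pos hα0 h1α
  have hq : 4 * (α * (1 - α)) < k 1 / k 0 := by
    nlinarith only [mul_pos (sub_pos.2 hαf')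
      (show (0:ℝ) < 1 - 1/2 * (1 - Real.sqrt (1 - k 1 / k 0)) - α by linarith), hsf2]
  have hA4 : 4 * (α * (1 - α) * k 0) < k 1 := by
    have h2 := mul_lt_mul_of_pos_right hq hk0
    rw [div_mul_cancel₀ _ hk0.ne'] at h2
    linarith only [h2]
  -- ρ* > 0
  have hargρ : 0 < 1 - 4*α*(1-α) * k 0 / k 1 := by
    rw [sub_pos, div_lt_one hk1]; linarith
  have hρpos : 0 < rhoStar α k := by
    have h1 : Real.sqrt (1 - 4*α*(1-α) * k 0 / k 1) ^ 2 = 1 - 4*α*(1-α) * k 0 / k 1 :=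
      Real.sq_sqrt hargρ.le
    have h2 : 0 ≤ Real.sqrt (1 - 4*α*(1-α) * k 0 / k 1) := Real.sqrt_nonneg _
    have h3 : Real.sqrt (1 - 4*α*(1-α) * k 0 / k 1) < 1 := by
      have h4 : 0 < 4*α*(1-α) * k 0 / k 1 := by positivity
      nlinarith only [h1, h2, h4]
    show (0:ℝ) < (1/2) * (1 - Real.sqrt (1 - 4*α*(1-α) * k 0 / k 1))
    linarith
  have hβ0 : 0 < β := hρpos.trans hβ1
  have hJstarpos : 0 < α * (1 - α) * k 0 := mul_pos hααpos hk0
  -- main flux limit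
  have htJ : Tendsto J (nhdsWithin 0 (Ioi 0)) (nhds (α * (1 - α) * k 0)) := by
    rw [Metric.tendsto_nhds]
    intro δ hδ
    have hδ'pos : 0 < min δ (α * (1 - α) * k 0) := lt_min hδ hJstarpos
    obtain ⟨ε1, hε1pos, hlow⟩ := sol_flux_lower hkpos hkanti hkcont hα0 hα2 hA4 hβ1
      hδ'pos (min_le_right _ _)
    have hε2 : 0 < min ε1 (min δ (α * (1 - α) * k 0) / (4 * k 0)) :=
      lt_min hε1pos (by positivity)
    filter_upwards [Ioo_mem_nhdsGT hε2] with ε hε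
    have hεpos : 0 < ε := hε.1
    have hsol' := hsol ε hεpos
    have hup := sol_flux_upper hδ'pos hεpos
      (hε.2.trans_le (min_le_right _ _)) hkpos hkanti hα0 hα2 hβ0 hsol'
    have hlo := hlow ε _ _ _ hεpos (hε.2.trans_le (min_le_left _ _)) hsol'
    rw [Real.dist_eq, abs_lt]
    constructor <;>
      [linarith [min_le_left δ (α * (1 - α) * k 0)];
       linarith [min_le_left δ (α * (1 - α) * k 0)]]
  refine ⟨htJ, ?_, ?_⟩
  · -- ρ ε 0 → α
    have hJ0f : ∀ᶠ ε in nhdsWithin (0:ℝ) (Ioi 0), 1 - J ε / (α * k 0) = ρ ε 0 := by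
      filter_upwards [self_mem_nhdsWithin] with ε hε
      have h := sol_J_eq0 (hsol ε hε)
      have hne : α * k 0 ≠ 0 := by positivity
      field_simp
      linarith only [h]
    have hT : Tendsto (fun ε => 1 - J ε / (α * k 0)) (nhdsWithin 0 (Ioi 0))
        (nhds (1 - α * (1 - α) * k 0 / (α * k 0))) :=
      (htJ.div_const (α * k 0)).const_sub 1
    have heq : 1 - α * (1 - α) * k 0 / (α * k 0) = α := by
      rw [mul_comm α ((1:ℝ) - α), mul_assoc, mul_div_assoc,
        div_self (by positivity : α * k 0 ≠ 0)]
      ring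
    rw [heq] at hT
    exact hT.congr' hJ0f
  · -- ρ ε 1 → J*/(β k 1)
    have hJ1f : ∀ᶠ ε in nhdsWithin (0:ℝ) (Ioi 0), J ε / (β * k 1) = ρ ε 1 := by
      filter_upwards [self_mem_nhdsWithin] with ε hε
      have h := sol_J_eq1 (hsol ε hε)
      have hne : β * k 1 ≠ 0 := by positivity
      field_simp
      linarith only [h]
    exact (htJ.div_const (β * k 1)).congr' hJ1f
end

section
/- Assume ρ_f < α < 1 with α ≠ 1 − ρ_f, and 1/2 < β < 1. Suppose that for every ε > 0, (ρ_ε, J_ε) is a classical solution of the area-averaged pedestrian boundary value problem on [0,1] with diffusion ε. Then, as ε → 0⁺, J_ε → k(1)/4, ρ_ε(0) → 1 − k(1)/(4α·k(0)), and ρ_ε(1) → 1/(4β). -/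
open Set Filter Topology

lemma monoAux {f f' : ℝ → ℝ} {a b : ℝ}
    (hd : ∀ x ∈ Icc a b, HasDerivWithinAt f (f' x) (Icc a b) x)
    (h0 : ∀ x ∈ Icc a b, 0 ≤ f' x) : MonotoneOn f (Icc a b) := by
  apply monotoneOn_of_hasDerivWithinAt_nonneg (convex_Icc a b)
    (fun x hx => (hd x hx).continuousWithinAt)
    (f' := f')
  · intro x hx
    exact (hd x (interior_subset hx)).mono interior_subset
  · intro x hx; exact h0 x (interior_subset hx)

lemma fwdInvariant {f f' : ℝ → ℝ} {x0 lam : ℝ} (hx0 : x0 ∈ Icc (0:ℝ) 1)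
    (hd : ∀ x ∈ Icc (0:ℝ) 1, HasDerivWithinAt f (f' x) (Icc 0 1) x)
    (hstart : lam ≤ f x0)
    (hcross : ∀ x ∈ Icc (0:ℝ) 1, x0 ≤ x → f x = lam → 0 < f' x) :
    ∀ x ∈ Icc x0 1, lam ≤ f x := by
  by_contra hcon
  push_neg at hcon
  obtain ⟨y, hy, hylt⟩ := hcon
  have hfc : ContinuousOn f (Icc (0:ℝ) 1) := fun x hx => (hd x hx).continuousWithinAt
  have hsubxy : Icc x0 y ⊆ Icc (0:ℝ) 1 := Icc_subset_Icc hx0.1 hy.2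
  set S : Set ℝ := {x | x ∈ Icc x0 y ∧ lam ≤ f x} with hS
  have hSne : S.Nonempty := ⟨x0, ⟨le_refl _, hy.1⟩, hstart⟩
  have hSbdd : BddAbove S := ⟨y, fun z hz => hz.1.2⟩
  have hSclosed : IsClosed S := by
    have : S = Icc x0 y ∩ f ⁻¹' (Ici lam) := by
      ext z; simp [hS, Set.mem_setOf_eq, Set.mem_inter_iff, Set.mem_preimage]
    rw [this]
    exact (hfc.mono hsubxy).preimage_isClosed_of_isClosed isClosed_Icc isClosed_Ici
  set c := sSup S with hc
  have hcS : c ∈ S := hSclosed.csSup_mem hSne hSbdd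
  have hcy : c ≤ y := hcS.1.2
  have hcicc : c ∈ Icc (0:ℝ) 1 := hsubxy hcS.1
  have hclty : c < y := lt_of_le_of_ne hcy (fun h => absurd (h ▸ hcS.2) (not_le.2 hylt))
  have hlt : ∀ z ∈ Ioo c y, f z < lam := by
    intro z hz
    by_contra hzc
    push_neg at hzc
    have hzS : z ∈ S := ⟨⟨le_trans hcS.1.1 hz.1.le, hz.2.le⟩, hzc⟩
    exact absurd (le_csSup hSbdd hzS) (not_le.2 hz.1)
  have hsub2 : Ioo c y ⊆ Icc (0:ℝ) 1 :=
    fun z hz => hsubxy ⟨le_trans hcS.1.1 hz.1.le, hz.2.le⟩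
  have hne : (𝓝[Ioo c y] c).NeBot := by
    rw [← mem_closure_iff_nhdsWithin_neBot, closure_Ioo hclty.ne]
    exact ⟨le_refl c, hclty.le⟩
  have hmono : 𝓝[Ioo c y] c ≤ 𝓝[Icc (0:ℝ) 1] c := nhdsWithin_mono _ hsub2
  have hfle : f c ≤ lam := by
    have htends : Tendsto f (𝓝[Ioo c y] c) (𝓝 (f c)) := (hfc c hcicc).mono_left hmono
    exact le_of_tendsto htends (eventually_nhdsWithin_of_forall (fun z hz => (hlt z hz).le))
  have hfceq : f c = lam := le_antisymm hfle hcS.2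
  have hderiv : 0 < f' c := hcross c hcicc hcS.1.1 hfceq
  have hslope : Tendsto (slope f c) (𝓝[Ioo c y] c) (𝓝 (f' c)) := by
    have h1 := hasDerivWithinAt_iff_tendsto_slope.1 (hd c hcicc)
    exact h1.mono_left (nhdsWithin_mono _ (fun z hz => ⟨hsub2 hz, ne_of_gt hz.1⟩))
  have hev : ∀ᶠ z in 𝓝[Ioo c y] c, 0 < slope f c z := hslope.eventually (eventually_gt_nhds hderiv)
  obtain ⟨z, hz1, hz2⟩ :=
    (hev.and (eventually_mem_nhdsWithin (s := Ioo c y) (a := c))).exists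
  have hzgt : 0 < f z - f c := by
    rcases div_pos_iff.1 (by rwa [slope_def_field] at hz1) with ⟨h1, _⟩ | ⟨_, h2⟩
    · exact h1
    · linarith [sub_pos.2 hz2.1]
  have := hlt z hz2
  rw [hfceq] at hzgt
  linarith

lemma solution_facts {ε α β : ℝ} {k k' ρ ρ' : ℝ → ℝ} {J : ℝ}
    (hε : 0 < ε) (hα0 : 0 < α) (hα1 : α < 1) (hβ0 : 0 < β) (hβ1 : β < 1)
    (hkpos : ∀ x ∈ Icc (0:ℝ) 1, 0 < k x)
    (hsol : IsClassicalSolution 1 ε α β k ρ ρ' J) :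
    0 < J ∧ (∀ x ∈ Icc (0:ℝ) 1, ρ x ≤ 1) ∧ J = α * k 0 * (1 - ρ 0) ∧ J = β * k 1 * ρ 1 ∧
      (∀ x ∈ Icc (0:ℝ) 1, ε * ρ' x = ρ x * (1 - ρ x) - J / k x) := by
  obtain ⟨hρd, hρ'c, heq, hbc0, hbc1⟩ := hsol
  have h0mem : (0:ℝ) ∈ Icc (0:ℝ) 1 := by norm_num
  have h1mem : (1:ℝ) ∈ Icc (0:ℝ) 1 := by norm_num
  have hK0 : 0 < k 0 := hkpos 0 h0mem
  have hK1 : 0 < k 1 := hkpos 1 h1mem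
  have hJ0 : J = α * k 0 * (1 - ρ 0) := by
    have h := heq 0 h0mem
    rw [hbc0] at h
    rw [← h]; ring
  have hJ1 : J = β * k 1 * ρ 1 := by
    have h := heq 1 h1mem
    rw [hbc1] at h
    rw [← h]; ring
  have hflux : ∀ x ∈ Icc (0:ℝ) 1, ε * ρ' x = ρ x * (1 - ρ x) - J / k x := by
    intro x hx
    have h := heq x hx
    have hkx := (hkpos x hx).ne'
    have h2 : J / k x = -ε * ρ' x + ρ x * (1 - ρ x) := by
      rw [← h]; field_simp
    rw [h2]; ring
  have hJpos : 0 < J := by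
    by_contra hJ
    push_neg at hJ
    have hρ0ge : 1 ≤ ρ 0 := by
      by_contra h
      push_neg at h
      nlinarith [mul_pos (mul_pos hα0 hK0) (sub_pos.2 h)]
    have hρ1le : ρ 1 ≤ 0 := by
      by_contra h
      push_neg at h
      nlinarith [mul_pos (mul_pos hβ0 hK1) h]
    have hinv := fwdInvariant h0mem hρd (by linarith : (1:ℝ)/2 ≤ ρ 0) ?_ 1 h1mem
    · linarith
    · intro x hx _ hfx
      have hf := hflux x hx
      rw [hfx] at hf
      have : J / k x ≤ 0 := div_nonpos_iff.2 (Or.inr ⟨hJ, (hkpos x hx).le⟩)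
      nlinarith
  have hρle1 : ∀ x ∈ Icc (0:ℝ) 1, ρ x ≤ 1 := by
    have hρ0lt : ρ 0 < 1 := by
      by_contra h
      push_neg at h
      nlinarith [mul_nonneg (mul_pos hα0 hK0).le (by linarith : (0:ℝ) ≤ ρ 0 - 1)]
    have hinv := fwdInvariant (f := fun x => -ρ x) (f' := fun x => -ρ' x) h0mem
      (fun x hx => (hρd x hx).neg) (by linarith : (-1:ℝ) ≤ -ρ 0) ?_
    · intro x hx
      have := hinv x ⟨hx.1, hx.2⟩
      simp at this; linarith
    · intro x hx _ hfx
      have hρx : ρ x = 1 := by simpa [neg_eq_iff_eq_neg] using hfx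
      have hf := hflux x hx
      rw [hρx] at hf
      have : 0 < J / k x := div_pos hJpos (hkpos x hx)
      simp only [neg_pos]
      nlinarith
  exact ⟨hJpos, hρle1, hJ0, hJ1, hflux⟩

set_option maxHeartbeats 2000000 in
lemma key_bound {α β : ℝ} {k k' : ℝ → ℝ}
    (hk : ∀ x ∈ Icc (0:ℝ) 1, HasDerivWithinAt k (k' x) (Icc 0 1) x)
    (hk'c : ContinuousOn k' (Icc 0 1))
    (hkpos : ∀ x ∈ Icc (0:ℝ) 1, 0 < k x)
    (hk'neg : ∀ x ∈ Icc (0:ℝ) 1, k' x < 0)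
    (hα0 : 0 < α) (hα1 : α < 1)
    (hαk : 1/2 ≤ α ∨ k 1 < 4 * (α * (1 - α)) * k 0)
    (hβ1 : 1/2 < β) (hβ2 : β < 1)
    {δ : ℝ} (hδ : 0 < δ) :
    ∃ ε0 > 0, ∀ ε, 0 < ε → ε ≤ ε0 → ∀ ρ ρ' J, IsClassicalSolution 1 ε α β k ρ ρ' J →
      |J / k 1 - 1/4| < δ := by
  have h0mem : (0:ℝ) ∈ Icc (0:ℝ) 1 := by norm_num
  have h1mem : (1:ℝ) ∈ Icc (0:ℝ) 1 := by norm_num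
  have hK0 : 0 < k 0 := hkpos 0 h0mem
  have hK1 : 0 < k 1 := hkpos 1 h1mem
  have hβ0 : 0 < β := by linarith
  have hkc : ContinuousOn k (Icc (0:ℝ) 1) := fun x hx => (hk x hx).continuousWithinAt
  -- Lipschitz bound on k
  obtain ⟨xM, hxM, hMmax⟩ := isCompact_Icc.exists_isMaxOn (⟨0, h0mem⟩ : (Icc (0:ℝ) 1).Nonempty)
    (hk'c.neg)
  obtain ⟨M, hM⟩ : ∃ M : ℝ, M = -k' xM := ⟨_, rfl⟩
  have hMpos : 0 < M := hM ▸ neg_pos.2 (hk'neg xM hxM)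
  have hMb : ∀ x ∈ Icc (0:ℝ) 1, -k' x ≤ M := fun x hx => hM ▸ hMmax hx
  have hkanti : ∀ x ∈ Icc (0:ℝ) 1, k 1 ≤ k x := by
    have hmono : MonotoneOn (fun x => -k x) (Icc (0:ℝ) 1) :=
      monoAux (f' := fun x => -k' x) (fun x hx => (hk x hx).neg)
        (fun x hx => by have := hk'neg x hx; linarith)
    intro x hx
    have := hmono hx h1mem hx.2
    simpa using this
  have hkLip : ∀ x ∈ Icc (0:ℝ) 1, k x - k 1 ≤ M * (1 - x) := by
    have hmono : MonotoneOn (fun t => k t + M * t) (Icc (0:ℝ) 1) :=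
      monoAux (f' := fun t => k' t + M)
        (fun t ht => ((hk t ht).add (((hasDerivWithinAt_id t _).const_mul M).congr_deriv
          (by simp))))
        (fun t ht => by have := hMb t ht; linarith)
    intro x hx
    have := hmono hx h1mem hx.2
    simp only at this
    nlinarith
  have hk10 : k 1 < k 0 := by
    obtain ⟨c, hc, hceq⟩ := exists_hasDerivAt_eq_slope k k' one_pos hkc
      (fun x hx => (hk x (Ioo_subset_Icc_self hx)).hasDerivAt
        (Icc_mem_nhds hx.1 hx.2))
    have := hk'neg c (Ioo_subset_Icc_self hc)
    rw [hceq] at this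
    simp at this
    linarith
  obtain ⟨G, hGdef⟩ : ∃ G : ℝ, G = M / k 1 := ⟨_, rfl⟩
  have hG : 0 < G := hGdef ▸ div_pos hMpos hK1
  obtain ⟨c0, hc0def⟩ : ∃ c0 : ℝ, c0 = 1/2 - 1/(4*β) := ⟨_, rfl⟩
  have hc0 : 0 < c0 := by
    rw [hc0def, sub_pos, div_lt_div_iff₀ (by linarith) (by norm_num)]
    linarith
  obtain ⟨m, hmdef⟩ : ∃ m : ℝ, m = min (Real.sqrt δ) c0 / 2 := ⟨_, rfl⟩
  have hm : 0 < m := hmdef ▸ div_pos (lt_min (Real.sqrt_pos.2 hδ) hc0) two_pos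
  have hm2 : m * m < δ := by
    have h1 : m ≤ Real.sqrt δ / 2 := by
      rw [hmdef]; gcongr; exact min_le_left _ _
    nlinarith [Real.mul_self_sqrt hδ.le, Real.sqrt_pos.2 hδ]
  have hmc0 : 2 * m ≤ c0 := by
    have h2 := min_le_right (Real.sqrt δ) c0
    rw [hmdef]; linarith
  obtain ⟨l, hldef⟩ : ∃ l : ℝ, l = min 1 (δ/(2*G)) := ⟨_, rfl⟩
  have hlpos : 0 < l := hldef ▸ lt_min one_pos (by positivity)
  have hl1 : l ≤ 1 := hldef ▸ min_le_left _ _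
  have hlG : G * l ≤ δ / 2 := by
    have h1 : l ≤ δ/(2*G) := hldef ▸ min_le_right _ _
    rw [← le_div_iff₀' hG, div_div]
    exact h1
  obtain ⟨A, hAdef⟩ : ∃ A : ℝ, A = α * (1-α) * (k 0 / k 1) - 1/4 := ⟨_, rfl⟩
  obtain ⟨εU, hεUdef⟩ : ∃ e : ℝ, e = δ/2 * l := ⟨_, rfl⟩
  have hεU : 0 < εU := by rw [hεUdef]; positivity
  obtain ⟨εL, hεLdef⟩ : ∃ e : ℝ, e = if 1/2 ≤ α then 1 else A * k 1 * m / ((1 + G) * k 0) :=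
    ⟨_, rfl⟩
  have hApos' : ¬ (1/2 ≤ α) → 0 < A := by
    intro h12
    have hA : k 1 < 4 * (α * (1 - α)) * k 0 := by
      rcases hαk with h | h
      · exact absurd h h12
      · exact h
    rw [hAdef, sub_pos, mul_div_assoc', lt_div_iff₀ hK1]
    nlinarith
  have hεL : 0 < εL := by
    rw [hεLdef]
    split_ifs with h12
    · norm_num
    · have hApos := hApos' h12
      positivity
  refine ⟨min εU εL, lt_min hεU hεL, ?_⟩
  intro ε hε hεle ρ ρ' J hsol
  obtain ⟨hJpos, hρle1, hJ0eq, hJ1eq, hflux⟩ :=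
    solution_facts (k' := k') hε hα0 hα1 hβ0 hβ2 hkpos hsol
  obtain ⟨hρd, hρ'c, heqv, hbc0, hbc1⟩ := hsol
  have hρ11 : ρ 1 ≤ 1 := hρle1 1 h1mem
  have hρ1pos : 0 < ρ 1 := by
    by_contra h
    push_neg at h
    have h2 : β * k 1 * ρ 1 ≤ 0 :=
      mul_nonpos_of_nonneg_of_nonpos (mul_nonneg hβ0.le hK1.le) h
    linarith only [h2, hJ1eq, hJpos]
  have hJle : J ≤ k 1 := by
    linarith only [hJ1eq, mul_nonneg (mul_nonneg hβ0.le hK1.le) (sub_nonneg.2 hρ11),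
      mul_nonneg hK1.le (sub_nonneg.2 hβ2.le)]
  have hg1pos : 0 < J / k 1 := div_pos hJpos hK1
  have hgle : ∀ x ∈ Icc (0:ℝ) 1, J / k x ≤ J / k 1 := by
    intro x hx
    exact div_le_div_of_nonneg_left hJpos.le hK1 (hkanti x hx)
  have hβρ1 : β * ρ 1 = J / k 1 := by
    rw [hJ1eq]; field_simp
  have hαρ0 : α * (1 - ρ 0) = J / k 0 := by
    rw [hJ0eq]; field_simp
  rw [abs_lt]
  constructor
  · -- lower bound : 1/4 - δ < J / k 1
    rw [neg_lt, neg_sub]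
    by_contra hcon
    push_neg at hcon
    have hg1 : J / k 1 ≤ 1/4 - δ := by linarith only [hcon]
    have hgx : ∀ x ∈ Icc (0:ℝ) 1, J / k x ≤ 1/4 - δ :=
      fun x hx => le_trans (hgle x hx) hg1
    -- Step 1: ρ ≤ 1/2 - m everywhere
    have hρm : ∀ x ∈ Icc (0:ℝ) 1, ρ x ≤ 1/2 - m := by
      by_contra hcc
      push_neg at hcc
      obtain ⟨x0, hx0, hx0gt⟩ := hcc
      have hinv := fwdInvariant hx0 hρd hx0gt.le ?_ 1 ⟨hx0.2, le_rfl⟩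
      · have hc0β : 4 * β * c0 = 2 * β - 1 := by rw [hc0def]; field_simp; ring
        have hb1 : β * (1/2 - m) ≤ β * ρ 1 := mul_le_mul_of_nonneg_left hinv hβ0.le
        have hb2 : β * (2*m) ≤ β * c0 := mul_le_mul_of_nonneg_left hmc0 hβ0.le
        have hb3 : β * ρ 1 ≤ 1/4 - δ := by rw [hβρ1]; exact hg1
        linarith only [hb1, hb2, hb3, hc0β, hβ1, hδ]
      · intro x hxI _ hfx
        have hf := hflux x hxI
        rw [hfx] at hf
        have hgxx := hgx x hxI
        by_contra hneg
        push_neg at hneg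
        have h0 : ε * ρ' x ≤ 0 := mul_nonpos_of_nonneg_of_nonpos hε.le hneg
        linarith only [hm2, hf, hgxx, h0]
    have hρ0 : ρ 0 ≤ 1/2 - m := hρm 0 h0mem
    have hg0 : α * (1/2 + m) ≤ J / k 0 := by
      rw [← hαρ0]
      exact mul_le_mul_of_nonneg_left (by linarith only [hρ0]) hα0.le
    have hg01 : J / k 1 = (J / k 0) * (k 0 / k 1) := by
      field_simp
    have hr : 1 < k 0 / k 1 := (one_lt_div hK1).2 hk10
    by_cases h12 : 1/2 ≤ α
    · -- supercritical inflow
      have h1 : (1/2) * (1/2 + m) ≤ α * (1/2 + m) :=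
        mul_le_mul_of_nonneg_right h12 (by linarith only [hm])
      linarith only [h1, hg0, hgle 0 h0mem, hg1, hm, hδ]
    · -- subcritical inflow : use the v-barrier
      have hApos := hApos' h12
      have hεL' : ε ≤ A * k 1 * m / ((1 + G) * k 0) := by
        have h := le_trans hεle (min_le_right εU εL)
        rwa [hεLdef, if_neg h12] at h
      obtain ⟨θ, hθdef⟩ : ∃ t : ℝ, t = ε * (1 + G)/(2*m) := ⟨_, rfl⟩
      have hθpos : 0 < θ := by rw [hθdef]; positivity
      have hθle : θ ≤ A * k 1 / (2 * k 0) := by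
        rw [hθdef]
        calc ε * (1+G)/(2*m) ≤ (A * k 1 * m / ((1 + G) * k 0)) * (1+G)/(2*m) := by
              gcongr
            _ = A * k 1 / (2 * k 0) := by field_simp
      have h2θr : 2 * θ * (k 0 / k 1) ≤ A := by
        have h9 : 2 * (A * k 1/(2*k 0)) * (k 0/k 1) = A := by field_simp
        have h8 : 2 * θ * (k 0/k 1) ≤ 2 * (A * k 1/(2*k 0)) * (k 0/k 1) := by
          apply mul_le_mul_of_nonneg_right (by linarith only [hθle]) (by positivity)
        linarith only [h8, h9]
      obtain ⟨v, hv⟩ : ∃ v : ℝ → ℝ, v = fun x => ρ x * (1 - ρ x) - J / k x := ⟨_, rfl⟩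
      obtain ⟨v', hv'⟩ : ∃ w : ℝ → ℝ, w = fun x => ρ' x * (1 - 2 * ρ x) + J * k' x / (k x)^2 :=
        ⟨_, rfl⟩
      have hvx : ∀ x, v x = ρ x * (1 - ρ x) - J / k x := fun x => by rw [hv]
      have hv'x : ∀ x, v' x = ρ' x * (1 - 2 * ρ x) + J * k' x / (k x)^2 := fun x => by rw [hv']
      have hvflux : ∀ x ∈ Icc (0:ℝ) 1, v x = ε * ρ' x := by
        intro x hx; rw [hvx]; exact (hflux x hx).symm
      have hvd : ∀ x ∈ Icc (0:ℝ) 1, HasDerivWithinAt v (v' x) (Icc 0 1) x := by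
        intro x hx
        rw [hv, hv'x]
        have hkne := (hkpos x hx).ne'
        have h1 : HasDerivWithinAt (fun y => ρ y * (1 - ρ y))
            (ρ' x * (1 - ρ x) + ρ x * (0 - ρ' x)) (Icc 0 1) x :=
          (hρd x hx).mul ((hasDerivWithinAt_const x _ 1).sub (hρd x hx))
        have h2 : HasDerivWithinAt (fun y => J / k y)
            ((0 * k x - J * k' x)/(k x)^2) (Icc 0 1) x :=
          (hasDerivWithinAt_const x _ J).div (hk x hx) hkne
        have h3 : HasDerivWithinAt (fun y => ρ y * (1 - ρ y) - J / k y)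
            (ρ' x * (1 - ρ x) + ρ x * (0 - ρ' x) - (0 * k x - J * k' x)/(k x)^2) (Icc 0 1) x :=
          h1.sub h2
        convert h3 using 1
        ring
      have hv'ge : ∀ x ∈ Icc (0:ℝ) 1, θ ≤ v x → 1 ≤ v' x := by
        intro x hx hθv
        have hρx := hρm x hx
        have hρ'x : ε * ρ' x = v x := (hvflux x hx).symm
        have hkx := hkpos x hx
        have hkx1 := hkanti x hx
        have hMx := hMb x hx
        rw [hv'x]
        have hterm : -G ≤ J * k' x / (k x)^2 := by
          have h2 : J * (-k' x) ≤ k 1 * M := by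
            apply mul_le_mul hJle hMx (by linarith only [hk'neg x hx]) hK1.le
          have hsq2 : k 1 * k 1 ≤ (k x)^2 := by
            rw [pow_two]
            exact mul_self_le_mul_self hK1.le hkx1
          have h1 : J * (-k' x) / (k x)^2 ≤ M / k 1 := by
            calc J * (-k' x) / (k x)^2 ≤ (k 1 * M) / (k 1 * k 1) :=
                  div_le_div₀ (by positivity) h2 (by positivity) hsq2
              _ = M / k 1 := by field_simp
          have h4 : J * k' x / (k x)^2 = -(J * (-k' x)/(k x)^2) := by ring
          rw [h4, hGdef]
          linarith only [h1]
        have hθε : θ * (2 * m) = ε * (1 + G) := by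
          rw [hθdef]; field_simp
        have h1ρ : 2 * m ≤ 1 - 2 * ρ x := by linarith only [hρx]
        have key1 : ε * (1 + G) ≤ ε * (ρ' x * (1 - 2 * ρ x)) := by
          calc ε * (1+G) = θ * (2*m) := hθε.symm
            _ ≤ v x * (1 - 2*ρ x) := by
                apply mul_le_mul hθv h1ρ (by linarith only [hm]) (le_trans hθpos.le hθv)
            _ = ε * (ρ' x * (1 - 2*ρ x)) := by rw [← hρ'x]; ring
        have key2 : 1 + G ≤ ρ' x * (1 - 2 * ρ x) := le_of_mul_le_mul_left key1 hε
        linarith only [hterm, key2]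
      by_cases hv0 : θ ≤ v 0
      · -- invariance of v ≥ θ, then derivative ≥ 1 forces v 1 > 1, impossible
        have hvinv := fwdInvariant h0mem hvd hv0
          (fun x hx _ hfx => by linarith only [hv'ge x hx (le_of_eq hfx.symm)])
        have hall : ∀ x ∈ Icc (0:ℝ) 1, θ ≤ v x := fun x hx => hvinv x ⟨hx.1, hx.2⟩
        have hmono2 : MonotoneOn (fun x => v x - x) (Icc (0:ℝ) 1) := by
          apply monoAux (f' := fun x => v' x - 1)
          · intro x hx
            exact (hvd x hx).sub ((hasDerivWithinAt_id x _).congr_deriv (by simp))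
          · intro x hx
            have h5 := hv'ge x hx (hall x hx)
            linarith only [h5]
        have h10 := hmono2 h0mem h1mem zero_le_one
        dsimp only at h10
        have hv1 : v 1 ≤ 1/4 := by
          rw [hvx]
          linarith only [sq_nonneg (ρ 1 - 1/2), hg1pos]
        linarith only [h10, hv0, hθpos, hv1]
      · push_neg at hv0
        by_cases hab : α * (1-α) ≤ J / k 0
        · have h1 : α*(1-α)*(k 0/k 1) ≤ (J/k 0)*(k 0/k 1) :=
            mul_le_mul_of_nonneg_right hab (by positivity)
          rw [← hg01] at h1
          rw [hAdef] at hApos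
          linarith only [h1, hg1, hδ, hApos]
        · push_neg at hab
          have hρ0eq : ρ 0 = 1 - (J/k 0)/α := by
            rw [eq_sub_iff_add_eq, ← hαρ0, mul_comm, mul_div_assoc, div_self hα0.ne',
              mul_one]
            ring
          have hv0eq : v 0 = (J/k 0) * (α*(1-α) - J/k 0)/α^2 := by
            rw [hvx, hρ0eq]; field_simp; ring
          have hg0half : α/2 ≤ J/k 0 := by
            linarith only [hg0, mul_nonneg hα0.le hm.le]
          have hα2 : α^2 ≤ α := by
            rw [pow_two]
            calc α * α ≤ α * 1 := mul_le_mul_of_nonneg_left hα1.le hα0.le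
              _ = α := mul_one α
          have hv0lb : (α*(1-α) - J/k 0)/2 ≤ v 0 := by
            rw [hv0eq, div_le_div_iff₀ (by norm_num) (by positivity)]
            have p1 : 0 ≤ (α*(1-α) - J/k 0) * (2*(J/k 0) - α^2) :=
              mul_nonneg (by linarith only [hab]) (by linarith only [hg0half, hα2])
            linarith only [p1]
          have hgap : α*(1-α) - J/k 0 < 2*θ := by linarith only [hv0, hv0lb]
          have h1 : (α*(1-α) - 2*θ) * (k 0/k 1) < (J/k 0)*(k 0/k 1) :=
            mul_lt_mul_of_pos_right (by linarith only [hgap]) (by positivity)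
          rw [← hg01] at h1
          have hAe : A = α * (1-α) * (k 0 / k 1) - 1/4 := hAdef
          linarith only [h1, h2θr, hg1, hδ, hAe]
  · -- upper bound : J / k 1 - 1/4 < δ
    by_contra hcon
    push_neg at hcon
    have hg1 : 1/4 + δ ≤ J / k 1 := by linarith only [hcon]
    have hεU' : ε ≤ δ/2 * l := by
      have h := le_trans hεle (min_le_left εU εL)
      rwa [hεUdef] at h
    obtain ⟨a, hadef⟩ : ∃ a : ℝ, a = 1 - l := ⟨_, rfl⟩
    have ha0 : 0 ≤ a := by rw [hadef]; linarith only [hl1]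
    have ha1 : a < 1 := by rw [hadef]; linarith only [hlpos]
    have hsubA : Icc a 1 ⊆ Icc (0:ℝ) 1 := Icc_subset_Icc ha0 le_rfl
    have hga : ∀ x ∈ Icc a (1:ℝ), 1/4 + δ/2 ≤ J / k x := by
      intro x hx
      have hx' : x ∈ Icc (0:ℝ) 1 := hsubA hx
      have hkx := hkpos x hx'
      have hkx1 := hkanti x hx'
      have h1 : J / k 1 - J / k x = J * (k x - k 1) / (k 1 * k x) := by
        field_simp
      have h2 : J * (k x - k 1) / (k 1 * k x) ≤ (k 1 * (M * (1 - x))) / (k 1 * k 1) := by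
        apply div_le_div₀
          (mul_nonneg hK1.le (mul_nonneg hMpos.le (by linarith only [hx'.2])))
          (mul_le_mul hJle (hkLip x hx') (by linarith only [hkx1]) hK1.le)
          (by positivity)
          (mul_le_mul_of_nonneg_left hkx1 hK1.le)
      have h3 : (k 1 * (M * (1 - x))) / (k 1 * k 1) = G * (1 - x) := by
        rw [hGdef]; field_simp
      have h4 : G * (1 - x) ≤ G * l := by
        apply mul_le_mul_of_nonneg_left ?_ hG.le
        rw [hadef] at hx
        linarith only [hx.1]
      linarith only [h1, h2, h3, h4, hg1, hlG]
    have hmono : MonotoneOn (fun x => -ρ x - (δ/(2*ε)) * x) (Icc a 1) := by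
      apply monoAux (f' := fun x => -ρ' x - δ/(2*ε))
      · intro x hx
        exact (((hρd x (hsubA hx)).mono hsubA).neg).sub
          (((hasDerivWithinAt_id x _).const_mul (δ/(2*ε))).congr_deriv (by simp [mul_comm]))
      · intro x hx
        have hf := hflux x (hsubA hx)
        have hg := hga x hx
        have hsq : ρ x * (1 - ρ x) ≤ 1/4 := by linarith only [sq_nonneg (ρ x - 1/2)]
        have h5 : ε * ρ' x ≤ -(δ/2) := by linarith only [hf, hsq, hg]
        have hid : ε * (-(δ/(2*ε))) = -(δ/2) := by field_simp
        have h6 : ρ' x ≤ -(δ/(2*ε)) := le_of_mul_le_mul_left (by rw [hid]; exact h5) hε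
        linarith only [h6]
    have hml := hmono (⟨le_rfl, ha1.le⟩ : a ∈ Icc a 1) (⟨ha1.le, le_rfl⟩ : (1:ℝ) ∈ Icc a 1) ha1.le
    dsimp only at hml
    rw [hadef] at hml
    have hρa : ρ a ≤ 1 := hρle1 a ⟨ha0, ha1.le⟩
    rw [hadef] at hρa
    have h7 : δ/(2*ε) * l < 1 := by linarith only [hml, hρa, hρ1pos]
    have h8 : δ * l < 2*ε := by
      rw [div_mul_eq_mul_div] at h7
      have h9 := (div_lt_one (by positivity : (0:ℝ) < 2*ε)).1 h7
      linarith only [h9]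
    linarith only [h8, hεU']

set_option maxHeartbeats 1000000 in
/-- Vanishing-viscosity limits of the flux and the boundary values in region G₃ ∪ G₄. -/
theorem vanishing_viscosity_region34_boundary
    (α β : ℝ) (k k' : ℝ → ℝ) (ρ ρ' : ℝ → ℝ → ℝ) (J : ℝ → ℝ)
    (hk : ∀ x ∈ Icc (0:ℝ) 1, HasDerivWithinAt k (k' x) (Icc 0 1) x)
    (hk'c : ContinuousOn k' (Icc 0 1))
    (hkpos : ∀ x ∈ Icc (0:ℝ) 1, 0 < k x)
    (hk'neg : ∀ x ∈ Icc (0:ℝ) 1, k' x < 0)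
    (hα0 : rhoF k < α) (hα1 : α < 1) (hαne : α ≠ 1 - rhoF k)
    (hβ1 : 1/2 < β) (hβ2 : β < 1)
    (hsol : ∀ ε > 0, IsClassicalSolution 1 ε α β k (ρ ε) (ρ' ε) (J ε)) :
    Tendsto J (nhdsWithin 0 (Ioi 0)) (nhds (k 1 / 4)) ∧
    Tendsto (fun ε => ρ ε 0) (nhdsWithin 0 (Ioi 0))
      (nhds (1 - k 1 / (4 * α * k 0))) ∧
    Tendsto (fun ε => ρ ε 1) (nhdsWithin 0 (Ioi 0)) (nhds (1 / (4 * β))) := by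
  have h0mem : (0:ℝ) ∈ Icc (0:ℝ) 1 := by norm_num
  have h1mem : (1:ℝ) ∈ Icc (0:ℝ) 1 := by norm_num
  have hK0 : 0 < k 0 := hkpos 0 h0mem
  have hK1 : 0 < k 1 := hkpos 1 h1mem
  have hβ0 : 0 < β := by linarith
  have hkc : ContinuousOn k (Icc (0:ℝ) 1) := fun x hx => (hk x hx).continuousWithinAt
  have hk10 : k 1 < k 0 := by
    obtain ⟨c, hc, hceq⟩ := exists_hasDerivAt_eq_slope k k' one_pos hkc
      (fun x hx => (hk x (Ioo_subset_Icc_self hx)).hasDerivAt (Icc_mem_nhds hx.1 hx.2))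
    have := hk'neg c (Ioo_subset_Icc_self hc)
    rw [hceq] at this
    simp at this
    linarith
  have hs0 : 0 ≤ 1 - k 1 / k 0 := by
    rw [sub_nonneg, div_le_one hK0]
    exact hk10.le
  have hs1 : Real.sqrt (1 - k 1 / k 0) ≤ 1 := by
    have h1 : 0 < k 1 / k 0 := div_pos hK1 hK0
    calc Real.sqrt (1 - k 1 / k 0) ≤ Real.sqrt 1 :=
          Real.sqrt_le_sqrt (by linarith)
      _ = 1 := Real.sqrt_one
  have hρF0 : 0 ≤ rhoF k := by
    simp only [rhoF]
    linarith
  have hα0' : 0 < α := lt_of_le_of_lt hρF0 hα0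
  have hαk : 1/2 ≤ α ∨ k 1 < 4 * (α * (1 - α)) * k 0 := by
    rcases le_or_gt (1/2) α with h | h
    · exact Or.inl h
    · right
      have hsq : Real.sqrt (1 - k 1 / k 0) ^ 2 = 1 - k 1 / k 0 := Real.sq_sqrt hs0
      have hρFval : rhoF k * (1 - rhoF k) = (k 1 / k 0)/4 := by
        simp only [rhoF]
        linear_combination (-1/4 : ℝ) * hsq
      have hρFhalf : rhoF k ≤ 1/2 := by
        simp only [rhoF]
        linarith only [Real.sqrt_nonneg (1 - k 1 / k 0)]
      have hfac : α*(1-α) - rhoF k * (1 - rhoF k) = (α - rhoF k) * (1 - α - rhoF k) := by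
        ring
      have h2 : 0 < (α - rhoF k) * (1 - α - rhoF k) :=
        mul_pos (by linarith only [hα0]) (by linarith only [h, hρFhalf])
      have h3 : (k 1 / k 0)/4 < α*(1-α) := by linarith only [hfac, h2, hρFval]
      have h4 := mul_lt_mul_of_pos_right h3 hK0
      have h5 : (k 1 / k 0)/4 * k 0 = k 1/4 := by field_simp
      linarith only [h4, h5]
  have hJlim : Tendsto J (𝓝[>] (0:ℝ)) (𝓝 (k 1 / 4)) := by
    rw [Metric.tendsto_nhdsWithin_nhds]
    intro δ hδ
    obtain ⟨ε0, hε0, hkey⟩ := key_bound hk hk'c hkpos hk'neg hα0' hα1 hαk hβ1 hβ2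
      (δ := δ / k 1) (div_pos hδ hK1)
    refine ⟨ε0, hε0, ?_⟩
    intro x hx hdist
    have hx0 : 0 < x := hx
    have hxle : x ≤ ε0 := by
      rw [Real.dist_eq, sub_zero, abs_of_pos hx0] at hdist
      exact hdist.le
    have h := hkey x hx0 hxle (ρ x) (ρ' x) (J x) (hsol x hx0)
    rw [Real.dist_eq]
    have hid : J x - k 1/4 = k 1 * (J x / k 1 - 1/4) := by field_simp
    rw [hid, abs_mul, abs_of_pos hK1]
    calc k 1 * |J x / k 1 - 1/4| < k 1 * (δ / k 1) := mul_lt_mul_of_pos_left h hK1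
      _ = δ := by field_simp
  refine ⟨hJlim, ?_, ?_⟩
  · have hev : (fun ε => 1 - J ε / (α * k 0)) =ᶠ[𝓝[>] (0:ℝ)] (fun ε => ρ ε 0) := by
      filter_upwards [self_mem_nhdsWithin] with ε hε
      obtain ⟨_, _, heq, hbc0, _⟩ := hsol ε hε
      have hJ0 : J ε = α * k 0 * (1 - ρ ε 0) := by
        have h := heq 0 h0mem
        rw [hbc0] at h
        rw [← h]; ring
      rw [hJ0]
      field_simp; ring
    have hlim2 : Tendsto (fun ε => 1 - J ε/(α*k 0)) (𝓝[>] (0:ℝ))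
        (𝓝 (1 - (k 1/4)/(α*k 0))) := tendsto_const_nhds.sub (hJlim.div_const _)
    have hval : 1 - (k 1/4)/(α*k 0) = 1 - k 1/(4*α*k 0) := by
      rw [div_div, ← mul_assoc]
    exact hval ▸ hlim2.congr' hev
  · have hev : (fun ε => J ε / (β * k 1)) =ᶠ[𝓝[>] (0:ℝ)] (fun ε => ρ ε 1) := by
      filter_upwards [self_mem_nhdsWithin] with ε hε
      obtain ⟨_, _, heq, _, hbc1⟩ := hsol ε hε
      have hJ1 : J ε = β * k 1 * ρ ε 1 := by
        have h := heq 1 h1mem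
        rw [hbc1] at h
        rw [← h]; ring
      rw [hJ1]
      field_simp
    have hlim2 : Tendsto (fun ε => J ε/(β*k 1)) (𝓝[>] (0:ℝ))
        (𝓝 ((k 1/4)/(β*k 1))) := hJlim.div_const _
    have hval : (k 1/4)/(β*k 1) = 1/(4*β) := by
      field_simp
    exact hval ▸ hlim2.congr' hev
end

section
/- Assume ρ_f < α < 1 with α ≠ 1 − ρ_f, and 1/2 < β < 1. Suppose that for every ε > 0, (ρ_ε, J_ε) is a classical solution of the area-averaged pedestrian boundary value problem on [0,1] with diffusion ε. Then for every fixed x ∈ (0,1), ρ_ε(x) → (1/2)·(1 + √(1 − k(1)/k(x))) as ε → 0⁺. -/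
open Set Filter

/-- strict monotonicity from a positive derivative (within an interval) -/
lemma myStrictMono {a b : ℝ} {w w' : ℝ → ℝ}
    (hw : ∀ x ∈ Icc a b, HasDerivWithinAt w (w' x) (Icc a b) x)
    (hpos : ∀ x ∈ Icc a b, 0 < w' x) : StrictMonoOn w (Icc a b) := by
  apply strictMonoOn_of_deriv_pos (convex_Icc a b)
    (fun x hx => (hw x hx).continuousWithinAt)
  intro x hx
  rw [interior_Icc] at hx
  have hx' : x ∈ Icc a b := ⟨hx.1.le, hx.2.le⟩
  have hd : HasDerivAt w (w' x) x :=
    (hw x hx').hasDerivAt (Icc_mem_nhds hx.1 hx.2)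
  rw [hd.deriv]; exact hpos x hx'

/-- growth estimate from a derivative lower bound -/
lemma myGrowth {a b m : ℝ} {w w' : ℝ → ℝ} (hab : a ≤ b)
    (hw : ∀ x ∈ Icc a b, HasDerivWithinAt w (w' x) (Icc a b) x)
    (hge : ∀ x ∈ Icc a b, m ≤ w' x) : m * (b - a) ≤ w b - w a := by
  have hmono : MonotoneOn (fun x => w x - m * x) (Icc a b) := by
    apply monotoneOn_of_deriv_nonneg (convex_Icc a b)
    · exact ContinuousOn.sub (fun x hx => (hw x hx).continuousWithinAt)
        ((continuous_const.mul continuous_id).continuousOn)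
    · intro x hx
      rw [interior_Icc] at hx
      have hx' : x ∈ Icc a b := ⟨hx.1.le, hx.2.le⟩
      have hd : HasDerivAt (fun x => w x - m * x) (w' x - m) x := by
        have h1 : HasDerivAt w (w' x) x :=
          (hw x hx').hasDerivAt (Icc_mem_nhds hx.1 hx.2)
        have h2 := h1.sub ((hasDerivAt_id x).const_mul m)
        simp only [mul_one] at h2
        exact h2
      exact hd.differentiableAt.differentiableWithinAt
    · intro x hx
      rw [interior_Icc] at hx
      have hx' : x ∈ Icc a b := ⟨hx.1.le, hx.2.le⟩
      have hd : HasDerivAt (fun x => w x - m * x) (w' x - m) x := by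
        have h1 : HasDerivAt w (w' x) x :=
          (hw x hx').hasDerivAt (Icc_mem_nhds hx.1 hx.2)
        have h2 := h1.sub ((hasDerivAt_id x).const_mul m)
        simp only [mul_one] at h2
        exact h2
      rw [hd.deriv]
      have := hge x hx'; linarith
  have := hmono (left_mem_Icc.2 hab) (right_mem_Icc.2 hab) hab
  simp only at this; linarith

/-- Forward invariance barrier lemma: if `w` starts nonnegative and has strictly
positive derivative whenever `w ∈ [-d, 0]`, then `w` stays nonnegative. -/
lemma barrier_forward {a b d m : ℝ} {w w' : ℝ → ℝ}
    (hm : 0 < m) (hd : 0 < d) (hab : a ≤ b)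
    (hw : ∀ x ∈ Icc a b, HasDerivWithinAt w (w' x) (Icc a b) x)
    (hband : ∀ x ∈ Icc a b, -d ≤ w x → w x ≤ 0 → m ≤ w' x)
    (hwa : 0 ≤ w a) : ∀ x ∈ Icc a b, 0 ≤ w x := by
  by_contra hcon
  push_neg at hcon
  obtain ⟨y, hy, hyneg⟩ := hcon
  have hcont : ContinuousOn w (Icc a b) := fun x hx => (hw x hx).continuousWithinAt
  set v : ℝ := max (w y) (-d/2) with hv
  have hv0 : v < 0 := max_lt hyneg (by linarith)
  have hvd : -d ≤ v := le_trans (by linarith) (le_max_right _ _)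
  have hwyv : w y ≤ v := le_max_left _ _
  have hay : a ≤ y := hy.1
  have hconty : ContinuousOn w (Icc a y) := hcont.mono (Icc_subset_Icc le_rfl hy.2)
  -- the set S
  set S : Set ℝ := {x | x ∈ Icc a y ∧ w x ≤ v} with hS
  have hSclosed : IsClosed S := by
    have : S = Icc a y ∩ w ⁻¹' (Iic v) := rfl
    rw [this]
    exact hconty.preimage_isClosed_of_isClosed isClosed_Icc isClosed_Iic
  have hSne : S.Nonempty := ⟨y, ⟨⟨hay, le_rfl⟩, hwyv⟩⟩
  have hSbdd : BddBelow S := ⟨a, fun x hx => hx.1.1⟩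
  set x2 : ℝ := sInf S with hx2
  have hx2S : x2 ∈ S := hSclosed.csInf_mem hSne hSbdd
  have hx2a : a ≤ x2 := hx2S.1.1
  have hx2y : x2 ≤ y := hx2S.1.2
  have hwx2v : w x2 ≤ v := hx2S.2
  have hx2b : x2 ∈ Icc a b := ⟨hx2a, le_trans hx2y hy.2⟩
  have hax2ne : a ≠ x2 := by
    intro h; rw [← h] at hwx2v; linarith
  have hax2 : a < x2 := lt_of_le_of_ne hx2a hax2ne
  -- w x2 = v
  have hwx2 : w x2 = v := by
    rcases eq_or_lt_of_le hwx2v with h | h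
    · exact h
    · exfalso
      have hivt := intermediate_value_Icc' (le_of_lt hax2)
        (hcont.mono (Icc_subset_Icc le_rfl hx2b.2))
      have hvmem : v ∈ Icc (w x2) (w a) := ⟨le_of_lt h, by linarith⟩
      obtain ⟨x', hx', hwx'⟩ := hivt hvmem
      have hx'S : x' ∈ S := ⟨⟨hx'.1, le_trans hx'.2 hx2y⟩, le_of_eq hwx'⟩
      have := csInf_le hSbdd hx'S
      have hx'x2 : x' = x2 := le_antisymm hx'.2 this
      rw [hx'x2] at hwx'; linarith
  -- w > v strictly before x2
  have hgtv : ∀ x ∈ Ico a x2, v < w x := by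
    intro x hx
    by_contra hle
    push_neg at hle
    have hxS : x ∈ S := ⟨⟨hx.1, le_trans hx.2.le hx2y⟩, hle⟩
    have := csInf_le hSbdd hxS
    exact absurd this (not_le.2 hx.2)
  -- the set T
  set T : Set ℝ := {x | x ∈ Icc a x2 ∧ 0 ≤ w x} with hT
  have hTclosed : IsClosed T := by
    have : T = Icc a x2 ∩ w ⁻¹' (Ici 0) := rfl
    rw [this]
    exact (hcont.mono (Icc_subset_Icc le_rfl hx2b.2)).preimage_isClosed_of_isClosed
      isClosed_Icc isClosed_Ici
  have hTne : T.Nonempty := ⟨a, ⟨⟨le_rfl, hx2a⟩, hwa⟩⟩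
  have hTbdd : BddAbove T := ⟨x2, fun x hx => hx.1.2⟩
  set x1 : ℝ := sSup T with hx1
  have hx1T : x1 ∈ T := hTclosed.csSup_mem hTne hTbdd
  have hx1a : a ≤ x1 := hx1T.1.1
  have hx1x2' : x1 ≤ x2 := hx1T.1.2
  have hwx1 : 0 ≤ w x1 := hx1T.2
  have hx1x2 : x1 < x2 := lt_of_le_of_ne hx1x2' (by intro h; rw [h] at hwx1; linarith)
  have hx1b : x1 ∈ Icc a b := ⟨hx1a, le_trans hx1x2' hx2b.2⟩
  -- w x1 = 0
  have hwx10 : w x1 = 0 := by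
    rcases eq_or_lt_of_le hwx1 with h | h
    · exact h.symm
    · exfalso
      have hivt := intermediate_value_Icc' (le_of_lt hx1x2)
        (hcont.mono (Icc_subset_Icc hx1a hx2b.2))
      have hmem : w x1 / 2 ∈ Icc (w x2) (w x1) := ⟨by linarith [hwx2], by linarith⟩
      obtain ⟨x', hx', hwx'⟩ := hivt hmem
      have hx'T : x' ∈ T := ⟨⟨le_trans hx1a hx'.1, hx'.2⟩,
        by rw [hwx']; linarith⟩
      have hle := le_csSup hTbdd hx'T
      have : x' = x1 := le_antisymm hle hx'.1
      rw [this] at hwx'; linarith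
  -- band on [x1, x2]
  have hsub : Icc x1 x2 ⊆ Icc a b := Icc_subset_Icc hx1a hx2b.2
  have hband' : ∀ x ∈ Icc x1 x2, 0 < w' x := by
    intro x hx
    have hxab : x ∈ Icc a b := hsub hx
    have hupper : w x ≤ 0 := by
      rcases eq_or_lt_of_le hx.1 with h | h
      · rw [← h, hwx10]
      · by_contra hpos
        push_neg at hpos
        have hxT : x ∈ T := ⟨⟨le_trans hx1a hx.1, hx.2⟩, hpos.le⟩
        have := le_csSup hTbdd hxT
        exact absurd this (not_le.2 h)
    have hlower : -d ≤ w x := by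
      rcases eq_or_lt_of_le hx.2 with h | h
      · rw [h, hwx2]; exact hvd
      · have : v < w x := hgtv x ⟨le_trans hx1a hx.1, h⟩
        linarith
    linarith [hband x hxab hlower hupper]
  have hmono : StrictMonoOn w (Icc x1 x2) :=
    myStrictMono (fun x hx => (hw x (hsub hx)).mono hsub) hband'
  have := hmono (left_mem_Icc.2 hx1x2.le) (right_mem_Icc.2 hx1x2.le) hx1x2
  rw [hwx10, hwx2] at this
  linarith

/-- Forced ascent: with derivative ≥ m > 0 on the region `w ≤ 0`, starting at `w a ≥ -C`,
after length `C/m` the function is nonnegative. -/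
lemma ascend {a b m C : ℝ} {w w' : ℝ → ℝ}
    (hm : 0 < m) (hC : 0 ≤ C) (hab : a ≤ b)
    (hw : ∀ x ∈ Icc a b, HasDerivWithinAt w (w' x) (Icc a b) x)
    (hlow : ∀ x ∈ Icc a b, w x ≤ 0 → m ≤ w' x)
    (hwa : -C ≤ w a) (hlen : C / m ≤ b - a) : 0 ≤ w b := by
  by_contra hb
  push_neg at hb
  have hneg : ∀ x ∈ Icc a b, w x < 0 := by
    intro x hx
    by_contra h0
    push_neg at h0
    have hsub : Icc x b ⊆ Icc a b := Icc_subset_Icc hx.1 le_rfl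
    have := barrier_forward (d := 1) hm one_pos hx.2
      (fun z hz => (hw z (hsub hz)).mono hsub)
      (fun z hz _ h2 => hlow z (hsub hz) h2) h0 b (right_mem_Icc.2 hx.2)
    linarith
  have hge : ∀ x ∈ Icc a b, m ≤ w' x := fun x hx => hlow x hx (hneg x hx).le
  have hgrow := myGrowth hab hw hge
  have hCb : C / m * m = C := div_mul_cancel₀ C (ne_of_gt hm)
  have : C ≤ m * (b - a) := by
    have := mul_le_mul_of_nonneg_right hlen hm.le
    rw [hCb] at this; linarith [this]
  have hwb := hneg b (right_mem_Icc.2 hab)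
  linarith

/-- Forced descent (mirror of `ascend`). -/
lemma descend {a b m C : ℝ} {w w' : ℝ → ℝ}
    (hm : 0 < m) (hC : 0 ≤ C) (hab : a ≤ b)
    (hw : ∀ x ∈ Icc a b, HasDerivWithinAt w (w' x) (Icc a b) x)
    (hhigh : ∀ x ∈ Icc a b, 0 ≤ w x → w' x ≤ -m)
    (hwa : w a ≤ C) (hlen : C / m ≤ b - a) : w b ≤ 0 := by
  have := ascend (w := fun x => -w x) (w' := fun x => -w' x) hm hC hab
    (fun x hx => (hw x hx).neg)
    (fun x hx h0 => by
      have h0' : -w x ≤ 0 := h0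
      have := hhigh x hx (by linarith)
      show m ≤ -w' x
      linarith)
    (by simpa using hwa) hlen
  have h2 : (0:ℝ) ≤ -w b := this
  linarith

/-- Upper forward invariance barrier (mirror of `barrier_forward`). -/
lemma barrier_forward_upper {a b d m : ℝ} {w w' : ℝ → ℝ}
    (hm : 0 < m) (hd : 0 < d) (hab : a ≤ b)
    (hw : ∀ x ∈ Icc a b, HasDerivWithinAt w (w' x) (Icc a b) x)
    (hband : ∀ x ∈ Icc a b, 0 ≤ w x → w x ≤ d → w' x ≤ -m)
    (hwa : w a ≤ 0) : ∀ x ∈ Icc a b, w x ≤ 0 := by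
  have := barrier_forward (w := fun x => -w x) (w' := fun x => -w' x) hm hd hab
    (fun x hx => (hw x hx).neg)
    (fun x hx h1 h2 => by
      have h1' : -d ≤ -w x := h1
      have h2' : -w x ≤ 0 := h2
      have := hband x hx (by linarith) (by linarith)
      show m ≤ -w' x
      linarith)
    (by simpa using hwa)
  intro x hx
  have h3 : (0:ℝ) ≤ -w x := this x hx
  linarith

noncomputable def rp (J c : ℝ) : ℝ := (1 + Real.sqrt (1 - 4*J/c))/2

lemma rp_half (J c : ℝ) : 1/2 ≤ rp J c := by
  unfold rp; have := Real.sqrt_nonneg (1 - 4*J/c); linarith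

lemma rp_le_one {J c : ℝ} (h : 0 ≤ 4*J/c) : rp J c ≤ 1 := by
  unfold rp
  have : Real.sqrt (1 - 4*J/c) ≤ 1 := Real.sqrt_le_one.mpr (by linarith)
  linarith

/-- the key factorization of the drift -/
lemma drift_eq {J c : ℝ} (hc : c ≠ 0) (h : 0 ≤ 1 - 4*J/c) (r : ℝ) :
    r*(1-r) - J/c = (rp J c - r)*(r - (1 - rp J c)) := by
  have hs : Real.sqrt (1 - 4*J/c) ^ 2 = 1 - 4*J/c := Real.sq_sqrt h
  have hJc : J/c = (1 - Real.sqrt (1 - 4*J/c)^2)/4 := by rw [hs]; field_simp; ring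
  rw [hJc]; unfold rp; ring

lemma sqrt_diff {A B g : ℝ} (hg : 0 < g) (hB : g ≤ B) (hAB : B ≤ A) :
    Real.sqrt A - Real.sqrt B ≤ (A - B)/(2*Real.sqrt g) := by
  have hsg : 0 < Real.sqrt g := Real.sqrt_pos.2 hg
  have hA0 : 0 ≤ A := by linarith
  have hB0 : 0 ≤ B := by linarith
  have hsa : Real.sqrt A ^ 2 = A := Real.sq_sqrt hA0
  have hsb : Real.sqrt B ^ 2 = B := Real.sq_sqrt hB0
  have h1 : Real.sqrt g ≤ Real.sqrt B := Real.sqrt_le_sqrt hB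
  have h2 : Real.sqrt B ≤ Real.sqrt A := Real.sqrt_le_sqrt hAB
  rw [le_div_iff₀ (by positivity)]
  nlinarith [Real.sqrt_nonneg A, Real.sqrt_nonneg B]

/-- monotonicity of the upper branch in `c` -/
lemma rp_mono {J c c' : ℝ} (hJ : 0 ≤ J) (hc : 0 < c) (hcc : c ≤ c') :
    rp J c ≤ rp J c' := by
  unfold rp
  have h4 : 4*J/c' ≤ 4*J/c := by
    apply div_le_div_of_nonneg_left (by linarith) hc hcc
  have := Real.sqrt_le_sqrt (show 1 - 4*J/c ≤ 1 - 4*J/c' by linarith)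
  linarith

/-- Lipschitz-type estimate for the upper branch -/
lemma rp_lip {J c c' g : ℝ} (hJ : 0 ≤ J) (hg : 0 < g) (hc : 0 < c) (hcc : c ≤ c')
    (hgap : g ≤ 1 - 4*J/c) :
    rp J c' - rp J c ≤ (4*J/c - 4*J/c') / (4*Real.sqrt g) := by
  unfold rp
  have h4 : 4*J/c' ≤ 4*J/c := div_le_div_of_nonneg_left (by linarith) hc hcc
  have := sqrt_diff hg hgap (show (1 - 4*J/c') ≥ 1 - 4*J/c by linarith)
  have h2 : 1 - 4*J/c' - (1 - 4*J/c) = 4*J/c - 4*J/c' := by ring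
  have hsg : 0 < Real.sqrt g := Real.sqrt_pos.2 hg
  have h3 : (4*J/c - 4*J/c')/(4*Real.sqrt g) = ((4*J/c - 4*J/c')/(2*Real.sqrt g))/2 := by
    rw [div_div]; ring_nf
  rw [h3]; rw [h2] at this; linarith

section SolFacts

variable {ε α β Jv : ℝ} {k R R' : ℝ → ℝ}

lemma ode_of_sol (hkpos : ∀ x ∈ Icc (0:ℝ) 1, 0 < k x)
    (hsol : IsClassicalSolution 1 ε α β k R R' Jv) :
    ∀ x ∈ Icc (0:ℝ) 1, ε * R' x = R x * (1 - R x) - Jv / k x := by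
  intro x hx
  have h3 := hsol.2.2.1 x hx
  have hk := hkpos x hx
  have : -ε * R' x + R x * (1 - R x) = Jv / k x := by
    field_simp
    linarith [h3]
  linarith

lemma J_eq0 (hsol : IsClassicalSolution 1 ε α β k R R' Jv) :
    Jv = k 0 * (α * (1 - R 0)) := by
  have h3 := hsol.2.2.1 0 ⟨le_rfl, zero_le_one⟩
  have hbc := hsol.2.2.2.1
  rw [← h3, hbc]

lemma J_eq1 (hsol : IsClassicalSolution 1 ε α β k R R' Jv) :
    Jv = k 1 * (β * R 1) := by
  have h3 := hsol.2.2.1 1 ⟨zero_le_one, le_rfl⟩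
  have hbc := hsol.2.2.2.2
  rw [← h3, hbc]

lemma J_pos (hε : 0 < ε) (hα : 0 < α) (hβ : 0 < β)
    (hkpos : ∀ x ∈ Icc (0:ℝ) 1, 0 < k x)
    (hkhi : ∀ x ∈ Icc (0:ℝ) 1, k x ≤ k 0)
    (hsol : IsClassicalSolution 1 ε α β k R R' Jv) : 0 < Jv := by
  have hode := ode_of_sol hkpos hsol
  have hd := hsol.1
  have hk0 : 0 < k 0 := hkpos 0 ⟨le_rfl, zero_le_one⟩
  have hk1 : 0 < k 1 := hkpos 1 ⟨zero_le_one, le_rfl⟩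
  have hJ0 := J_eq0 hsol
  have hJ1 := J_eq1 hsol
  rcases lt_trichotomy Jv 0 with hJ | hJ | hJ
  · -- Jv < 0 : then R 0 ≥ 1, and R stays ≥ 1, so Jv = k1 β R1 > 0, contradiction
    exfalso
    have hR0 : 1 ≤ R 0 := by
      by_contra hcon
      push_neg at hcon
      have h1 : 0 < k 0 * (α * (1 - R 0)) :=
        mul_pos hk0 (mul_pos hα (by linarith))
      linarith [hJ0 ▸ h1]
    have hbar := barrier_forward (a := 0) (b := 1) (d := 1/2)
      (m := (-Jv/(k 0))/ε) (w := fun x => R x - 1) (w' := R')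
      (div_pos (div_pos (by linarith) hk0) hε) (by norm_num) zero_le_one
      (fun x hx => (hd x hx).sub_const 1)
      (fun x hx h1 h2 => by
        have h1' : -(1/2 : ℝ) ≤ R x - 1 := h1
        have h2' : R x - 1 ≤ 0 := h2
        have h5 := hode x hx
        have h6 : -Jv/(k 0) ≤ -Jv/(k x) :=
          div_le_div_of_nonneg_left (by linarith) (hkpos x hx) (hkhi x hx)
        have h7 : 0 ≤ R x * (1 - R x) := by nlinarith
        have h8 : -(Jv / k x) = -Jv / k x := by ring
        rw [div_le_iff₀ hε, mul_comm]
        linarith)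
      (by show (0:ℝ) ≤ R 0 - 1; linarith)
    have hR1 : (0:ℝ) ≤ R 1 - 1 := hbar 1 ⟨zero_le_one, le_rfl⟩
    have : 0 < k 1 * (β * R 1) := mul_pos hk1 (mul_pos hβ (by linarith))
    linarith [hJ1 ▸ this]
  · -- Jv = 0 : then R 0 = 1 and R stays ≥ 1/2, so Jv > 0, contradiction
    exfalso
    have hR0 : R 0 = 1 := by
      have h0 : k 0 * (α * (1 - R 0)) = 0 := by rw [← hJ0, hJ]
      rcases mul_eq_zero.mp h0 with h | h
      · linarith
      · rcases mul_eq_zero.mp h with h' | h'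
        · linarith
        · linarith
    have hbar := barrier_forward (a := 0) (b := 1) (d := 1/4)
      (m := 3/(16*ε)) (w := fun x => R x - 1/2) (w' := R')
      (by positivity) (by norm_num) zero_le_one
      (fun x hx => (hd x hx).sub_const (1/2))
      (fun x hx h1 h2 => by
        have h1' : -(1/4 : ℝ) ≤ R x - 1/2 := h1
        have h2' : R x - 1/2 ≤ 0 := h2
        have h5 := hode x hx
        rw [hJ] at h5
        simp only [zero_div] at h5
        show 3/(16*ε) ≤ R' x
        rw [div_le_iff₀ (by positivity)]
        nlinarith)
      (by show (0:ℝ) ≤ R 0 - 1/2; linarith)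
    have hR1 : (0:ℝ) ≤ R 1 - 1/2 := hbar 1 ⟨zero_le_one, le_rfl⟩
    have : 0 < k 1 * (β * R 1) := mul_pos hk1 (mul_pos hβ (by linarith))
    linarith [hJ1 ▸ this]
  · exact hJ

lemma R_le_one (hε : 0 < ε) (hα : 0 < α) (hβ : 0 < β)
    (hkpos : ∀ x ∈ Icc (0:ℝ) 1, 0 < k x)
    (hkhi : ∀ x ∈ Icc (0:ℝ) 1, k x ≤ k 0)
    (hsol : IsClassicalSolution 1 ε α β k R R' Jv) :
    ∀ x ∈ Icc (0:ℝ) 1, R x ≤ 1 := by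
  have hode := ode_of_sol hkpos hsol
  have hd := hsol.1
  have hk0 : 0 < k 0 := hkpos 0 ⟨le_rfl, zero_le_one⟩
  have hJ := J_pos hε hα hβ hkpos hkhi hsol
  have hJ0 := J_eq0 hsol
  have hR0 : R 0 < 1 := by
    by_contra hcon
    push_neg at hcon
    have h1 : Jv = -(k 0 * (α * (R 0 - 1))) := by rw [hJ0]; ring
    have h2 : 0 ≤ k 0 * (α * (R 0 - 1)) :=
      mul_nonneg hk0.le (mul_nonneg hα.le (by linarith))
    linarith
  have hbar := barrier_forward (a := 0) (b := 1) (d := 1)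
    (m := Jv/(k 0)/ε) (w := fun x => 1 - R x) (w' := fun x => -R' x)
    (div_pos (div_pos hJ hk0) hε) one_pos zero_le_one
    (fun x hx => (hd x hx).const_sub 1)
    (fun x hx h1 h2 => by
      have h1' : (-1 : ℝ) ≤ 1 - R x := h1
      have h2' : 1 - R x ≤ 0 := h2
      have h5 := hode x hx
      have h6 : Jv/(k 0) ≤ Jv/(k x) :=
        div_le_div_of_nonneg_left hJ.le (hkpos x hx) (hkhi x hx)
      have h7 : R x * (1 - R x) ≤ 0 := by nlinarith
      show Jv/(k 0)/ε ≤ -R' x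
      rw [div_le_iff₀ hε, mul_comm]
      linarith)
    (by show (0:ℝ) ≤ 1 - R 0; linarith)
  intro x hx
  have h9 : (0:ℝ) ≤ 1 - R x := hbar x hx
  linarith

end SolFacts

section Track

variable {k : ℝ → ℝ} {K : ℝ}

set_option maxHeartbeats 1600000 in
/-- The main tracking lemma: in the vanishing-viscosity limit, a solution entering above
the lower (repelling) branch follows the upper (attracting) branch of the critical
manifold, uniformly over admissible currents `Jv`. -/
lemma track (hK : 0 < K)
    (hkpos : ∀ x ∈ Icc (0:ℝ) 1, 0 < k x)
    (hkanti : AntitoneOn k (Icc (0:ℝ) 1))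
    (hklip : ∀ x y, x ∈ Icc (0:ℝ) 1 → y ∈ Icc (0:ℝ) 1 → x ≤ y → k x - k y ≤ K * (y - x))
    (x1 g e : ℝ) (hx1 : 0 < x1) (hx11 : x1 ≤ 1) (hg : 0 < g)
    (he : 0 < e) (he1 : e ≤ 1) (he2 : 2*e ≤ Real.sqrt g) :
    ∃ ε0 > 0, ∀ ε Jv (R R' : ℝ → ℝ), 0 < ε → ε ≤ ε0 →
      (∀ x ∈ Icc (0:ℝ) 1, HasDerivWithinAt R (R' x) (Icc 0 1) x) →
      (∀ x ∈ Icc (0:ℝ) 1, ε * R' x = R x * (1 - R x) - Jv / k x) →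
      (∀ x ∈ Icc (0:ℝ) 1, R x ≤ 1) →
      0 < Jv → Jv ≤ k 1 →
      (∀ y ∈ Icc (0:ℝ) x1, 4*Jv/(k y) ≤ 1 - g) →
      (1 - rp Jv (k 0)) + e ≤ R 0 →
      rp Jv (k x1) - e ≤ R x1 ∧ R x1 ≤ rp Jv (k x1) + e := by
  have hk1 : 0 < k 1 := hkpos 1 ⟨zero_le_one, le_rfl⟩
  set sg : ℝ := Real.sqrt g with hsgdef
  have hsg : 0 < sg := Real.sqrt_pos.2 hg
  -- number of steps
  set n : ℕ := ⌈4*K*x1/(k 1*sg*e)⌉₊ + 1 with hndef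
  have hnpos : 0 < (n:ℝ) := by positivity
  set h : ℝ := x1 / n with hhdef
  have hh : 0 < h := by positivity
  -- step is short enough: K * h / (k 1 * sg) ≤ e/4
  have hstep_small : K * h / (k 1 * sg) ≤ e/4 := by
    have hv : 0 < 4*K*x1/(k 1*sg*e) := by positivity
    have hvn : 4*K*x1/(k 1*sg*e) ≤ (n:ℝ) := by
      have h1 : (⌈4*K*x1/(k 1*sg*e)⌉₊ : ℝ) ≤ (n:ℝ) := by
        exact_mod_cast Nat.le_succ _
      exact le_trans (Nat.le_ceil _) h1
    have h2 : h ≤ x1 / (4*K*x1/(k 1*sg*e)) := by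
      apply div_le_div_of_nonneg_left hx1.le hv hvn
    have h3 : x1 / (4*K*x1/(k 1*sg*e)) = k 1*sg*e/(4*K) := by
      field_simp
    rw [h3] at h2
    rw [div_le_iff₀ (by positivity)]
    calc K * h ≤ K * (k 1*sg*e/(4*K)) := by
          apply mul_le_mul_of_nonneg_left h2 hK.le
      _ = e/4 * (k 1 * sg) := by field_simp
  refine ⟨h * min (e^2) (min (e*sg) sg) / 8, by positivity, ?_⟩
  intro ε Jv R R' hε hε0 hd hode hRle1 hJv hJk1 hgap hentry
  -- basic per-point facts
  have mem01 : ∀ {t : ℝ}, t ∈ Icc 0 x1 → t ∈ Icc (0:ℝ) 1 :=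
    fun ht => ⟨ht.1, le_trans ht.2 hx11⟩
  have hky : ∀ y ∈ Icc (0:ℝ) x1, 0 < k y := fun y hy => hkpos y (mem01 hy)
  have hkmono : ∀ a b, a ∈ Icc (0:ℝ) x1 → b ∈ Icc (0:ℝ) x1 → a ≤ b → k b ≤ k a :=
    fun a b ha hb hab => hkanti (mem01 ha) (mem01 hb) hab
  have hk1le : ∀ y ∈ Icc (0:ℝ) x1, k 1 ≤ k y :=
    fun y hy => hkanti (mem01 hy) ⟨zero_le_one, le_rfl⟩ (le_trans hy.2 hx11)
  have hargpos : ∀ y ∈ Icc (0:ℝ) x1, g ≤ 1 - 4*Jv/(k y) :=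
    fun y hy => by linarith [hgap y hy]
  have hrp21 : ∀ y ∈ Icc (0:ℝ) x1, sg ≤ 2*rp Jv (k y) - 1 := by
    intro y hy
    have h1 : 2*rp Jv (k y) - 1 = Real.sqrt (1 - 4*Jv/(k y)) := by unfold rp; ring
    rw [h1, hsgdef]
    exact Real.sqrt_le_sqrt (by linarith [hgap y hy])
  have hrple1 : ∀ y ∈ Icc (0:ℝ) x1, rp Jv (k y) ≤ 1 := by
    intro y hy
    exact rp_le_one (div_nonneg (by linarith) (hky y hy).le)
  have hdrift : ∀ y ∈ Icc (0:ℝ) x1,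
      ε * R' y = (rp Jv (k y) - R y) * (R y - (1 - rp Jv (k y))) := by
    intro y hy
    rw [hode y (mem01 hy)]
    rw [drift_eq (ne_of_gt (hky y hy)) (by linarith [hargpos y hy] : 0 ≤ 1 - 4*Jv/(k y))]
  -- branch variation over a short step
  have hvar : ∀ a b, a ∈ Icc (0:ℝ) x1 → b ∈ Icc (0:ℝ) x1 → a ≤ b → b - a ≤ h →
      rp Jv (k b) ≤ rp Jv (k a) ∧ rp Jv (k a) - rp Jv (k b) ≤ e/4 := by
    intro a b ha hb hab hba
    have hkb : 0 < k b := hky b hb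
    have hka : 0 < k a := hky a ha
    have hkba : k b ≤ k a := hkmono a b ha hb hab
    constructor
    · exact rp_mono hJv.le hkb hkba
    · have hlip := rp_lip hJv.le hg hkb hkba (hargpos b hb)
      have hnum : 4*Jv/(k b) - 4*Jv/(k a) ≤ 4*K*(b-a)/(k 1) := by
        have h1 : 4*Jv/(k b) - 4*Jv/(k a) = 4*Jv*(k a - k b)/((k b)*(k a)) := by
          field_simp
        rw [h1]
        have h2 : k a - k b ≤ K * (b - a) := hklip a b (mem01 ha) (mem01 hb) hab
        have h3 : 4*Jv*(k a - k b) ≤ 4*(k 1)*(K*(b-a)) := by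
          have hba0 : 0 ≤ k a - k b := by linarith
          nlinarith [mul_nonneg hJv.le hba0]
        have h4 : (k 1)*(k 1) ≤ (k b)*(k a) :=
          mul_le_mul (hk1le b hb) (hk1le a ha) hk1.le (by linarith)
        calc 4*Jv*(k a - k b)/((k b)*(k a)) ≤ 4*(k 1)*(K*(b-a))/((k 1)*(k 1)) := by
              apply div_le_div₀ (mul_nonneg (by linarith : (0:ℝ) ≤ 4*(k 1))
                (mul_nonneg hK.le (by linarith))) h3 (mul_pos hk1 hk1) h4
          _ = 4*K*(b-a)/(k 1) := by field_simp
      have h5 : 4*K*(b-a)/(k 1) / (4*sg) ≤ e/4 := by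
        have h6 : 4*K*(b-a)/(k 1)/(4*sg) = K*(b-a)/(k 1 * sg) := by
          field_simp
        rw [h6]
        calc K*(b-a)/(k 1*sg) ≤ K*h/(k 1*sg) := by
              apply div_le_div_of_nonneg_right _ (by positivity)
              exact mul_le_mul_of_nonneg_left hba hK.le
          _ ≤ e/4 := hstep_small
      calc rp Jv (k a) - rp Jv (k b) ≤ (4*Jv/(k b) - 4*Jv/(k a))/(4*sg) := hlip
        _ ≤ 4*K*(b-a)/(k 1)/(4*sg) := by
            apply div_le_div_of_nonneg_right hnum (by positivity)
        _ ≤ e/4 := h5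
  -- the lower-chain step
  have hstep : ∀ a b, a ∈ Icc (0:ℝ) x1 → b ∈ Icc (0:ℝ) x1 → a ≤ b → b - a = h →
      (1 - rp Jv (k a)) + e ≤ R a → rp Jv (k b) - e/2 ≤ R b := by
    intro a b ha hb hab hba hRa
    have hsub : Icc a b ⊆ Icc (0:ℝ) 1 :=
      Icc_subset_Icc (mem01 ha).1 (mem01 hb).2
    have hsubx : Icc a b ⊆ Icc (0:ℝ) x1 := Icc_subset_Icc ha.1 hb.2
    have hvab := hvar a b ha hb hab (le_of_eq hba)
    -- Step 1: invariance above (1 - rp(k b)) + e/2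
    have hinv : ∀ t ∈ Icc a b, (1 - rp Jv (k b)) + e/2 ≤ R t := by
      have hbar := barrier_forward (a := a) (b := b) (d := e/4)
        (m := e*sg/(8*ε)) (w := fun t => R t - ((1 - rp Jv (k b)) + e/2)) (w' := R')
        (div_pos (mul_pos he hsg) (by linarith)) (by linarith) hab
        (fun t ht => ((hd t (hsub ht)).mono hsub).sub_const _)
        (fun t ht h1 h2 => by
          have h1' : -(e/4) ≤ R t - ((1 - rp Jv (k b)) + e/2) := h1
          have h2' : R t - ((1 - rp Jv (k b)) + e/2) ≤ 0 := h2
          have htx : t ∈ Icc (0:ℝ) x1 := hsubx ht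
          have hvt := hvar t b htx hb ht.2 (by linarith [ht.1])
          have hlo : e/4 ≤ R t - (1 - rp Jv (k t)) := by linarith [hvt.1]
          have hhi : sg/2 ≤ rp Jv (k t) - R t := by
            have := hrp21 t htx
            have h3 : rp Jv (k t) - rp Jv (k b) ≤ e/4 := hvt.2
            linarith
          have hdr := hdrift t htx
          have h9 : e*sg/8 ≤ ε * R' t := by nlinarith
          show e*sg/(8*ε) ≤ R' t
          rw [div_le_iff₀ (show (0:ℝ) < 8*ε by linarith)]
          nlinarith)
        (by
          show (0:ℝ) ≤ R a - ((1 - rp Jv (k b)) + e/2)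
          have := hvab.2
          linarith)
      intro t ht
      have := hbar t ht
      have h2 : (0:ℝ) ≤ R t - ((1 - rp Jv (k b)) + e/2) := this
      linarith
    -- Step 2: forced ascent above rp(k b) - e/2
    have hasc := ascend (a := a) (b := b) (m := e^2/(4*ε)) (C := 1)
      (w := fun t => R t - (rp Jv (k b) - e/2)) (w' := R')
      (div_pos (pow_pos he 2) (by linarith)) zero_le_one hab
      (fun t ht => ((hd t (hsub ht)).mono hsub).sub_const _)
      (fun t ht h2 => by
        have h2' : R t - (rp Jv (k b) - e/2) ≤ 0 := h2
        have htx : t ∈ Icc (0:ℝ) x1 := hsubx ht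
        have hvt := hvar t b htx hb ht.2 (by linarith [ht.1])
        have hhi : e/2 ≤ rp Jv (k t) - R t := by linarith [hvt.1]
        have hlo : e/2 ≤ R t - (1 - rp Jv (k t)) := by
          have h3 := hinv t ht
          have h4 : rp Jv (k t) - rp Jv (k b) ≤ e/4 := hvt.2
          linarith
        have hdr := hdrift t htx
        have h9 : e^2/4 ≤ ε * R' t := by nlinarith
        show e^2/(4*ε) ≤ R' t
        rw [div_le_iff₀ (show (0:ℝ) < 4*ε by linarith)]
        nlinarith)
      (by
        show -(1:ℝ) ≤ R a - (rp Jv (k b) - e/2)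
        have h1 : 0 ≤ 1 - rp Jv (k a) := by linarith [hrple1 a ha]
        have h2 : rp Jv (k b) ≤ 1 := hrple1 b hb
        linarith)
      (by
        rw [hba]
        have heq : (1:ℝ)/(e^2/(4*ε)) = 4*ε/e^2 := by field_simp
        rw [heq, div_le_iff₀ (show (0:ℝ) < e^2 by positivity)]
        have h10 : ε ≤ h * e^2 / 8 := by
          refine le_trans hε0 ?_
          have h11 : min (e^2) (min (e*sg) sg) ≤ e^2 := min_le_left _ _
          have h12 := mul_le_mul_of_nonneg_left h11 hh.le
          linarith
        linarith)
    have : (0:ℝ) ≤ R b - (rp Jv (k b) - e/2) := hasc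
    linarith
  -- the upper-chain step
  have hstep' : ∀ a b (C : ℝ), 0 ≤ C → C ≤ 2 →
      a ∈ Icc (0:ℝ) x1 → b ∈ Icc (0:ℝ) x1 → a ≤ b → b - a = h →
      R a ≤ rp Jv (k a) + e/4 + C → R b ≤ rp Jv (k b) + e/2 := by
    intro a b C hC0 hC2 ha hb hab hba hRa
    have hsub : Icc a b ⊆ Icc (0:ℝ) 1 :=
      Icc_subset_Icc (mem01 ha).1 (mem01 hb).2
    have hsubx : Icc a b ⊆ Icc (0:ℝ) x1 := Icc_subset_Icc ha.1 hb.2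
    have hvab := hvar a b ha hb hab (le_of_eq hba)
    have hdesc := descend (a := a) (b := b) (m := e*sg/(4*ε)) (C := C)
      (w := fun t => R t - (rp Jv (k a) + e/4)) (w' := R')
      (div_pos (mul_pos he hsg) (by linarith)) hC0 hab
      (fun t ht => ((hd t (hsub ht)).mono hsub).sub_const _)
      (fun t ht h2 => by
        have h2' : 0 ≤ R t - (rp Jv (k a) + e/4) := h2
        have htx : t ∈ Icc (0:ℝ) x1 := hsubx ht
        have hvt := hvar a t ha htx ht.1 (by linarith [ht.2])
        have hhi : rp Jv (k t) - R t ≤ -(e/4) := by linarith [hvt.1]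
        have hlo : sg ≤ R t - (1 - rp Jv (k t)) := by
          have := hrp21 t htx
          linarith
        have hdr := hdrift t htx
        have hneg : ε * R' t ≤ -(e*sg/4) := by nlinarith
        show R' t ≤ -(e*sg/(4*ε))
        have heq : -(e*sg/(4*ε)) = (-(e*sg/4))/ε := by field_simp
        rw [heq, le_div_iff₀ hε]
        nlinarith)
      (by
        show R a - (rp Jv (k a) + e/4) ≤ C
        linarith)
      (by
        rw [hba]
        have heq : C/(e*sg/(4*ε)) = 4*C*ε/(e*sg) := by
          rw [div_eq_div_iff (ne_of_gt (div_pos (mul_pos he hsg) (by linarith)))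
            (ne_of_gt (mul_pos he hsg))]
          field_simp
        rw [heq, div_le_iff₀ (mul_pos he hsg)]
        have h10 : ε ≤ h * (e*sg) / 8 := by
          refine le_trans hε0 ?_
          have h11 : min (e^2) (min (e*sg) sg) ≤ e*sg :=
            le_trans (min_le_right _ _) (min_le_left _ _)
          have h12 := mul_le_mul_of_nonneg_left h11 hh.le
          linarith
        nlinarith)
    have h8 : R b - (rp Jv (k a) + e/4) ≤ 0 := hdesc
    linarith [hvab.1, hvab.2]
  -- partition points
  have hn1 : 1 ≤ n := Nat.le_add_left 1 _
  set xi : ℕ → ℝ := fun i => x1 * i / n with hxidef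
  have hxi0 : xi 0 = 0 := by simp [hxidef]
  have hxin : xi n = x1 := by
    show x1 * n / n = x1
    field_simp
  have hximem : ∀ i : ℕ, i ≤ n → xi i ∈ Icc (0:ℝ) x1 := by
    intro i hi
    constructor
    · exact div_nonneg (mul_nonneg hx1.le (Nat.cast_nonneg i)) hnpos.le
    · show x1 * i / n ≤ x1
      rw [div_le_iff₀ hnpos]
      have hcast : (i:ℝ) ≤ (n:ℝ) := Nat.cast_le.2 hi
      nlinarith [(Nat.cast_nonneg i : (0:ℝ) ≤ (i:ℝ))]
  have hxisucc : ∀ i : ℕ, xi (i+1) - xi i = h := by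
    intro i
    show x1 * (↑(i+1)) / n - x1 * i / n = x1 / n
    push_cast
    field_simp
    ring
  have hxile : ∀ i : ℕ, xi i ≤ xi (i+1) := fun i => by nlinarith [hxisucc i, hh]
  -- the lower chain
  have hlowchain : ∀ i : ℕ, i ≤ n →
      ((1 - rp Jv (k (xi i))) + e ≤ R (xi i)) ∧
      (1 ≤ i → rp Jv (k (xi i)) - e/2 ≤ R (xi i)) := by
    intro i
    induction i with
    | zero =>
      intro _
      rw [hxi0]
      exact ⟨hentry, by omega⟩
    | succ j ih =>
      intro hj
      have hPj := (ih (by omega)).1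
      have hq := hstep (xi j) (xi (j+1)) (hximem j (by omega)) (hximem (j+1) hj)
        (hxile j) (hxisucc j) hPj
      have h21 := hrp21 (xi (j+1)) (hximem (j+1) hj)
      constructor
      · linarith
      · intro _; exact hq
  -- the upper chain
  have hupchain : ∀ i : ℕ, 1 ≤ i → i ≤ n → R (xi i) ≤ rp Jv (k (xi i)) + e/2 := by
    intro i
    induction i with
    | zero => omega
    | succ j ih =>
      intro _ hj
      rcases Nat.eq_zero_or_pos j with hj0 | hj0
      · -- base step from x = 0
        subst hj0
        have hmem1 : xi 1 ∈ Icc (0:ℝ) x1 := hximem 1 hn1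
        have hmem0 : xi 0 ∈ Icc (0:ℝ) x1 := hximem 0 (by omega)
        apply hstep' (xi 0) (xi 1) (1/2) (by norm_num) (by norm_num)
          hmem0 hmem1 (hxile 0) (hxisucc 0)
        rw [hxi0]
        have hrphalf := rp_half Jv (k 0)
        have hR0le := hRle1 0 ⟨le_rfl, zero_le_one⟩
        linarith
      · have hUj := ih hj0 (by omega)
        apply hstep' (xi j) (xi (j+1)) (e/4) (by linarith) (by linarith)
          (hximem j (by omega)) (hximem (j+1) hj) (hxile j) (hxisucc j)
        linarith
  -- conclusion
  have hfin1 := (hlowchain n le_rfl).2 hn1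
  have hfin2 := hupchain n hn1 le_rfl
  rw [hxin] at hfin1 hfin2
  exact ⟨by linarith, by linarith⟩

end Track

lemma sqrt_diff_abs {A B g : ℝ} (hg : 0 < g) (hA : g ≤ A) (hB : g ≤ B) :
    |Real.sqrt A - Real.sqrt B| ≤ |A - B|/(2*Real.sqrt g) := by
  rcases le_total B A with h | h
  · rw [abs_of_nonneg (by linarith [Real.sqrt_le_sqrt h] :
      (0:ℝ) ≤ Real.sqrt A - Real.sqrt B), abs_of_nonneg (by linarith : (0:ℝ) ≤ A - B)]
    exact sqrt_diff hg hB h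
  · rw [abs_of_nonpos (by linarith [Real.sqrt_le_sqrt h] :
      Real.sqrt A - Real.sqrt B ≤ 0), abs_of_nonpos (by linarith : A - B ≤ 0)]
    have := sqrt_diff hg hA h
    have h2 : -(A - B) = B - A := by ring
    rw [h2]
    linarith

lemma k_facts (k k' : ℝ → ℝ)
    (hk : ∀ x ∈ Icc (0:ℝ) 1, HasDerivWithinAt k (k' x) (Icc 0 1) x)
    (hk'c : ContinuousOn k' (Icc (0:ℝ) 1))
    (hk'neg : ∀ x ∈ Icc (0:ℝ) 1, k' x < 0) :
    StrictAntiOn k (Icc (0:ℝ) 1) ∧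
    ∃ K, 0 < K ∧ ∀ x y, x ∈ Icc (0:ℝ) 1 → y ∈ Icc (0:ℝ) 1 → x ≤ y →
      k x - k y ≤ K*(y-x) := by
  have hcont : ContinuousOn k (Icc (0:ℝ) 1) := fun x hx => (hk x hx).continuousWithinAt
  constructor
  · apply strictAntiOn_of_deriv_neg (convex_Icc 0 1) hcont
    intro x hx
    rw [interior_Icc] at hx
    have hx' : x ∈ Icc (0:ℝ) 1 := ⟨hx.1.le, hx.2.le⟩
    have hdd : HasDerivAt k (k' x) x := (hk x hx').hasDerivAt (Icc_mem_nhds hx.1 hx.2)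
    rw [hdd.deriv]
    exact hk'neg x hx'
  · obtain ⟨C, hC⟩ := (isCompact_Icc).exists_bound_of_continuousOn hk'c
    refine ⟨max C 1, lt_of_lt_of_le one_pos (le_max_right _ _), ?_⟩
    intro x y hx hy hxy
    have hsub : Icc x y ⊆ Icc (0:ℝ) 1 := Icc_subset_Icc hx.1 hy.2
    have hgrow := myGrowth (m := -(max C 1)) hxy
      (fun z hz => (hk z (hsub hz)).mono hsub)
      (fun z hz => by
        have h1 := hC z (hsub hz)
        have h2 : |k' z| ≤ max C 1 := le_trans (by simpa using h1) (le_max_left _ _)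
        have := abs_le.1 h2
        linarith [this.1])
    linarith

section Bounds

variable {k : ℝ → ℝ} {K α β : ℝ}

/-- The current is asymptotically at most `k 1 / 4 + δ`. -/
lemma J_upper (hK : 0 < K)
    (hkpos : ∀ x ∈ Icc (0:ℝ) 1, 0 < k x)
    (hkanti : AntitoneOn k (Icc (0:ℝ) 1))
    (hklip : ∀ x y, x ∈ Icc (0:ℝ) 1 → y ∈ Icc (0:ℝ) 1 → x ≤ y → k x - k y ≤ K*(y-x))
    (hα : 0 < α) (hβ : 0 < β) (δ : ℝ) (hδ : 0 < δ) (hδ1 : δ ≤ 1) :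
    ∃ ε0 > 0, ∀ ε Jv (R R' : ℝ → ℝ), 0 < ε → ε ≤ ε0 →
      IsClassicalSolution 1 ε α β k R R' Jv → Jv ≤ k 1/4 + δ := by
  have hk0 : 0 < k 0 := hkpos 0 ⟨le_rfl, zero_le_one⟩
  have hk1 : 0 < k 1 := hkpos 1 ⟨zero_le_one, le_rfl⟩
  have hk10 : k 1 ≤ k 0 := hkanti ⟨le_rfl, zero_le_one⟩ ⟨zero_le_one, le_rfl⟩ zero_le_one
  set η1 : ℝ := min 1 (δ/K) with hη1def
  have hη1 : 0 < η1 := lt_min one_pos (by positivity)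
  have hη11 : η1 ≤ 1 := min_le_left _ _
  set δ2 : ℝ := (3*δ/4)/(k 0+1) with hδ2def
  have hδ2 : 0 < δ2 := by positivity
  refine ⟨η1 * δ2, by positivity, ?_⟩
  intro ε Jv R R' hε hε0 hsol
  by_contra hcon
  push_neg at hcon
  have hode := ode_of_sol hkpos hsol
  have hd := hsol.1
  have hRle1 := R_le_one hε hα hβ hkpos
    (fun x hx => hkanti ⟨le_rfl, zero_le_one⟩ hx hx.1) hsol
  have hJpos := J_pos hε hα hβ hkpos
    (fun x hx => hkanti ⟨le_rfl, zero_le_one⟩ hx hx.1) hsol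
  have hJ1 := J_eq1 hsol
  have hR1pos : 0 < R 1 := by
    by_contra hR1
    push_neg at hR1
    nlinarith [mul_nonneg hk1.le (mul_nonneg hβ.le (neg_nonneg.2 hR1))]
  -- on [1-η1, 1] the drift is strongly negative
  set a : ℝ := 1 - η1 with hadef
  have ha0 : 0 ≤ a := by rw [hadef]; linarith
  have ha1 : a ≤ 1 := by rw [hadef]; linarith
  have hsub : Icc a 1 ⊆ Icc (0:ℝ) 1 := Icc_subset_Icc ha0 le_rfl
  have hkx : ∀ x ∈ Icc a 1, k x ≤ k 1 + δ := by
    intro x hx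
    have h1 : k x ≤ k a := hkanti ⟨ha0, ha1⟩ (hsub hx) hx.1
    have h2 : k a - k 1 ≤ K*(1-a) := hklip a 1 ⟨ha0, ha1⟩ ⟨zero_le_one, le_rfl⟩ ha1
    have h3 : K*(1-a) ≤ δ := by
      have h4 : 1 - a = η1 := by rw [hadef]; ring
      rw [h4]
      have h5 : η1 ≤ δ/K := min_le_right _ _
      calc K*η1 ≤ K*(δ/K) := mul_le_mul_of_nonneg_left h5 hK.le
        _ = δ := by field_simp
    linarith
  have hdrop : ∀ x ∈ Icc a 1, 1/4 + δ2 ≤ Jv/(k x) := by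
    intro x hx
    have hkxpos := hkpos x (hsub hx)
    have h1 : (k 1/4 + δ)/(k 1 + δ) ≤ Jv/(k x) := by
      apply div_le_div₀ hJpos.le hcon.le hkxpos (hkx x hx)
    have h2 : 1/4 + δ2 ≤ (k 1/4 + δ)/(k 1 + δ) := by
      rw [le_div_iff₀ (by linarith)]
      have h3 : δ2 ≤ (3*δ/4)/(k 1+δ) := by
        apply div_le_div_of_nonneg_left (by linarith) (by linarith) (by linarith)
      have h4 : δ2*(k 1 + δ) ≤ 3*δ/4 :=
        (le_div_iff₀ (by linarith : (0:ℝ) < k 1 + δ)).1 h3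
      nlinarith
    linarith
  have hdesc := descend (a := a) (b := 1) (m := δ2/ε) (C := 1)
    (w := R) (w' := R')
    (div_pos hδ2 hε) zero_le_one ha1
    (fun t ht => (hd t (hsub ht)).mono hsub)
    (fun t ht _ => by
      have hdr := hode t (hsub ht)
      have h5 := hdrop t ht
      have h6 : R t * (1 - R t) ≤ 1/4 := by nlinarith [sq_nonneg (R t - 1/2)]
      have h7 : ε * R' t ≤ -δ2 := by linarith
      show R' t ≤ -(δ2/ε)
      have heq : -(δ2/ε) = (-δ2)/ε := by ring
      rw [heq, le_div_iff₀ hε]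
      nlinarith)
    (hRle1 a ⟨ha0, ha1⟩)
    (by
      have heq : (1:ℝ)/(δ2/ε) = ε/δ2 := by field_simp
      rw [heq, div_le_iff₀ hδ2]
      have : 1 - a = η1 := by rw [hadef]; ring
      rw [this]
      nlinarith)
  linarith

end Bounds

set_option maxHeartbeats 1600000 in
/-- Entry margin: under `ρ_f < α < 1`, the inflow boundary condition places `ρ(0)` a
definite distance above the repelling lower branch, uniformly for admissible currents. -/
lemma entry_margin (k : ℝ → ℝ) (α : ℝ) (hk0 : 0 < k 0) (hk1 : 0 < k 1) (hk10 : k 1 < k 0)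
    (hα0 : (1/2)*(1 - Real.sqrt (1 - k 1/k 0)) < α) :
    ∃ c0 > 0, ∃ δa > 0, ∀ Jv R0, 0 < Jv → Jv ≤ k 1/4 + δa →
      Jv = k 0 * (α * (1 - R0)) → (1 - rp Jv (k 0)) + c0 ≤ R0 := by
  set sf := Real.sqrt (1 - k 1/k 0) with hsfdef
  have harg : 0 < 1 - k 1/k 0 := by
    have : k 1/k 0 < 1 := (div_lt_one hk0).2 hk10
    linarith
  have hsf : 0 < sf := Real.sqrt_pos.2 harg
  have hsf1 : sf ≤ 1 := Real.sqrt_le_one.mpr (by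
    have := div_pos hk1 hk0
    linarith)
  have hsf2 : sf^2 = 1 - k 1/k 0 := Real.sq_sqrt harg.le
  have hα' : 0 < α := by nlinarith
  set t : ℝ := max (1 - 2*α) 0 with htdef
  have ht0 : 0 ≤ t := le_max_right _ _
  have htsf : t < sf := max_lt (by nlinarith) hsf
  set smid : ℝ := (sf + t)/2 with hsmiddef
  have hsmid0 : 0 ≤ smid := by rw [hsmiddef]; linarith
  have hsmidsf : smid < sf := by rw [hsmiddef]; linarith
  have hsq : 0 < sf^2 - smid^2 := by nlinarith
  set δa : ℝ := k 0*(sf^2 - smid^2)/8 with hδadef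
  have hδapos : 0 < δa := by
    have := mul_pos hk0 hsq
    rw [hδadef]; linarith
  refine ⟨(sf - t)/(8*α), div_pos (by linarith) (by linarith), δa, hδapos, ?_⟩
  intro Jv R0 hJv hJle hJeq
  set s := Real.sqrt (1 - 4*Jv/(k 0)) with hsdef
  have hs0 : 0 ≤ s := Real.sqrt_nonneg _
  have hargJ : smid^2 ≤ 1 - 4*Jv/(k 0) := by
    have h3 : 4*Jv/(k 0) ≤ (k 1 + 4*δa)/(k 0) := by
      apply (div_le_div_iff_of_pos_right hk0).2
      linarith
    have h4 : (k 1 + 4*δa)/(k 0) = k 1/k 0 + (sf^2 - smid^2)/2 := by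
      rw [hδadef]; field_simp; ring
    nlinarith [hsf2]
  have hs : smid ≤ s := by
    have h5 := Real.sqrt_le_sqrt hargJ
    rwa [Real.sqrt_sq hsmid0] at h5
  have hs1 : s ≤ 1 := Real.sqrt_le_one.mpr (by
    have h6 : 0 < 4*Jv/(k 0) := by positivity
    linarith)
  have hs2 : s^2 = 1 - 4*Jv/(k 0) := Real.sq_sqrt (le_trans (sq_nonneg smid) hargJ)
  have hrp : 1 - rp Jv (k 0) = (1 - s)/2 := by unfold rp; rw [← hsdef]; ring
  rw [hrp]
  have hJ2 : 4*Jv/(k 0) = 1 - s^2 := by rw [hs2]; ring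
  have hJ3 : Jv = k 0 * (1-s^2)/4 := by
    rw [div_eq_iff (ne_of_gt hk0)] at hJ2
    linear_combination hJ2 / 4
  have heq : α*(1-R0) = (1-s^2)/4 := by
    have h5 : k 0 * (α*(1-R0)) = k 0 * ((1-s^2)/4) := by rw [← hJeq, hJ3]; ring
    exact mul_left_cancel₀ (ne_of_gt hk0) h5
  have hst : (sf - t)/2 ≤ s - (1 - 2*α) := by
    have h6 : 1 - 2*α ≤ t := le_max_left _ _
    have h7 : smid - t = (sf - t)/2 := by rw [hsmiddef]; ring
    linarith
  have hX0 : 0 ≤ s - (1 - 2*α) := le_trans (by linarith) hst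
  have hprod : (sf - t)/2 ≤ (1 + s)*(s - (1 - 2*α)) := by
    nlinarith [mul_nonneg hs0 hX0]
  have hc0 : (sf - t)/(8*α)*(8*α) = sf - t := by field_simp
  nlinarith [heq, hprod, hc0, hα']

section Lower

variable {k : ℝ → ℝ} {K α β : ℝ}

lemma J_le_k1 (hε : 0 < ε) (hα : 0 < α) (hβ1 : 0 < β) (hβ2 : β < 1)
    (hkpos : ∀ x ∈ Icc (0:ℝ) 1, 0 < k x)
    (hkhi : ∀ x ∈ Icc (0:ℝ) 1, k x ≤ k 0)
    {Jv : ℝ} {R R' : ℝ → ℝ}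
    (hsol : IsClassicalSolution 1 ε α β k R R' Jv) : Jv ≤ k 1 := by
  have hk1 : 0 < k 1 := hkpos 1 ⟨zero_le_one, le_rfl⟩
  have hRle1 := R_le_one hε hα hβ1 hkpos hkhi hsol
  have hJpos := J_pos hε hα hβ1 hkpos hkhi hsol
  have hJ1 := J_eq1 hsol
  have hR1pos : 0 < R 1 := by
    by_contra hR1
    push_neg at hR1
    nlinarith [mul_nonneg hk1.le (mul_nonneg hβ1.le (neg_nonneg.2 hR1))]
  have hR1le := hRle1 1 ⟨zero_le_one, le_rfl⟩
  have h5 : β * R 1 ≤ 1 := by nlinarith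
  nlinarith [mul_le_mul_of_nonneg_left h5 hk1.le]

set_option maxHeartbeats 1000000 in
/-- The current is asymptotically at least `k 1 / 4 - δ`. -/
lemma J_lower (hK : 0 < K)
    (hkpos : ∀ x ∈ Icc (0:ℝ) 1, 0 < k x)
    (hkanti : AntitoneOn k (Icc (0:ℝ) 1))
    (hklip : ∀ x y, x ∈ Icc (0:ℝ) 1 → y ∈ Icc (0:ℝ) 1 → x ≤ y → k x - k y ≤ K*(y-x))
    (hk10 : k 1 < k 0)
    (hα0 : (1/2)*(1 - Real.sqrt (1 - k 1/k 0)) < α) (hα1 : α < 1)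
    (hβ1 : 1/2 < β) (hβ2 : β < 1) (δ : ℝ) (hδ : 0 < δ) :
    ∃ ε0 > 0, ∀ ε Jv (R R' : ℝ → ℝ), 0 < ε → ε ≤ ε0 →
      IsClassicalSolution 1 ε α β k R R' Jv → k 1/4 - δ ≤ Jv := by
  have hk0 : 0 < k 0 := hkpos 0 ⟨le_rfl, zero_le_one⟩
  have hk1 : 0 < k 1 := hkpos 1 ⟨zero_le_one, le_rfl⟩
  have hkhi : ∀ x ∈ Icc (0:ℝ) 1, k x ≤ k 0 :=
    fun x hx => hkanti ⟨le_rfl, zero_le_one⟩ hx hx.1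
  have hα' : 0 < α := by
    have h1 : Real.sqrt (1 - k 1/k 0) ≤ 1 := Real.sqrt_le_one.mpr (by
      have := div_pos hk1 hk0
      linarith)
    nlinarith
  have hβ' : 0 < β := by linarith
  obtain ⟨c0, hc0, δa, hδa, hent⟩ := entry_margin k α hk0 hk1 hk10 hα0
  set δ' : ℝ := min δ (k 1/8) with hδ'def
  have hδ' : 0 < δ' := lt_min hδ (by linarith)
  have hδ'δ : δ' ≤ δ := min_le_left _ _
  set g : ℝ := 4*δ'/(k 1) with hgdef
  have hg : 0 < g := by positivity
  set e : ℝ := min (min c0 1) (min ((2*β-1)/8) (Real.sqrt g/2)) with hedef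
  have he : 0 < e := lt_min (lt_min hc0 one_pos)
    (lt_min (by linarith) (half_pos (Real.sqrt_pos.2 hg)))
  have he1 : e ≤ 1 := le_trans (min_le_left _ _) (min_le_right _ _)
  have he2 : 2*e ≤ Real.sqrt g := by
    have h6 : e ≤ Real.sqrt g / 2 := by
      refine le_trans (min_le_right _ _) ?_
      exact min_le_right _ _
    linarith
  obtain ⟨ε0, hε0pos, htrack⟩ := track hK hkpos hkanti hklip 1 g e
    one_pos le_rfl hg he he1 he2
  refine ⟨ε0, hε0pos, ?_⟩
  intro ε Jv R R' hε hεle hsol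
  by_contra hcon
  push_neg at hcon
  have hode := ode_of_sol hkpos hsol
  have hd := hsol.1
  have hRle1 := R_le_one hε hα' hβ' hkpos hkhi hsol
  have hJpos := J_pos hε hα' hβ' hkpos hkhi hsol
  have hJlek1 := J_le_k1 hε hα' hβ' hβ2 hkpos hkhi hsol
  have hJ0 := J_eq0 hsol
  have hJ1 := J_eq1 hsol
  have hgap : ∀ y ∈ Icc (0:ℝ) 1, 4*Jv/(k y) ≤ 1 - g := by
    intro y hy
    have hky : 0 < k y := hkpos y hy
    have hky1 : k 1 ≤ k y := hkanti hy ⟨zero_le_one, le_rfl⟩ hy.2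
    have h1 : 4*Jv/(k y) ≤ 4*Jv/(k 1) :=
      div_le_div_of_nonneg_left (by linarith) hk1 hky1
    have h2 : 4*Jv/(k 1) ≤ (k 1 - 4*δ')/(k 1) := by
      apply (div_le_div_iff_of_pos_right hk1).2
      linarith [hcon, hδ'δ]
    have h3 : (k 1 - 4*δ')/(k 1) = 1 - g := by
      rw [hgdef]; field_simp
    linarith
  have hentry : (1 - rp Jv (k 0)) + e ≤ R 0 := by
    have := hent Jv (R 0) hJpos (by linarith) hJ0
    have he3 : e ≤ c0 := le_trans (min_le_left _ _) (min_le_left _ _)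
    linarith
  obtain ⟨hlow, _⟩ := htrack ε Jv R R' hε hεle hd hode hRle1 hJpos hJlek1 hgap hentry
  have hrphalf := rp_half Jv (k 1)
  have hR1 : 1/2 - e ≤ R 1 := by linarith
  have hee : e ≤ (2*β-1)/8 := le_trans (min_le_right _ _) (min_le_left _ _)
  have h1 : (2*β+1)/8 ≤ β*(1/2 - e) := by nlinarith
  have h2 : k 1*((2*β+1)/8) ≤ k 1*(β*(1/2-e)) := by nlinarith
  have h3 : k 1*(β*(1/2-e)) ≤ Jv := by
    rw [hJ1]
    have h4 : β*(1/2-e) ≤ β*R 1 := by nlinarith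
    nlinarith
  nlinarith

end Lower

set_option maxHeartbeats 1600000 in
/-- Vanishing-viscosity pointwise limit of the density in region G₃ ∪ G₄:
in the interior the profile follows the attracting branch of the critical manifold. -/
theorem vanishing_viscosity_region34_interior
    (α β : ℝ) (k k' : ℝ → ℝ) (ρ ρ' : ℝ → ℝ → ℝ) (J : ℝ → ℝ)
    (hk : ∀ x ∈ Icc (0:ℝ) 1, HasDerivWithinAt k (k' x) (Icc 0 1) x)
    (hk'c : ContinuousOn k' (Icc 0 1))
    (hkpos : ∀ x ∈ Icc (0:ℝ) 1, 0 < k x)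
    (hk'neg : ∀ x ∈ Icc (0:ℝ) 1, k' x < 0)
    (hα0 : rhoF k < α) (hα1 : α < 1) (hαne : α ≠ 1 - rhoF k)
    (hβ1 : 1/2 < β) (hβ2 : β < 1)
    (hsol : ∀ ε > 0, IsClassicalSolution 1 ε α β k (ρ ε) (ρ' ε) (J ε)) :
    ∀ x ∈ Ioo (0:ℝ) 1,
      Tendsto (fun ε => ρ ε x) (nhdsWithin 0 (Ioi 0))
        (nhds ((1/2) * (1 + Real.sqrt (1 - k 1 / k x)))) := by
  intro x0 hx0
  obtain ⟨hkSA, K, hK, hklip⟩ := k_facts k k' hk hk'c hk'neg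
  have hkanti : AntitoneOn k (Icc (0:ℝ) 1) := hkSA.antitoneOn
  have hk0 : 0 < k 0 := hkpos 0 ⟨le_rfl, zero_le_one⟩
  have hk1 : 0 < k 1 := hkpos 1 ⟨zero_le_one, le_rfl⟩
  have hk10 : k 1 < k 0 := hkSA ⟨le_rfl, zero_le_one⟩ ⟨zero_le_one, le_rfl⟩ zero_lt_one
  have hx0m : x0 ∈ Icc (0:ℝ) 1 := ⟨hx0.1.le, hx0.2.le⟩
  have hkx0 : 0 < k x0 := hkpos x0 hx0m
  have hk1x0 : k 1 < k x0 := hkSA hx0m ⟨zero_le_one, le_rfl⟩ hx0.2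
  have hkhi : ∀ x ∈ Icc (0:ℝ) 1, k x ≤ k 0 :=
    fun x hx => hkanti ⟨le_rfl, zero_le_one⟩ hx hx.1
  have hα0' : (1/2)*(1 - Real.sqrt (1 - k 1/k 0)) < α := by
    unfold rhoF at hα0; exact hα0
  have hα' : 0 < α := by
    have h1 : Real.sqrt (1 - k 1/k 0) ≤ 1 := Real.sqrt_le_one.mpr (by
      have := div_pos hk1 hk0
      linarith)
    nlinarith
  have hβ' : 0 < β := by linarith
  obtain ⟨c0, hc0, δa, hδa, hent⟩ := entry_margin k α hk0 hk1 hk10 hα0'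
  -- the target is the upper branch at the critical current k 1 / 4
  have hTeq : (1/2) * (1 + Real.sqrt (1 - k 1 / k x0)) = rp (k 1/4) (k x0) := by
    unfold rp
    have h : 1 - 4*(k 1/4)/(k x0) = 1 - k 1/(k x0) := by ring
    rw [h]; ring
  rw [Metric.tendsto_nhdsWithin_nhds]
  intro η hη
  set g0 : ℝ := (1 - k 1/k x0)/2 with hg0def
  have hg0 : 0 < g0 := by
    have : k 1/k x0 < 1 := (div_lt_one hkx0).2 hk1x0
    rw [hg0def]; linarith
  have hsg0 : 0 < Real.sqrt g0 := Real.sqrt_pos.2 hg0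
  set e : ℝ := min (min c0 1) (min (η/4) (Real.sqrt g0/2)) with hedef
  have he : 0 < e := lt_min (lt_min hc0 one_pos)
    (lt_min (by linarith) (half_pos hsg0))
  have he1 : e ≤ 1 := le_trans (min_le_left _ _) (min_le_right _ _)
  have heη : e ≤ η/4 := le_trans (min_le_right _ _) (min_le_left _ _)
  have hec0 : e ≤ c0 := le_trans (min_le_left _ _) (min_le_left _ _)
  have he2 : 2*e ≤ Real.sqrt g0 := by
    have h6 : e ≤ Real.sqrt g0 / 2 := by
      refine le_trans (min_le_right _ _) ?_
      exact min_le_right _ _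
    linarith
  set δ1 : ℝ := min (min 1 δa) (min (k x0*g0/4) (k x0*Real.sqrt g0*η/4)) with hδ1def
  have hδ1 : 0 < δ1 := lt_min (lt_min one_pos hδa)
    (lt_min (by positivity) (by positivity))
  have hδ1le1 : δ1 ≤ 1 := le_trans (min_le_left _ _) (min_le_left _ _)
  have hδ1δa : δ1 ≤ δa := le_trans (min_le_left _ _) (min_le_right _ _)
  have hδ1g : δ1 ≤ k x0*g0/4 := le_trans (min_le_right _ _) (min_le_left _ _)
  have hδ1η : δ1 ≤ k x0*Real.sqrt g0*η/4 := le_trans (min_le_right _ _) (min_le_right _ _)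
  obtain ⟨ε1, hε1, hupper⟩ := J_upper hK hkpos hkanti hklip hα' hβ' δ1 hδ1 hδ1le1
  obtain ⟨ε2, hε2, hlower⟩ := J_lower hK hkpos hkanti hklip hk10 hα0' hα1 hβ1 hβ2 δ1 hδ1
  obtain ⟨ε3, hε3, htrack⟩ := track hK hkpos hkanti hklip x0 g0 e
    hx0.1 hx0.2.le hg0 he he1 he2
  refine ⟨min ε1 (min ε2 ε3), lt_min hε1 (lt_min hε2 hε3), ?_⟩
  intro ε hεmem hdist
  have hε : 0 < ε := hεmem
  have hεlt : ε < min ε1 (min ε2 ε3) := by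
    rw [Real.dist_eq, sub_zero, abs_of_pos hε] at hdist
    exact hdist
  have hεle1 : ε ≤ ε1 := le_trans hεlt.le (min_le_left _ _)
  have hεle2 : ε ≤ ε2 := le_trans hεlt.le (le_trans (min_le_right _ _) (min_le_left _ _))
  have hεle3 : ε ≤ ε3 := le_trans hεlt.le (le_trans (min_le_right _ _) (min_le_right _ _))
  have hsolε := hsol ε hε
  set Jv : ℝ := J ε
  set R : ℝ → ℝ := ρ ε
  set R' : ℝ → ℝ := ρ' ε
  have hJup : Jv ≤ k 1/4 + δ1 := hupper ε Jv R R' hε hεle1 hsolε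
  have hJlo : k 1/4 - δ1 ≤ Jv := hlower ε Jv R R' hε hεle2 hsolε
  have hode := ode_of_sol hkpos hsolε
  have hd := hsolε.1
  have hRle1 := R_le_one hε hα' hβ' hkpos hkhi hsolε
  have hJpos := J_pos hε hα' hβ' hkpos hkhi hsolε
  have hJlek1 := J_le_k1 hε hα' hβ' hβ2 hkpos hkhi hsolε
  have hJ0 := J_eq0 hsolε
  have hgap : ∀ y ∈ Icc (0:ℝ) x0, 4*Jv/(k y) ≤ 1 - g0 := by
    intro y hy
    have hym : y ∈ Icc (0:ℝ) 1 := ⟨hy.1, le_trans hy.2 hx0.2.le⟩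
    have hky : 0 < k y := hkpos y hym
    have hkyx0 : k x0 ≤ k y := hkanti hym hx0m hy.2
    have h1 : 4*Jv/(k y) ≤ 4*Jv/(k x0) :=
      div_le_div_of_nonneg_left (by linarith) hkx0 hkyx0
    have h2 : 4*Jv/(k x0) ≤ (k 1 + 4*δ1)/(k x0) := by
      apply (div_le_div_iff_of_pos_right hkx0).2
      linarith
    have h3 : (k 1 + 4*δ1)/(k x0) ≤ k 1/(k x0) + g0 := by
      have h4 : (k 1 + 4*δ1)/(k x0) = k 1/(k x0) + 4*δ1/(k x0) := by ring
      have h5 : 4*δ1/(k x0) ≤ g0 := by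
        rw [div_le_iff₀ hkx0]
        nlinarith
      linarith
    have h6 : k 1/(k x0) = 1 - 2*g0 := by rw [hg0def]; ring
    linarith
  have hentry : (1 - rp Jv (k 0)) + e ≤ R 0 := by
    have := hent Jv (R 0) hJpos (by linarith) hJ0
    linarith
  obtain ⟨hlow, hup⟩ := htrack ε Jv R R' hε hεle3 hd hode hRle1 hJpos hJlek1 hgap hentry
  -- closeness of the branch at current Jv to the branch at the critical current
  have hclose : |rp Jv (k x0) - rp (k 1/4) (k x0)| ≤ η/4 := by
    have hA : g0 ≤ 1 - 4*Jv/(k x0) := by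
      have := hgap x0 ⟨hx0.1.le, le_rfl⟩
      linarith
    have hB : g0 ≤ 1 - 4*(k 1/4)/(k x0) := by
      have h7 : 4*(k 1/4)/(k x0) = k 1/(k x0) := by ring
      have h6 : k 1/(k x0) = 1 - 2*g0 := by rw [hg0def]; ring
      rw [h7, h6]; linarith
    have h8 : rp Jv (k x0) - rp (k 1/4) (k x0) =
        (Real.sqrt (1 - 4*Jv/(k x0)) - Real.sqrt (1 - 4*(k 1/4)/(k x0)))/2 := by
      unfold rp; ring
    have h9 := sqrt_diff_abs hg0 hA hB
    have h10 : |(1 - 4*Jv/(k x0)) - (1 - 4*(k 1/4)/(k x0))| ≤ 4*δ1/(k x0) := by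
      have h11 : (1 - 4*Jv/(k x0)) - (1 - 4*(k 1/4)/(k x0)) = (k 1 - 4*Jv)/(k x0) := by
        field_simp
        ring
      rw [h11, abs_div, abs_of_pos hkx0]
      apply div_le_div_of_nonneg_right _ hkx0.le
      rw [abs_le]
      constructor <;> linarith
    have h12 : 4*δ1/(k x0)/(2*Real.sqrt g0) ≤ η/2 := by
      rw [div_le_iff₀ (by positivity), div_le_iff₀ hkx0]
      nlinarith
    rw [h8, abs_div]
    have h13 : |Real.sqrt (1 - 4*Jv/(k x0)) - Real.sqrt (1 - 4*(k 1/4)/(k x0))| ≤ η/2 := by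
      calc |Real.sqrt (1 - 4*Jv/(k x0)) - Real.sqrt (1 - 4*(k 1/4)/(k x0))|
          ≤ |(1 - 4*Jv/(k x0)) - (1 - 4*(k 1/4)/(k x0))|/(2*Real.sqrt g0) := h9
        _ ≤ 4*δ1/(k x0)/(2*Real.sqrt g0) := by
            apply div_le_div_of_nonneg_right h10 (by positivity)
        _ ≤ η/2 := h12
    rw [abs_of_pos (by norm_num : (0:ℝ) < 2)]
    linarith
  rw [Real.dist_eq, hTeq]
  have habs : |R x0 - rp Jv (k x0)| ≤ e := abs_le.2 ⟨by linarith, by linarith⟩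
  calc |R x0 - rp (k 1/4) (k x0)|
      ≤ |R x0 - rp Jv (k x0)| + |rp Jv (k x0) - rp (k 1/4) (k x0)| := abs_sub_le _ _ _
    _ ≤ e + η/4 := add_le_add habs hclose
    _ < η := by linarith
end
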